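/- arXiv:math/0511401 — 5 statements merged into one kernel-verified Lean document; each statement's English description precedes it below -/
import Mathlib

section
/- Let c satisfy [H1] and [H2], let k ∈ ℝ, k ≠ 0, and let u₁, u₂ be the Jost solutions from +∞ and from −∞ at k. Suppose T, R₁, R₂ ∈ ℂ with T ≠ 0 satisfy, for all x ∈ ℝ, u₂(x) = (R₁/T) u₁(x) + (1/T) conj(u₁(x)) and u₁(x) = (R₂/T) u₂(x) + (1/T) conj(u₂(x)). Then |T|² + |R₂|² = 1 and |T|² + |R₁|² = 1; in particular |T| ≤ 1, |R₁| ≤ 1 and |R₂| ≤ 1. -/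
open MeasureTheory Filter Topology Real

noncomputable section

/-- Hypothesis [H1]: `c` is essentially bounded below away from `0` and bounded above. -/
def HypH1 (c : ℝ → ℝ) : Prop :=
  ∃ c₀ > (0 : ℝ), ∃ cM > (0 : ℝ), ∀ᵐ x : ℝ, c₀ < c x ∧ c x ≤ cM

/-- Hypothesis [H1] with explicit constants `c₀`, `cM`. -/
def HypH1c (c : ℝ → ℝ) (c₀ cM : ℝ) : Prop :=
  0 < c₀ ∧ 0 < cM ∧ ∀ᵐ x : ℝ, c₀ < c x ∧ c x ≤ cM

/-- Hypothesis [H2]: `|c(x) - 1| ≤ C ⟨x⟩^{-1-δ}` almost everywhere. -/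
def HypH2 (c : ℝ → ℝ) : Prop :=
  ∃ C > (0 : ℝ), ∃ δ > (0 : ℝ),
    ∀ᵐ x : ℝ, |c x - 1| ≤ C * (1 + x ^ 2) ^ (-(1 + δ) / 2)

/-- `u` is continuously differentiable, its derivative is locally absolutely continuous,
and `u'' + (k²/c²) u = 0` holds almost everywhere (equivalently, the integral formulation
of the second-order equation holds). -/
def SolvesHelmholtz (c : ℝ → ℝ) (k : ℂ) (u : ℝ → ℂ) : Prop :=
  ContDiff ℝ 1 u ∧
  ∀ a b : ℝ, deriv u b = deriv u a + ∫ x in a..b, -(k ^ 2 / ((c x : ℂ) ^ 2)) * u x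

/-- The Jost solution from `+∞` at `k` : `e^{-ikx} u(x) → 1` as `x → +∞`. -/
def IsJostPlus (c : ℝ → ℝ) (k : ℂ) (u : ℝ → ℂ) : Prop :=
  SolvesHelmholtz c k u ∧
  Tendsto (fun x : ℝ => Complex.exp (-(Complex.I * k * (x : ℂ))) * u x) atTop (𝓝 1)

/-- The Jost solution from `-∞` at `k` : `e^{ikx} u(x) → 1` as `x → -∞`. -/
def IsJostMinus (c : ℝ → ℝ) (k : ℂ) (u : ℝ → ℂ) : Prop :=
  SolvesHelmholtz c k u ∧
  Tendsto (fun x : ℝ => Complex.exp (Complex.I * k * (x : ℂ)) * u x) atBot (𝓝 1)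

/-- `q = 1 - 1/c²`. -/
def qfun (c : ℝ → ℝ) (x : ℝ) : ℝ := 1 - 1 / (c x) ^ 2

/-- `Q = 1 - 1/c`. -/
def Qfun (c : ℝ → ℝ) (x : ℝ) : ℝ := 1 - 1 / c x

lemma seq_lim (k : ℝ) (u : ℝ → ℂ)
    (hu : Tendsto (fun x : ℝ => Complex.exp (-(Complex.I * (k:ℂ) * (x:ℂ))) * u x) atTop (𝓝 1))
    (a b : ℂ) (hid : ∀ x : ℝ, a * u x + b * (starRingEnd ℂ) (u x) = 0)
    (x : ℕ → ℝ) (hx : Tendsto x atTop atTop) (ω : ℂ)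
    (hω : ∀ n, Complex.exp (-(2 * Complex.I * (k:ℂ) * (x n : ℂ))) = ω) :
    a + b * ω = 0 := by
  have claim : ∀ t : ℝ,
      a * (Complex.exp (-(Complex.I * (k:ℂ) * (t:ℂ))) * u t)
        + b * Complex.exp (-(2 * Complex.I * (k:ℂ) * (t:ℂ)))
          * (starRingEnd ℂ) (Complex.exp (-(Complex.I * (k:ℂ) * (t:ℂ))) * u t) = 0 := by
    intro t
    have hconj : (starRingEnd ℂ) (Complex.exp (-(Complex.I * (k:ℂ) * (t:ℂ))) * u t)
        = Complex.exp (Complex.I * (k:ℂ) * (t:ℂ)) * (starRingEnd ℂ) (u t) := by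
      simp [← Complex.exp_conj, map_neg, map_mul, Complex.conj_I, Complex.conj_ofReal]
    rw [hconj]
    have hexp : Complex.exp (-(2 * Complex.I * (k:ℂ) * (t:ℂ)))
          * Complex.exp (Complex.I * (k:ℂ) * (t:ℂ))
        = Complex.exp (-(Complex.I * (k:ℂ) * (t:ℂ))) := by
      rw [← Complex.exp_add]; ring_nf
    linear_combination Complex.exp (-(Complex.I * (k:ℂ) * (t:ℂ))) * hid t
      + b * (starRingEnd ℂ) (u t) * hexp
  have hfc : Tendsto (fun n => Complex.exp (-(Complex.I * (k:ℂ) * (x n : ℂ))) * u (x n))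
      atTop (𝓝 1) := hu.comp hx
  have hcc : Tendsto
      (fun n => (starRingEnd ℂ) (Complex.exp (-(Complex.I * (k:ℂ) * (x n : ℂ))) * u (x n)))
      atTop (𝓝 1) := by
    have h' : Tendsto (fun n =>
        (starRingEnd ℂ) (Complex.exp (-(Complex.I * (k:ℂ) * (x n : ℂ))) * u (x n)))
        atTop (𝓝 ((starRingEnd ℂ) 1)) := (Complex.continuous_conj.tendsto (1:ℂ)).comp hfc
    simpa using h'
  have hcomb : Tendsto (fun n =>
      a * (Complex.exp (-(Complex.I * (k:ℂ) * (x n : ℂ))) * u (x n))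
        + b * ω * (starRingEnd ℂ) (Complex.exp (-(Complex.I * (k:ℂ) * (x n : ℂ))) * u (x n)))
      atTop (𝓝 (a * 1 + b * ω * 1)) := (hfc.const_mul a).add (hcc.const_mul (b * ω))
  have heq : (fun n =>
      a * (Complex.exp (-(Complex.I * (k:ℂ) * (x n : ℂ))) * u (x n))
        + b * ω * (starRingEnd ℂ) (Complex.exp (-(Complex.I * (k:ℂ) * (x n : ℂ))) * u (x n)))
      = fun _ => (0:ℂ) := by
    funext n
    rw [← hω n]
    exact claim (x n)
  have h0 : a * 1 + b * ω * 1 = 0 := by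
    have hz : Tendsto (fun _ : ℕ => (0:ℂ)) atTop (𝓝 (a * 1 + b * ω * 1)) := heq ▸ hcomb
    exact tendsto_nhds_unique hz tendsto_const_nhds
  simpa using h0

lemma indep_pos (k : ℝ) (hk : 0 < k) (u : ℝ → ℂ)
    (hu : Tendsto (fun x : ℝ => Complex.exp (-(Complex.I * (k:ℂ) * (x:ℂ))) * u x) atTop (𝓝 1))
    (a b : ℂ) (hid : ∀ x : ℝ, a * u x + b * (starRingEnd ℂ) (u x) = 0) :
    a = 0 ∧ b = 0 := by
  have hx1 : Tendsto (fun n : ℕ => (n:ℝ) * (π / k)) atTop atTop :=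
    tendsto_natCast_atTop_atTop.atTop_mul_const (div_pos Real.pi_pos hk)
  have hx2 : Tendsto (fun n : ℕ => (n:ℝ) * (π / k) + π / (2 * k)) atTop atTop := by
    have hc : (0:ℝ) ≤ π / (2 * k) := by positivity
    exact tendsto_atTop_mono (fun n => le_add_of_nonneg_right hc) hx1
  have hω1 : ∀ n : ℕ,
      Complex.exp (-(2 * Complex.I * (k:ℂ) * (((n:ℝ) * (π / k) : ℝ):ℂ))) = 1 := by
    intro n
    have he : (-(2 * Complex.I * (k:ℂ) * (((n:ℝ) * (π / k) : ℝ):ℂ)))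
        = ((-(n:ℤ)):ℂ) * (2 * (π:ℂ) * Complex.I) := by
      have hkc : (k:ℂ) ≠ 0 := by exact_mod_cast hk.ne'
      push_cast
      field_simp
    rw [he]
    have h := Complex.exp_int_mul_two_pi_mul_I (-(n:ℤ))
    push_cast at h ⊢
    exact h
  have hω2 : ∀ n : ℕ,
      Complex.exp (-(2 * Complex.I * (k:ℂ) * (((n:ℝ) * (π / k) + π / (2 * k) : ℝ):ℂ))) = -1 := by
    intro n
    have hkc : (k:ℂ) ≠ 0 := by exact_mod_cast hk.ne'
    have he : (-(2 * Complex.I * (k:ℂ) * (((n:ℝ) * (π / k) + π / (2 * k) : ℝ):ℂ)))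
        = ((-(n:ℤ)):ℂ) * (2 * (π:ℂ) * Complex.I) + -((π:ℂ) * Complex.I) := by
      push_cast
      field_simp
      ring
    rw [he, Complex.exp_add]
    have h := Complex.exp_int_mul_two_pi_mul_I (-(n:ℤ))
    push_cast at h ⊢
    rw [h, one_mul, Complex.exp_neg, Complex.exp_pi_mul_I]
    norm_num
  have h1 : a + b * 1 = 0 := seq_lim k u hu a b hid _ hx1 1 hω1
  have h2 : a + b * (-1) = 0 := seq_lim k u hu a b hid _ hx2 (-1) hω2
  constructor
  · linear_combination (h1 + h2) / 2
  · linear_combination (h1 - h2) / 2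

lemma indep (k : ℝ) (hk : k ≠ 0) (u : ℝ → ℂ)
    (hu : Tendsto (fun x : ℝ => Complex.exp (-(Complex.I * (k:ℂ) * (x:ℂ))) * u x) atTop (𝓝 1))
    (a b : ℂ) (hid : ∀ x : ℝ, a * u x + b * (starRingEnd ℂ) (u x) = 0) :
    a = 0 ∧ b = 0 := by
  rcases hk.lt_or_gt with hneg | hpos
  · -- apply indep_pos to -k and conj ∘ u
    have hk' : 0 < -k := by linarith
    have hv : Tendsto (fun x : ℝ =>
        Complex.exp (-(Complex.I * ((-k:ℝ):ℂ) * (x:ℂ))) * (starRingEnd ℂ) (u x)) atTop (𝓝 1) := by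
      have h' : Tendsto (fun x : ℝ =>
          (starRingEnd ℂ) (Complex.exp (-(Complex.I * (k:ℂ) * (x:ℂ))) * u x)) atTop
          (𝓝 ((starRingEnd ℂ) 1)) := (Complex.continuous_conj.tendsto (1:ℂ)).comp hu
      have heq : (fun x : ℝ => (starRingEnd ℂ) (Complex.exp (-(Complex.I * (k:ℂ) * (x:ℂ))) * u x))
          = fun x : ℝ => Complex.exp (-(Complex.I * ((-k:ℝ):ℂ) * (x:ℂ))) * (starRingEnd ℂ) (u x) := by
        funext t
        rw [map_mul, ← Complex.exp_conj]
        congr 2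
        simp only [map_neg, map_mul, Complex.conj_I, Complex.conj_ofReal]
        push_cast
        ring
      rw [heq] at h'
      simpa using h'
    have hid' : ∀ x : ℝ, (starRingEnd ℂ) a * (starRingEnd ℂ) (u x)
        + (starRingEnd ℂ) b * (starRingEnd ℂ) ((starRingEnd ℂ) (u x)) = 0 := by
      intro x
      have h := congrArg (starRingEnd ℂ) (hid x)
      simp only [map_add, map_mul, map_zero, Complex.conj_conj] at h ⊢
      exact h
    have h := indep_pos (-k) hk' (fun x => (starRingEnd ℂ) (u x)) hv
      ((starRingEnd ℂ) a) ((starRingEnd ℂ) b) hid'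
    constructor
    · simpa using congrArg (starRingEnd ℂ) h.1
    · simpa using congrArg (starRingEnd ℂ) h.2
  · exact indep_pos k hpos u hu a b hid


/-- Unitarity of the scattering matrix: `|T|² + |R₂|² = 1`, `|T|² + |R₁|² = 1`. -/
theorem scattering_unitarity (c : ℝ → ℝ) (hmeas : Measurable c)
    (h1 : HypH1 c) (h2 : HypH2 c) (k : ℝ) (hk : k ≠ 0)
    (u₁ u₂ : ℝ → ℂ) (hu₁ : IsJostPlus c (k : ℂ) u₁) (hu₂ : IsJostMinus c (k : ℂ) u₂)
    (T R₁ R₂ : ℂ) (hT : T ≠ 0)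
    (hrel₁ : ∀ x : ℝ, u₂ x = (R₁ / T) * u₁ x + (1 / T) * (starRingEnd ℂ) (u₁ x))
    (hrel₂ : ∀ x : ℝ, u₁ x = (R₂ / T) * u₂ x + (1 / T) * (starRingEnd ℂ) (u₂ x)) :
    ‖T‖ ^ 2 + ‖R₂‖ ^ 2 = 1 ∧ ‖T‖ ^ 2 + ‖R₁‖ ^ 2 = 1 ∧
      ‖T‖ ≤ 1 ∧ ‖R₁‖ ≤ 1 ∧ ‖R₂‖ ≤ 1 := by
  have htend := hu₁.2
  have htc : (starRingEnd ℂ) T ≠ 0 := by simpa using hT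
  have hid : ∀ x : ℝ,
      (R₂ * R₁ * (starRingEnd ℂ) T + T - T ^ 2 * (starRingEnd ℂ) T) * u₁ x
        + (R₂ * (starRingEnd ℂ) T + (starRingEnd ℂ) R₁ * T) * (starRingEnd ℂ) (u₁ x) = 0 := by
    intro x
    have h1 : T * u₂ x = R₁ * u₁ x + (starRingEnd ℂ) (u₁ x) := by
      rw [hrel₁ x]; field_simp
    have h2 : T * u₁ x = R₂ * u₂ x + (starRingEnd ℂ) (u₂ x) := by
      rw [hrel₂ x]; field_simp
    have h3 : (starRingEnd ℂ) T * (starRingEnd ℂ) (u₂ x)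
        = (starRingEnd ℂ) R₁ * (starRingEnd ℂ) (u₁ x) + u₁ x := by
      have := congrArg (starRingEnd ℂ) h1
      simpa [map_add, map_mul, Complex.conj_conj] using this
    linear_combination (-((starRingEnd ℂ) T * R₂)) * h1 + (-((starRingEnd ℂ) T * T)) * h2
      + (-T) * h3
  obtain ⟨hA, hB⟩ := indep k hk u₁ htend _ _ hid
  have hB3 : (starRingEnd ℂ) R₂ * T + R₁ * (starRingEnd ℂ) T = 0 := by
    have := congrArg (starRingEnd ℂ) hB
    simpa [map_add, map_mul, Complex.conj_conj] using this
  have key1 : T * (starRingEnd ℂ) T + R₁ * (starRingEnd ℂ) R₁ = 1 := by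
    apply mul_left_cancel₀ hT
    linear_combination (-1 : ℂ) * hA + R₁ * hB
  have keyR : R₂ * (starRingEnd ℂ) R₂ = R₁ * (starRingEnd ℂ) R₁ := by
    apply mul_left_cancel₀ htc
    linear_combination (starRingEnd ℂ) R₂ * hB - (starRingEnd ℂ) R₁ * hB3
  have key2 : T * (starRingEnd ℂ) T + R₂ * (starRingEnd ℂ) R₂ = 1 := by
    rw [keyR]; exact key1
  have hnorm : ∀ z : ℂ, ‖z‖ ^ 2 = Complex.normSq z := fun z => by
    rw [Complex.sq_norm]
  have hr1 : ‖T‖ ^ 2 + ‖R₁‖ ^ 2 = 1 := by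
    rw [hnorm, hnorm]
    have : ((Complex.normSq T + Complex.normSq R₁ : ℝ) : ℂ) = ((1 : ℝ) : ℂ) := by
      push_cast
      rw [← Complex.mul_conj, ← Complex.mul_conj]
      simpa using key1
    exact_mod_cast this
  have hr2 : ‖T‖ ^ 2 + ‖R₂‖ ^ 2 = 1 := by
    rw [hnorm, hnorm]
    have : ((Complex.normSq T + Complex.normSq R₂ : ℝ) : ℂ) = ((1 : ℝ) : ℂ) := by
      push_cast
      rw [← Complex.mul_conj, ← Complex.mul_conj]
      simpa using key2
    exact_mod_cast this
  refine ⟨hr2, hr1, ?_, ?_, ?_⟩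
  · nlinarith [norm_nonneg T, norm_nonneg R₁, sq_nonneg (‖R₁‖)]
  · nlinarith [norm_nonneg T, norm_nonneg R₁, sq_nonneg (‖T‖)]
  · nlinarith [norm_nonneg T, norm_nonneg R₂, sq_nonneg (‖T‖)]
end
end

section
/- Let c satisfy [H1] and [H2], let k ∈ ℂ with Im k ≥ 0, and let u₁ be the Jost solution from +∞ at k. Then u₁(x) ≠ 0 for every x ∈ ℝ. -/
open MeasureTheory Filter Topology Set intervalIntegral

noncomputable section

private lemma interval_integral_star (f : ℝ → ℂ) (a b : ℝ) :
    ∫ x in a..b, (starRingEnd ℂ) (f x) = (starRingEnd ℂ) (∫ x in a..b, f x) := by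
  simp [intervalIntegral, integral_conj]

private lemma intervalIntegrable_star {f : ℝ → ℂ} {a b : ℝ}
    (hf : IntervalIntegrable f volume a b) :
    IntervalIntegrable (fun x => (starRingEnd ℂ) (f x)) volume a b := by
  refine hf.norm.mono_fun' ?_ ?_
  · exact continuous_star.comp_aestronglyMeasurable hf.def'.aestronglyMeasurable
  · filter_upwards with x
    simp

/-- Interval integrability of a product of a continuous function and an
interval integrable function. -/
private lemma intervalIntegrable_cont_mul {φ f : ℝ → ℂ} {a b : ℝ} (hφ : Continuous φ)
    (hf : IntervalIntegrable f volume a b) :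
    IntervalIntegrable (fun x => φ x * f x) volume a b :=
  hf.continuousOn_mul hφ.continuousOn

/-- Integration by parts where `g` is only an indefinite integral of an integrable `f`. -/
private lemma my_ibp {φ dφ g f : ℝ → ℂ} (hφc : Continuous φ) (hdφc : Continuous dφ)
    (hφd : ∀ x, HasDerivAt φ (dφ x) x)
    (hf : ∀ x y : ℝ, IntervalIntegrable f volume x y)
    (hgi : ∀ x y : ℝ, g y = g x + ∫ s in x..y, f s)
    {a b : ℝ} (hab : a ≤ b) :
    φ b * g b - φ a * g a = ∫ x in a..b, (dφ x * g x + φ x * f x) := by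
  have hgc : Continuous g := by
    have h0 : Continuous fun y => g a + ∫ s in a..y, f s :=
      continuous_const.add (intervalIntegral.continuous_primitive hf a)
    exact h0.congr fun y => (hgi a y).symm
  set μ := volume.restrict (Ioc a b) with hμ
  have hfI : IntegrableOn f (Ioc a b) volume :=
    (intervalIntegrable_iff_integrableOn_Ioc_of_le hab).mp (hf a b)
  have hdφI : IntegrableOn dφ (Ioc a b) volume :=
    hdφc.integrableOn_Ioc
  -- the Fubini kernel
  set F : ℝ × ℝ → ℂ := fun p => Set.indicator {p : ℝ × ℝ | p.2 ≤ p.1}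
      (fun p => dφ p.1 * f p.2) p with hF
  have hFint : Integrable F (μ.prod μ) := by
    refine Integrable.indicator ?_ (measurableSet_le measurable_snd measurable_fst)
    exact hdφI.mul_prod hfI
  have hswap : (∫ s, ∫ t, F (s, t) ∂μ ∂μ) = ∫ t, ∫ s, F (s, t) ∂μ ∂μ :=
    integral_integral_swap hFint
  -- left side of swap
  have hL : (∫ s, ∫ t, F (s, t) ∂μ ∂μ) = ∫ s in Ioc a b, dφ s * (g s - g a) := by
    refine setIntegral_congr_fun measurableSet_Ioc fun s hs => ?_
    have h1 : (fun t => F (s, t)) = Set.indicator (Iic s) (fun t => dφ s * f t) := by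
      funext t
      simp only [hF, Set.indicator_apply, Set.mem_setOf_eq, Set.mem_Iic]
    rw [h1, MeasureTheory.integral_indicator measurableSet_Iic, hμ,
      Measure.restrict_restrict measurableSet_Iic]
    have h2 : Iic s ∩ Ioc a b = Ioc a s := by
      rw [Set.inter_comm, Set.Ioc_inter_Iic, min_eq_right hs.2]
    rw [h2, MeasureTheory.integral_const_mul, ← intervalIntegral.integral_of_le hs.1.le]
    have := hgi a s
    rw [show (∫ x in a..s, f x) = g s - g a by rw [this]; ring]
  -- right side of swap
  have hR : (∫ t, ∫ s, F (s, t) ∂μ ∂μ) = ∫ t in Ioc a b, (φ b - φ t) * f t := by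
    refine setIntegral_congr_fun measurableSet_Ioc fun t ht => ?_
    have h1 : (fun s => F (s, t)) = Set.indicator (Ici t) (fun s => dφ s * f t) := by
      funext s
      simp only [hF, Set.indicator_apply, Set.mem_setOf_eq, Set.mem_Ici]
    rw [h1, MeasureTheory.integral_indicator measurableSet_Ici, hμ,
      Measure.restrict_restrict measurableSet_Ici]
    have h2 : Ici t ∩ Ioc a b = Icc t b := by
      ext y
      simp only [Set.mem_inter_iff, Set.mem_Ici, Set.mem_Ioc, Set.mem_Icc]
      constructor
      · rintro ⟨h3, _, h5⟩; exact ⟨h3, h5⟩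
      · rintro ⟨h3, h4⟩; exact ⟨h3, lt_of_lt_of_le ht.1 h3, h4⟩
    rw [h2, MeasureTheory.integral_Icc_eq_integral_Ioc, MeasureTheory.integral_mul_const,
      ← intervalIntegral.integral_of_le ht.2]
    have h3 : (∫ s in t..b, dφ s) = φ b - φ t :=
      intervalIntegral.integral_eq_sub_of_hasDerivAt (fun x _ => hφd x)
        (hdφc.intervalIntegrable _ _)
    rw [h3]
  rw [hL, hR] at hswap
  -- unfold both sides
  have hdg : IntegrableOn (fun s => dφ s * g s) (Ioc a b) volume :=
    (hdφc.mul hgc).integrableOn_Ioc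
  have hφf : IntegrableOn (fun t => φ t * f t) (Ioc a b) volume :=
    (intervalIntegrable_iff_integrableOn_Ioc_of_le hab).mp
      (intervalIntegrable_cont_mul hφc (hf a b))
  have hFTCφ : (∫ s in Ioc a b, dφ s) = φ b - φ a := by
    rw [← intervalIntegral.integral_of_le hab]
    exact intervalIntegral.integral_eq_sub_of_hasDerivAt (fun x _ => hφd x)
      (hdφc.intervalIntegrable _ _)
  have hL2 : (∫ s in Ioc a b, dφ s * (g s - g a))
      = (∫ s in Ioc a b, dφ s * g s) - (φ b - φ a) * g a := by
    have : (fun s => dφ s * (g s - g a)) = fun s => dφ s * g s - dφ s * g a := by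
      funext s; ring
    rw [this, integral_sub hdg (hdφI.mul_const (g a)), MeasureTheory.integral_mul_const, hFTCφ]
  have hR2 : (∫ t in Ioc a b, (φ b - φ t) * f t)
      = φ b * (g b - g a) - ∫ t in Ioc a b, φ t * f t := by
    have : (fun t => (φ b - φ t) * f t) = fun t => φ b * f t - φ t * f t := by
      funext t; ring
    rw [this, integral_sub (hfI.const_mul (φ b)) hφf, MeasureTheory.integral_const_mul]
    have : (∫ x in Ioc a b, f x) = g b - g a := by
      rw [← intervalIntegral.integral_of_le hab, show (∫ x in a..b, f x) = g b - g a by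
        rw [hgi a b]; ring]
    rw [this]
  rw [hL2, hR2] at hswap
  rw [intervalIntegral.integral_of_le hab,
    integral_add hdg hφf]
  linear_combination -hswap


private lemma jost_aux (c : ℝ → ℝ) (hmeas : Measurable c)
    (h1 : (∃ c₀ > (0 : ℝ), ∃ cM > (0 : ℝ), ∀ᵐ x : ℝ, c₀ < c x ∧ c x ≤ cM))
    (k : ℂ) (hk : 0 ≤ k.im)
    (u₁ : ℝ → ℂ)
    (hC1 : ContDiff ℝ 1 u₁)
    (hODE : ∀ a b : ℝ, deriv u₁ b = deriv u₁ a + ∫ x in a..b, -(k ^ 2 / ((c x : ℂ) ^ 2)) * u₁ x)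
    (h_lim : Tendsto (fun x : ℝ => Complex.exp (-(Complex.I * k * (x : ℂ))) * u₁ x) atTop (𝓝 1)) :
    ∀ x : ℝ, u₁ x ≠ 0 := by
  obtain ⟨c₀, hc₀, cM, hcM, hae⟩ := h1
  set f : ℝ → ℂ := fun x => -(k ^ 2 / ((c x : ℂ) ^ 2)) * u₁ x with hfdef
  set u' : ℝ → ℂ := deriv u₁ with hu'def
  have hucont : Continuous u₁ := hC1.continuous
  have hu'cont : Continuous u' := hC1.continuous_deriv le_rfl
  have hudiff : ∀ x, HasDerivAt u₁ (u' x) x := fun x =>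
    ((hC1.differentiable one_ne_zero) x).hasDerivAt
  -- measurability of f
  have hfm : Measurable f := by
    apply Measurable.mul
    · exact (measurable_const.div ((Complex.measurable_ofReal.comp hmeas).pow_const 2)).neg
    · exact hucont.measurable
  -- a.e. bound for f
  have hbound : ∀ᵐ x : ℝ, ‖f x‖ ≤ ‖k‖ ^ 2 / c₀ ^ 2 * ‖u₁ x‖ := by
    filter_upwards [hae] with x hx
    have hcx : (0:ℝ) < c x := lt_trans hc₀ hx.1
    have h1 : ‖f x‖ = ‖k‖ ^ 2 / (c x) ^ 2 * ‖u₁ x‖ := by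
      simp [hfdef, norm_mul, norm_div, Complex.norm_real, abs_of_pos hcx, norm_pow]
    rw [h1]
    gcongr
    exact hx.1.le
  have hIntf : ∀ a b : ℝ, IntervalIntegrable f volume a b := by
    intro a b
    refine IntervalIntegrable.mono_fun' (g := fun x => ‖k‖ ^ 2 / c₀ ^ 2 * ‖u₁ x‖) ?_ ?_ ?_
    · exact ((continuous_const.mul hucont.norm).intervalIntegrable a b)
    · exact hfm.aestronglyMeasurable
    · exact ae_restrict_of_ae hbound
  -- the ODE in terms of f
  have hODE' : ∀ x y : ℝ, u' y = u' x + ∫ s in x..y, f s := hODE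
  -- norm of the exponential factor
  have hE : ∀ x : ℝ, ‖Complex.exp (-(Complex.I * k * (x : ℂ)))‖ = Real.exp (k.im * x) := by
    intro x
    rw [Complex.norm_exp]
    congr 1
    simp [Complex.mul_re, Complex.mul_im]
  have hnorm : Tendsto (fun x : ℝ => Real.exp (k.im * x) * ‖u₁ x‖) atTop (𝓝 1) := by
    have := h_lim.norm
    simp only [norm_mul, norm_one] at this
    refine this.congr fun x => ?_
    rw [hE x]
  intro x₀ hx₀
  -- the Ioc-zero contradiction helper will be inline
  rcases hk.eq_or_lt with him0 | htpos
  · -- k.im = 0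
    by_cases hk0 : k = 0
    · -- k = 0 : u₁ is constant equal to 1
      subst hk0
      have hf0 : ∀ x, f x = 0 := by intro x; simp [hfdef]
      have hu'const : ∀ x, u' x = u' 0 := by
        intro x
        have := hODE' 0 x
        simpa [hf0] using this
      have huval : ∀ b : ℝ, u₁ b = u₁ 0 + (b:ℂ) * u' 0 := by
        intro b
        have h1 : (∫ x in (0:ℝ)..b, u' x) = u₁ b - u₁ 0 :=
          intervalIntegral.integral_eq_sub_of_hasDerivAt (fun x _ => hudiff x)
            (hu'cont.intervalIntegrable _ _)
        have h2 : (∫ x in (0:ℝ)..b, u' x) = ∫ x in (0:ℝ)..b, u' 0 :=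
          intervalIntegral.integral_congr fun x _ => hu'const x
        rw [h2, intervalIntegral.integral_const, sub_zero, Complex.real_smul] at h1
        linear_combination -h1
      have h_lim' : Tendsto u₁ atTop (𝓝 1) := by
        refine h_lim.congr fun x => ?_
        simp
      by_cases hd : u' 0 = 0
      · have hc : ∀ b, u₁ b = u₁ 0 := by intro b; rw [huval b, hd]; simp
        have h6 : u₁ 0 = 1 := by
          refine tendsto_nhds_unique ?_ h_lim'
          exact Tendsto.congr (fun x => (hc x).symm) tendsto_const_nhds
        rw [hc x₀, h6] at hx₀
        exact one_ne_zero hx₀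
      · -- contradiction : |u₁| → ∞
        have hev1 : ∀ᶠ b in atTop, ‖u₁ b‖ < 2 :=
          (h_lim'.norm.eventually (eventually_lt_nhds (by norm_num : ‖(1:ℂ)‖ < 2)))
        have hev2 : ∀ᶠ b in atTop, (‖u' 0‖⁻¹ * (2 + ‖u₁ 0‖) + 1) ≤ b := eventually_ge_atTop _
        obtain ⟨b, hb1, hb2⟩ := (hev1.and hev2).exists
        have hd' : (0:ℝ) < ‖u' 0‖ := norm_pos_iff.mpr hd
        have hb0 : (0:ℝ) ≤ b := le_trans (by positivity) hb2
        have h3 : ‖u₁ b‖ ≥ b * ‖u' 0‖ - ‖u₁ 0‖ := by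
          rw [huval b]
          have h4 : ‖(b:ℂ) * u' 0‖ ≤ ‖u₁ 0 + (b:ℂ) * u' 0‖ + ‖u₁ 0‖ := by
            have h5 := norm_sub_le (u₁ 0 + (b:ℂ) * u' 0) (u₁ 0)
            rw [add_sub_cancel_left] at h5
            linarith [h5]
          rw [norm_mul, Complex.norm_real, Real.norm_eq_abs, abs_of_nonneg hb0] at h4
          linarith
        have h5 : b * ‖u' 0‖ ≥ 2 + ‖u₁ 0‖ + ‖u' 0‖ := by
          have h7 := mul_le_mul_of_nonneg_right hb2 hd'.le
          have hne : ‖u' 0‖ ≠ 0 := ne_of_gt hd'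
          have h9 : (‖u' 0‖⁻¹ * (2 + ‖u₁ 0‖) + 1) * ‖u' 0‖ = (2 + ‖u₁ 0‖) + ‖u' 0‖ := by
            rw [add_mul, one_mul, inv_mul_eq_div, div_mul_cancel₀ _ hne]
          linarith [h7, h9]
        linarith [hb1, h3, h5, hd']
    · -- k real nonzero
      have hkim : k.im = 0 := him0.symm
      have hkre : k.re ≠ 0 := by
        intro h; exact hk0 (Complex.ext h hkim)
      have hkstar : (starRingEnd ℂ) k = k := Complex.conj_eq_iff_im.mpr hkim
      set v : ℝ → ℂ := fun y => (starRingEnd ℂ) (u₁ y) with hvdef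
      set v' : ℝ → ℂ := fun y => (starRingEnd ℂ) (u' y) with hv'def
      have hvc : Continuous v := Complex.continuous_conj.comp hucont
      have hv'c : Continuous v' := Complex.continuous_conj.comp hu'cont
      have hvd : ∀ x, HasDerivAt v (v' x) x := fun x => (hudiff x).star
      set fs : ℝ → ℂ := fun x => (starRingEnd ℂ) (f x) with hfsdef
      have hIntfs : ∀ a b : ℝ, IntervalIntegrable fs volume a b := fun a b =>
        intervalIntegrable_star (hIntf a b)
      have hODEs : ∀ x y : ℝ, v' y = v' x + ∫ s in x..y, fs s := by
        intro x y
        have h0 := congrArg (starRingEnd ℂ) (hODE' x y)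
        rw [map_add, ← interval_integral_star] at h0
        exact h0
      have hW : ∀ b, x₀ ≤ b → v b * u' b - u₁ b * v' b = 0 := by
        intro b hb
        have h1 := my_ibp hvc hv'c hvd hIntf hODE' hb
        have h2 := my_ibp hucont hu'cont hudiff hIntfs hODEs hb
        have h5 : (∫ x in x₀..b, (v' x * u' x + v x * f x))
            = ∫ x in x₀..b, (u' x * v' x + u₁ x * fs x) := by
          refine intervalIntegral.integral_congr fun x _ => ?_
          have hfs : fs x = -(k ^ 2 / ((c x : ℂ)) ^ 2) * v x := by
            simp only [hfsdef, hfdef, map_mul, map_neg, map_div₀, map_pow, hkstar,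
              Complex.conj_ofReal, hvdef]
          rw [hfs]
          simp only [hfdef]
          ring
        rw [h5, ← h2] at h1
        have hv0 : v x₀ = 0 := by simp [hvdef, hx₀]
        rw [hx₀, hv0] at h1
        simp only [zero_mul, mul_zero, sub_zero] at h1
        linear_combination h1
      -- eventually nonvanishing
      have hnorm' : Tendsto (fun x : ℝ => ‖u₁ x‖) atTop (𝓝 1) := by
        have : Tendsto (fun x : ℝ => Real.exp (k.im * x) * ‖u₁ x‖) atTop (𝓝 1) := hnorm
        rw [hkim] at this
        simpa using this
      have hev : ∀ᶠ x in atTop, (1:ℝ)/2 < ‖u₁ x‖ :=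
        hnorm'.eventually (eventually_gt_nhds (by norm_num))
      obtain ⟨A₀, hA₀⟩ := eventually_atTop.mp hev
      set A := max x₀ A₀ with hA
      have hAx₀ : x₀ ≤ A := le_max_left _ _
      have hune : ∀ x, A ≤ x → u₁ x ≠ 0 := by
        intro x hx h0
        have h1 := hA₀ x (le_trans (le_max_right _ _) hx)
        rw [h0] at h1
        simp at h1
        linarith
      have hvne : ∀ x, A ≤ x → v x ≠ 0 := by
        intro x hx
        simp only [hvdef, ne_eq, map_eq_zero]
        exact hune x hx
      set gq : ℝ → ℂ := fun y => u₁ y / v y with hgq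
      have hgconst : ∀ X, A ≤ X → gq X = gq A := by
        intro X hX
        have key := constant_of_has_deriv_right_zero (f := gq) (a := A) (b := X)
          ((hucont.continuousOn.div hvc.continuousOn (fun x hx => hvne x hx.1)))
          ?_
        · exact key X (right_mem_Icc.mpr hX)
        · intro x hx
          have hx' : A ≤ x := hx.1
          have hne := hvne x hx'
          have hd : HasDerivAt gq ((u' x * v x - u₁ x * v' x) / (v x) ^ 2) x :=
            (hudiff x).div (hvd x) hne
          have hz : u' x * v x - u₁ x * v' x = 0 := by
            have h6 := hW x (le_trans hAx₀ hx')
            linear_combination h6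
          rw [hz, zero_div] at hd
          exact hd.hasDerivWithinAt
      set ω : ℂ := gq A with hω
      have hωid : ∀ X, A ≤ X → u₁ X = ω * v X := by
        intro X hX
        have h1 := hgconst X hX
        rw [hgq] at h1
        simp only at h1
        rw [div_eq_iff (hvne X hX)] at h1
        exact h1
      have hωne : ω ≠ 0 := by
        intro h0
        have h1 := hωid A le_rfl
        rw [h0, zero_mul] at h1
        exact hune A le_rfl h1
      have hnsq : Tendsto (fun X : ℝ => ((Complex.normSq (u₁ X) : ℝ) : ℂ)) atTop
          (𝓝 1) := by
        have h1 : Tendsto (fun X : ℝ => Complex.normSq (u₁ X)) atTop (𝓝 1) := by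
          have h2 := hnorm'.mul hnorm'
          rw [mul_one] at h2
          refine h2.congr fun X => ?_
          rw [Complex.normSq_eq_norm_sq, sq]
        have h3 := (Complex.continuous_ofReal.tendsto 1).comp h1
        exact h3
      set G : ℝ → ℂ := fun X : ℝ => Complex.exp (-(2 * (Complex.I * k * (X:ℂ)))) with hG
      have hGid : ∀ X : ℝ, A ≤ X → G X * (ω * ((Complex.normSq (u₁ X) : ℝ) : ℂ))
          = (Complex.exp (-(Complex.I * k * (X:ℂ))) * u₁ X) ^ 2 := by
        intro X hX
        have h1 : (Complex.exp (-(Complex.I * k * (X:ℂ)))) ^ 2 = G X := by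
          rw [hG, sq, ← Complex.exp_add]
          congr 1
          ring
        have h2 : u₁ X * u₁ X = ω * ((Complex.normSq (u₁ X) : ℝ) : ℂ) := by
          nth_rewrite 2 [hωid X hX]
          rw [show u₁ X * (ω * v X) = ω * (u₁ X * v X) by ring]
          rw [hvdef]
          simp only [Complex.mul_conj]
        rw [mul_pow, h1, sq, h2]
      have hGlim : Tendsto G atTop (𝓝 (ω⁻¹)) := by
        have hden : Tendsto (fun X : ℝ => ω * ((Complex.normSq (u₁ X) : ℝ) : ℂ))
            atTop (𝓝 (ω * 1)) := tendsto_const_nhds.mul hnsq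
        have hinv : Tendsto (fun X : ℝ => (ω * ((Complex.normSq (u₁ X) : ℝ) : ℂ))⁻¹)
            atTop (𝓝 ((ω * 1)⁻¹)) := hden.inv₀ (by simpa using hωne)
        have h1 := (h_lim.pow 2).mul hinv
        rw [one_pow, one_mul, mul_one] at h1
        refine Tendsto.congr' ?_ h1
        filter_upwards [eventually_ge_atTop A] with X hX
        rw [← hGid X hX]
        have hne2 : ω * ((Complex.normSq (u₁ X) : ℝ) : ℂ) ≠ 0 := by
          apply mul_ne_zero hωne
          simp only [ne_eq, Complex.ofReal_eq_zero, Complex.normSq_eq_zero]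
          exact hune X hX
        exact mul_inv_cancel_right₀ hne2 _
      set cc : ℝ := Real.pi / (2 * k.re) with hcc
      have hkval : k = ((k.re : ℝ) : ℂ) := Complex.ext rfl (by simp [hkim])
      have hshift : ∀ X : ℝ, G (X + cc) = -G X := by
        intro X
        rw [hG]
        simp only
        rw [show (-(2 * (Complex.I * k * ((X + cc : ℝ) : ℂ))))
            = -(2 * (Complex.I * k * (X:ℂ))) + -(2 * (Complex.I * k * (cc:ℂ))) by
          push_cast; ring]
        rw [Complex.exp_add]
        have h1 : -(2 * (Complex.I * k * (cc:ℂ))) = -((Real.pi : ℂ) * Complex.I) := by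
          rw [hkval]
          rw [show (2 : ℂ) * (Complex.I * ((k.re : ℝ) : ℂ) * (cc:ℂ))
              = ((2 * k.re * cc : ℝ) : ℂ) * Complex.I by push_cast; ring]
          congr 2
          rw [hcc]
          field_simp
        have hexp : Complex.exp (-(2 * (Complex.I * k * (cc:ℂ)))) = -1 := by
          rw [h1, Complex.exp_neg, Complex.exp_pi_mul_I]
          norm_num
        rw [hexp]
        ring
      have h2 : Tendsto (fun X : ℝ => G (X + cc)) atTop (𝓝 (ω⁻¹)) :=
        hGlim.comp (tendsto_atTop_add_const_right atTop cc tendsto_id)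
      have h3 : Tendsto (fun X : ℝ => -G X) atTop (𝓝 (-ω⁻¹)) := hGlim.neg
      have h4 : (ω⁻¹ : ℂ) = -ω⁻¹ := by
        refine tendsto_nhds_unique ?_ h3
        exact h2.congr fun X => hshift X
      have h6 : ω⁻¹ + ω⁻¹ = (0:ℂ) := by nth_rewrite 1 [h4]; exact neg_add_cancel _
      have h7 : (2:ℂ) * ω⁻¹ = 0 := by rw [two_mul]; exact h6
      have h8 : (ω⁻¹ : ℂ) = 0 := (mul_eq_zero.mp h7).resolve_left (by norm_num)
      exact hωne (inv_eq_zero.mp h8)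
  · -- k.im > 0
    set t : ℝ := k.im with ht
    have hub : ∀ᶠ x in atTop, Real.exp (t*x) * ‖u₁ x‖ < 2 ∧ 1/2 < Real.exp (t*x) * ‖u₁ x‖ := by
      have h1 : Tendsto (fun x : ℝ => Real.exp (t*x) * ‖u₁ x‖) atTop (𝓝 1) := hnorm
      exact (h1.eventually (eventually_lt_nhds (by norm_num : (1:ℝ) < 2))).and
        (h1.eventually (eventually_gt_nhds (by norm_num : (1:ℝ)/2 < 1)))
    obtain ⟨A₀, hA₀⟩ := eventually_atTop.mp hub
    obtain ⟨M₀, hM₀⟩ := (isCompact_Icc (a := x₀) (b := A₀)).exists_bound_of_continuousOn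
      (((Real.continuous_exp.comp (continuous_const.mul continuous_id)).mul
        hucont.norm)).continuousOn
    set Bu : ℝ := max M₀ 2 with hBu
    have hdecay : ∀ x, x₀ ≤ x → ‖u₁ x‖ ≤ Bu * Real.exp (-(t*x)) := by
      intro x hx
      have he : Real.exp (t*x) * ‖u₁ x‖ ≤ Bu := by
        rcases le_or_gt x A₀ with h | h
        · refine le_trans (le_trans (le_abs_self _) ?_) (le_max_left _ _)
          have := hM₀ x ⟨hx, h⟩
          rwa [Real.norm_eq_abs] at this
        · exact le_trans (hA₀ x h.le).1.le (le_max_right _ _)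
      have heq : ‖u₁ x‖ = (Real.exp (t*x) * ‖u₁ x‖) * Real.exp (-(t*x)) := by
        rw [mul_comm (Real.exp (t*x)) _, mul_assoc, ← Real.exp_add, add_neg_cancel,
          Real.exp_zero, mul_one]
      rw [heq]
      exact mul_le_mul_of_nonneg_right he (Real.exp_pos _).le
    have hcexp : Continuous (fun x : ℝ => Real.exp (-(t*x))) :=
      Real.continuous_exp.comp ((continuous_const.mul continuous_id).neg)
    have hexp0 : Tendsto (fun x : ℝ => Real.exp (-(t*x))) atTop (𝓝 0) := by
      have h1 : Tendsto (fun x : ℝ => t*x) atTop atTop :=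
        Tendsto.const_mul_atTop htpos tendsto_id
      exact Real.tendsto_exp_atBot.comp (tendsto_neg_atBot_iff.mpr h1)
    have hu0 : Tendsto u₁ atTop (𝓝 0) := by
      apply squeeze_zero_norm' (a := fun x => Bu * Real.exp (-(t*x)))
      · filter_upwards [eventually_ge_atTop x₀] with x hx using hdecay x hx
      · have := hexp0.const_mul Bu
        simpa using this
    set Kc : ℝ := ‖k‖^2 / c₀^2 with hKc
    have hKcnn : 0 ≤ Kc := by positivity
    have hBunn : (0:ℝ) ≤ Bu := le_trans (by norm_num) (le_max_right M₀ 2)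
    have hexpint : ∀ b, x₀ ≤ b →
        (∫ x in x₀..b, Real.exp (-(t*x))) = (Real.exp (-(t*x₀)) - Real.exp (-(t*b)))/t := by
      intro b hb
      have hanti : ∀ x : ℝ, HasDerivAt (fun y : ℝ => -(Real.exp (-(t*y))/t))
          (Real.exp (-(t*x))) x := by
        intro x
        have h1 : HasDerivAt (fun y : ℝ => -(t*y)) (-t) x := by
          simpa using (hasDerivAt_neg x).const_mul t
        have h3 := (h1.exp.div_const t).fun_neg
        refine h3.congr_deriv ?_
        field_simp [ne_of_gt htpos]
      rw [intervalIntegral.integral_eq_sub_of_hasDerivAt (fun x _ => hanti x)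
        (hcexp.intervalIntegrable _ _)]
      ring
    have hu'bdd : ∀ b, x₀ ≤ b →
        ‖u' b‖ ≤ ‖u' x₀‖ + Kc * Bu * (Real.exp (-(t*x₀))/t) := by
      intro b hb
      have h1 : u' b - u' x₀ = ∫ x in x₀..b, f x := by
        rw [hODE' x₀ b, add_sub_cancel_left]
      have h2 : ‖∫ x in x₀..b, f x‖ ≤ |∫ x in x₀..b, Kc * Bu * Real.exp (-(t*x))| := by
        refine le_trans (intervalIntegral.norm_integral_le_of_norm_le hb ?_ ?_) (le_abs_self _)
        · filter_upwards [hbound] with x hx hmem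
          have hxmem : x₀ ≤ x := hmem.1.le
          calc ‖f x‖ ≤ Kc * ‖u₁ x‖ := hx
            _ ≤ Kc * (Bu * Real.exp (-(t*x))) := by
                exact mul_le_mul_of_nonneg_left (hdecay x hxmem) hKcnn
            _ = Kc * Bu * Real.exp (-(t*x)) := by ring
        · exact (continuous_const.mul hcexp).intervalIntegrable _ _
      have h3 : (∫ x in x₀..b, Kc * Bu * Real.exp (-(t*x)))
          = Kc * Bu * ((Real.exp (-(t*x₀)) - Real.exp (-(t*b)))/t) := by
        rw [intervalIntegral.integral_const_mul, hexpint b hb]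
      have h4 : |∫ x in x₀..b, Kc * Bu * Real.exp (-(t*x))|
          ≤ Kc * Bu * (Real.exp (-(t*x₀))/t) := by
        rw [h3]
        have hle : Real.exp (-(t*b)) ≤ Real.exp (-(t*x₀)) := by
          apply Real.exp_le_exp.mpr
          nlinarith
        have h6 : 0 ≤ (Real.exp (-(t*x₀)) - Real.exp (-(t*b)))/t :=
          div_nonneg (by linarith) htpos.le
        rw [abs_of_nonneg (mul_nonneg (mul_nonneg hKcnn hBunn) h6)]
        have h7 : (Real.exp (-(t*x₀)) - Real.exp (-(t*b)))/t ≤ Real.exp (-(t*x₀))/t := by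
          apply (div_le_div_iff_of_pos_right htpos).mpr
          linarith [Real.exp_pos (-(t*b))]
        exact mul_le_mul_of_nonneg_left h7 (mul_nonneg hKcnn hBunn)
      have h5 : ‖u' b‖ ≤ ‖u' x₀‖ + ‖u' b - u' x₀‖ := by
        have := norm_add_le (u' x₀) (u' b - u' x₀)
        simpa using this
      rw [h1] at h5
      exact le_trans h5 (by linarith [le_trans h2 h4])
    set Mu' : ℝ := ‖u' x₀‖ + Kc * Bu * (Real.exp (-(t*x₀))/t) with hMu'
    have hprod : Tendsto (fun b => (starRingEnd ℂ) (u₁ b) * u' b) atTop (𝓝 0) := by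
      apply squeeze_zero_norm' (a := fun b => Mu' * ‖u₁ b‖)
      · filter_upwards [eventually_ge_atTop x₀] with b hb
        rw [norm_mul, RCLike.norm_conj]
        calc ‖u₁ b‖ * ‖u' b‖ ≤ ‖u₁ b‖ * Mu' :=
              mul_le_mul_of_nonneg_left (hu'bdd b hb) (norm_nonneg _)
          _ = Mu' * ‖u₁ b‖ := by ring
      · have := hu0.norm.const_mul Mu'
        simpa using this
    -- IBP identity
    set v : ℝ → ℂ := fun y => (starRingEnd ℂ) (u₁ y) with hvdef
    set v' : ℝ → ℂ := fun y => (starRingEnd ℂ) (u' y) with hv'def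
    have hvc : Continuous v := Complex.continuous_conj.comp hucont
    have hv'c : Continuous v' := Complex.continuous_conj.comp hu'cont
    have hvd : ∀ x, HasDerivAt v (v' x) x := fun x => (hudiff x).star
    have hibp : ∀ b, x₀ ≤ b → v b * u' b = ∫ x in x₀..b, (v' x * u' x + v x * f x) := by
      intro b hb
      have h1 := my_ibp hvc hv'c hvd hIntf hODE' hb
      have hv0 : v x₀ = 0 := by simp [hvdef, hx₀]
      rw [hv0, zero_mul, sub_zero] at h1
      exact h1
    set p : ℝ → ℝ := fun x => Complex.normSq (u' x) with hp
    set q : ℝ → ℝ := fun x => Complex.normSq (u₁ x) / (c x)^2 with hq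
    have hkey : ∀ x, v' x * u' x + v x * f x = ((p x : ℝ) : ℂ) - k^2 * ((q x : ℝ) : ℂ) := by
      intro x
      have h1 : v' x * u' x = ((Complex.normSq (u' x) : ℝ) : ℂ) := by
        rw [hv'def, mul_comm]
        exact Complex.mul_conj _
      have h2 : v x * u₁ x = ((Complex.normSq (u₁ x) : ℝ) : ℂ) := by
        rw [hvdef, mul_comm]
        exact Complex.mul_conj _
      have h3 : v x * f x = -(k^2 / ((c x : ℂ))^2 * (v x * u₁ x)) := by
        simp only [hfdef]
        ring
      rw [h1, h3, h2]
      simp only [hp, hq, Complex.ofReal_div, Complex.ofReal_pow]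
      ring
    have hqm : Measurable q :=
      ((Complex.continuous_normSq.comp hucont).measurable).div (hmeas.pow_const 2)
    have hqnn : ∀ x, 0 ≤ q x := fun x => div_nonneg (Complex.normSq_nonneg _) (sq_nonneg _)
    have hIntq : ∀ a b : ℝ, IntervalIntegrable q volume a b := by
      intro a b
      refine IntervalIntegrable.mono_fun'
        (g := fun x => Complex.normSq (u₁ x) / c₀^2) ?_ ?_ ?_
      · exact (((Complex.continuous_normSq.comp hucont).div_const _)).intervalIntegrable a b
      · exact hqm.aestronglyMeasurable
      · refine ae_restrict_of_ae (hae.mono fun x hx => ?_)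
        have hcx : 0 < c x := lt_trans hc₀ hx.1
        show ‖q x‖ ≤ Complex.normSq (u₁ x) / c₀^2
        rw [Real.norm_eq_abs, abs_of_nonneg (hqnn x)]
        simp only [hq]
        gcongr
        · exact Complex.normSq_nonneg _
        · exact hx.1.le
    have hIntp : ∀ a b : ℝ, IntervalIntegrable p volume a b := fun a b =>
      (Complex.continuous_normSq.comp hu'cont).intervalIntegrable a b
    have hIntqC : ∀ a b : ℝ, IntervalIntegrable (fun x => ((q x : ℝ) : ℂ)) volume a b := by
      intro a b
      refine IntervalIntegrable.mono_fun' (g := fun x => |q x|) ((hIntq a b).abs) ?_ ?_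
      · exact Complex.continuous_ofReal.comp_aestronglyMeasurable hqm.aestronglyMeasurable
      · filter_upwards with x
        simp
    set P : ℝ → ℝ := fun b => ∫ x in x₀..b, p x with hP
    set Q : ℝ → ℝ := fun b => ∫ x in x₀..b, q x with hQ
    have hPQ : ∀ b, x₀ ≤ b →
        v b * u' b = ((P b : ℝ) : ℂ) - k^2 * ((Q b : ℝ) : ℂ) := by
      intro b hb
      have hintp' : IntervalIntegrable (fun x => ((p x : ℝ) : ℂ)) volume x₀ b :=
        (Complex.continuous_ofReal.comp (Complex.continuous_normSq.comp hu'cont)).intervalIntegrable _ _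
      rw [hibp b hb, intervalIntegral.integral_congr (fun x _ => hkey x),
        intervalIntegral.integral_sub hintp' ((hIntqC x₀ b).const_mul (k^2)),
        intervalIntegral.integral_const_mul, intervalIntegral.integral_ofReal,
        intervalIntegral.integral_ofReal]
    have hre : Tendsto (fun b => (v b * u' b).re) atTop (𝓝 0) := by
      have := (Complex.continuous_re.tendsto 0).comp hprod
      exact this
    have him : Tendsto (fun b => (v b * u' b).im) atTop (𝓝 0) := by
      have := (Complex.continuous_im.tendsto 0).comp hprod
      exact this
    have hreval : ∀ b, x₀ ≤ b → (v b * u' b).re = P b - (k^2).re * Q b := by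
      intro b hb
      rw [hPQ b hb]
      simp [Complex.sub_re, Complex.mul_re]
    have himval : ∀ b, x₀ ≤ b → (v b * u' b).im = -((k^2).im * Q b) := by
      intro b hb
      rw [hPQ b hb]
      simp [Complex.sub_im, Complex.mul_im]
    have hQnn : ∀ b, x₀ ≤ b → 0 ≤ Q b := fun b hb =>
      intervalIntegral.integral_nonneg hb (fun x _ => hqnn x)
    have hPnn : ∀ b, x₀ ≤ b → 0 ≤ P b := fun b hb =>
      intervalIntegral.integral_nonneg hb (fun x _ => Complex.normSq_nonneg _)
    have hQmono : ∀ b b', x₀ ≤ b → b ≤ b' → Q b ≤ Q b' := by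
      intro b b' hb hbb
      have h1 : Q b + (∫ x in b..b', q x) = Q b' :=
        intervalIntegral.integral_add_adjacent_intervals (hIntq x₀ b) (hIntq b b')
      have h2 : 0 ≤ ∫ x in b..b', q x :=
        intervalIntegral.integral_nonneg hbb (fun x _ => hqnn x)
      linarith
    have hQzero : ∀ b, x₀ ≤ b → Q b = 0 := by
      by_cases hkre : k.re = 0
      · have hk2re : (k^2).re = -(t^2) := by
          simp [pow_two, Complex.mul_re, hkre, ht]
        have hlim2 : Tendsto (fun b => P b + t^2 * Q b) atTop (𝓝 0) := by
          refine hre.congr' ?_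
          filter_upwards [eventually_ge_atTop x₀] with b hb
          rw [hreval b hb, hk2re]
          ring
        intro b hb
        have ht2 : (0:ℝ) < t^2 := by positivity
        have h1 : t^2 * Q b ≤ 0 := by
          refine ge_of_tendsto hlim2 ?_
          filter_upwards [eventually_ge_atTop (max b x₀)] with b' hb'
          have hbb' : b ≤ b' := le_trans (le_max_left _ _) hb'
          have hx₀b' : x₀ ≤ b' := le_trans (le_max_right _ _) hb'
          have h2 := hQmono b b' hb hbb'
          have h3 := hPnn b' hx₀b'
          have h4 := mul_le_mul_of_nonneg_left h2 (sq_nonneg t)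
          linarith
        have h2 := hQnn b hb
        have h3 : 0 ≤ t^2 * Q b := mul_nonneg ht2.le h2
        have h4 : t^2 * Q b = 0 := le_antisymm h1 h3
        exact (mul_eq_zero.mp h4).resolve_left (ne_of_gt ht2)
      · have hk2im : (k^2).im = 2 * (k.re * t) := by
          simp [pow_two, Complex.mul_im, ht]
          ring
        have hk2imne : (k^2).im ≠ 0 := by
          rw [hk2im]
          exact mul_ne_zero two_ne_zero (mul_ne_zero hkre (ne_of_gt htpos))
        have hlim2 : Tendsto (fun b => -((k^2).im * Q b)) atTop (𝓝 0) := by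
          refine him.congr' ?_
          filter_upwards [eventually_ge_atTop x₀] with b hb
          rw [himval b hb]
        have hQlim : Tendsto Q atTop (𝓝 0) := by
          have h1 := hlim2.neg
          simp only [neg_neg, neg_zero] at h1
          have h2 := h1.const_mul ((k^2).im)⁻¹
          rw [mul_zero] at h2
          refine Tendsto.congr ?_ h2
          intro b
          rw [inv_mul_cancel_left₀ hk2imne]
        intro b hb
        have h1 : Q b ≤ 0 := by
          refine ge_of_tendsto hQlim ?_
          filter_upwards [eventually_ge_atTop b] with b' hb'
          exact hQmono b b' hb hb'
        linarith [hQnn b hb]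
    -- contradiction
    set X : ℝ := max A₀ x₀ + 1 with hX
    have hXA : A₀ ≤ X := by
      have := le_max_left A₀ x₀
      linarith
    have hXx : x₀ < X := by
      have := le_max_right A₀ x₀
      linarith
    have huX : u₁ X ≠ 0 := by
      have h1 := (hA₀ X hXA).2
      intro h0
      rw [h0] at h1
      simp at h1
      linarith
    have hQX : Q (X+1) = 0 := hQzero (X+1) (by linarith)
    have hint : IntegrableOn q (Ioc x₀ (X+1)) volume :=
      (intervalIntegrable_iff_integrableOn_Ioc_of_le (by linarith)).mp (hIntq _ _)
    have h2 : (∫ x in Ioc x₀ (X+1), q x) = 0 := by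
      rw [← intervalIntegral.integral_of_le (by linarith : x₀ ≤ X + 1)]
      exact hQX
    have h3 : q =ᵐ[volume.restrict (Ioc x₀ (X+1))] 0 :=
      (integral_eq_zero_iff_of_nonneg_ae (Eventually.of_forall hqnn) hint).mp h2
    have h4 : ∀ᵐ x ∂(volume.restrict (Ioc x₀ (X+1))), u₁ x = 0 := by
      filter_upwards [h3, ae_restrict_of_ae hae] with x hx hcx
      have hcx0 : 0 < c x := lt_trans hc₀ hcx.1
      have hns : Complex.normSq (u₁ x) = 0 := by
        have hx' : Complex.normSq (u₁ x) / (c x)^2 = 0 := hx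
        rcases div_eq_zero_iff.mp hx' with h | h
        · exact h
        · exact absurd h (by positivity)
      exact Complex.normSq_eq_zero.mp hns
    have hopen : IsOpen (u₁ ⁻¹' ({0}ᶜ) ∩ Ioo x₀ (X+1)) :=
      (isOpen_compl_singleton.preimage hucont).inter isOpen_Ioo
    have hne : (u₁ ⁻¹' ({0}ᶜ) ∩ Ioo x₀ (X+1)).Nonempty := by
      refine ⟨X, ?_, hXx, by linarith⟩
      simp only [Set.mem_preimage, Set.mem_compl_iff, Set.mem_singleton_iff]
      exact huX
    have hpos := hopen.measure_pos volume hne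
    have hnull : volume (u₁ ⁻¹' ({0}ᶜ) ∩ Ioc x₀ (X+1)) = 0 := by
      have h5 := ae_iff.mp h4
      have hseteq : {x : ℝ | ¬ u₁ x = 0} = u₁ ⁻¹' ({0}ᶜ) := by
        ext y
        simp
      rw [hseteq, Measure.restrict_apply (hucont.measurable (measurableSet_singleton 0).compl)] at h5
      exact h5
    have hsub : (u₁ ⁻¹' ({0}ᶜ) ∩ Ioo x₀ (X+1)) ⊆ (u₁ ⁻¹' ({0}ᶜ) ∩ Ioc x₀ (X+1)) := by
      rintro y ⟨hy1, hy2, hy3⟩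
      exact ⟨hy1, hy2, hy3.le⟩
    exact absurd (measure_mono_null hsub hnull) hpos.ne'


/-- The Jost solution from `+∞` never vanishes. -/
theorem jost_plus_ne_zero (c : ℝ → ℝ) (hmeas : Measurable c)
    (h1 : HypH1 c) (h2 : HypH2 c) (k : ℂ) (hk : 0 ≤ k.im)
    (u₁ : ℝ → ℂ) (hu : IsJostPlus c k u₁) :
    ∀ x : ℝ, u₁ x ≠ 0 := by
  obtain ⟨⟨hC1, hODE⟩, hlim⟩ := hu
  exact jost_aux c hmeas h1 k hk u₁ hC1 hODE hlim
end
end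

section
/- Let c satisfy [H1] and [H2], let k ∈ ℂ with Im k > 0, and let u₁ be the Jost solution from +∞ at k (which is nowhere vanishing). Then for every x ∈ ℝ, Re( u₁'(x) / (i k u₁(x)) ) = (Im k / (|k|² |u₁(x)|²)) · ∫ₓ^∞ ( |k|² |u₁(y)|² / c(y)² + |u₁'(y)|² ) dy; in particular Re( u₁'(x)/(i k u₁(x)) ) > 0. -/
open MeasureTheory Filter Topology

noncomputable section

/- ### Auxiliary lemmas -/

lemma conj_mul_self' (z : ℂ) : (starRingEnd ℂ) z * z = ((‖z‖ ^ 2 : ℝ) : ℂ) := by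
  rw [← Complex.normSq_eq_conj_mul_self, Complex.normSq_eq_norm_sq]

lemma im_ofReal_mul' (a : ℝ) (z : ℂ) : ((a : ℂ) * z).im = a * z.im := by
  simp [Complex.mul_im]

lemma im_div_ofReal' (z : ℂ) (a : ℝ) : (z / (a : ℂ)).im = z.im / a := by
  rcases eq_or_ne a 0 with h | h
  · simp [h]
  · rw [Complex.div_im]
    simp only [Complex.normSq_ofReal, Complex.ofReal_re, Complex.ofReal_im]
    field_simp
    ring

lemma im_aux' (k zu zv : ℂ) (r : ℝ) :
    ((starRingEnd ℂ) k * ((starRingEnd ℂ) zv * zv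
        + (starRingEnd ℂ) zu * (-(k ^ 2 / ((r : ℂ) ^ 2)) * zu))).im
      = -k.im * (‖k‖ ^ 2 * ‖zu‖ ^ 2 / r ^ 2 + ‖zv‖ ^ 2) := by
  have h4 : (starRingEnd ℂ) k * ((starRingEnd ℂ) zv * zv
        + (starRingEnd ℂ) zu * (-(k ^ 2 / ((r : ℂ) ^ 2)) * zu))
      = ((‖zv‖ ^ 2 : ℝ) : ℂ) * (starRingEnd ℂ) k
        - ((((‖zu‖ ^ 2 * ‖k‖ ^ 2 : ℝ)) : ℂ) * k) / (((r ^ 2 : ℝ)) : ℂ) := by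
    have e1 : (starRingEnd ℂ) k * ((starRingEnd ℂ) zv * zv
        + (starRingEnd ℂ) zu * (-(k ^ 2 / ((r : ℂ) ^ 2)) * zu))
      = ((starRingEnd ℂ) zv * zv) * (starRingEnd ℂ) k
        - (((starRingEnd ℂ) zu * zu) * (((starRingEnd ℂ) k * k) * k)) / ((r : ℂ) ^ 2) := by
      ring
    rw [e1, conj_mul_self' zv, conj_mul_self' zu, conj_mul_self' k]
    push_cast
    ring
  rw [h4, Complex.sub_im, im_ofReal_mul', mul_div_assoc, im_ofReal_mul', im_div_ofReal',
    Complex.conj_im]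
  ring

lemma re_mul_ofReal' (z : ℂ) (a : ℝ) : (z * (a : ℂ)).re = z.re * a := by
  simp [Complex.mul_re]

lemma re_div_aux' (k ux vx : ℂ) :
    (vx / (Complex.I * k * ux)).re
      = ((starRingEnd ℂ) k * ((starRingEnd ℂ) ux * vx)).im / (‖k‖ ^ 2 * ‖ux‖ ^ 2) := by
  have hnormSq : Complex.normSq (Complex.I * k * ux) = ‖k‖ ^ 2 * ‖ux‖ ^ 2 := by
    rw [Complex.normSq_mul, Complex.normSq_mul, Complex.normSq_I, one_mul,
      Complex.normSq_eq_norm_sq, Complex.normSq_eq_norm_sq]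
  rw [div_eq_mul_inv, Complex.inv_def, hnormSq]
  have e1 : vx * ((starRingEnd ℂ) (Complex.I * k * ux) * ((((‖k‖ ^ 2 * ‖ux‖ ^ 2)⁻¹ : ℝ)) : ℂ))
      = -(Complex.I * ((starRingEnd ℂ) k * ((starRingEnd ℂ) ux * vx)))
          * ((((‖k‖ ^ 2 * ‖ux‖ ^ 2)⁻¹ : ℝ)) : ℂ) := by
    rw [map_mul, map_mul, Complex.conj_I]
    ring
  rw [e1, re_mul_ofReal', Complex.neg_re, Complex.I_mul_re, neg_neg, div_eq_mul_inv]

lemma fubini_ibp' (v f : ℝ → ℂ) (hv : Continuous v) (hf : Measurable f)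
    (a b : ℝ) (hfi : IntegrableOn f (Set.Ioc a b)) :
    ∫ y in Set.Ioc a b, (starRingEnd ℂ) (v y) * (∫ t in Set.Ioc a y, f t)
      = ∫ t in Set.Ioc a b, (∫ y in Set.Ioc t b, (starRingEnd ℂ) (v y)) * f t := by
  set ν := volume.restrict (Set.Ioc a b) with hν
  set F : ℝ → ℝ → ℂ := fun y t => if t ≤ y then (starRingEnd ℂ) (v y) * f t else 0 with hF
  obtain ⟨Cv, hCv⟩ : ∃ C, ∀ y ∈ Set.Icc a b, ‖(starRingEnd ℂ) (v y)‖ ≤ C :=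
    (isCompact_Icc.exists_bound_of_continuousOn (Continuous.continuousOn (by continuity)))
  have hmeasF : Measurable (Function.uncurry F) := by
    apply Measurable.ite (measurableSet_le measurable_snd measurable_fst)
    · exact ((Complex.continuous_conj.comp hv).measurable.comp measurable_fst).mul
        (hf.comp measurable_snd)
    · exact measurable_const
  have hprod : ν.prod ν = (volume.prod volume).restrict ((Set.Ioc a b) ×ˢ (Set.Ioc a b)) := by
    rw [hν, Measure.prod_restrict]
  have hintF : Integrable (Function.uncurry F) (ν.prod ν) := by
    refine Integrable.mono' (g := fun p : ℝ × ℝ => Cv * ‖f p.2‖) ?_ hmeasF.aestronglyMeasurable ?_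
    · exact (integrable_const Cv).mul_prod hfi.norm
    · rw [hprod]
      refine (ae_restrict_iff' (measurableSet_Ioc.prod measurableSet_Ioc)).2 ?_
      filter_upwards with p hp
      rcases hp with ⟨hp1, hp2⟩
      simp only [Function.uncurry, hF]
      split
      · rw [norm_mul]
        exact mul_le_mul (hCv _ (Set.Ioc_subset_Icc_self hp1)) le_rfl (norm_nonneg _)
          (le_trans (norm_nonneg _) (hCv _ (Set.Ioc_subset_Icc_self hp1)))
      · rw [norm_zero]
        exact mul_nonneg (le_trans (norm_nonneg _) (hCv _ (Set.Ioc_subset_Icc_self hp1)))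
          (norm_nonneg _)
  have hswap : ∫ y, ∫ t, F y t ∂ν ∂ν = ∫ t, ∫ y, F y t ∂ν ∂ν :=
    integral_integral_swap hintF
  have hL : ∫ y, ∫ t, F y t ∂ν ∂ν
      = ∫ y in Set.Ioc a b, (starRingEnd ℂ) (v y) * (∫ t in Set.Ioc a y, f t) := by
    refine setIntegral_congr_ae measurableSet_Ioc ?_
    filter_upwards with y hy
    have : ∀ t, F y t = Set.indicator (Set.Iic y) (fun t => (starRingEnd ℂ) (v y) * f t) t := by
      intro t
      simp only [hF, Set.indicator, Set.mem_Iic]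
    simp_rw [this]
    rw [setIntegral_indicator measurableSet_Iic, Set.Ioc_inter_Iic, min_eq_right hy.2,
      integral_const_mul]
  have hR : ∫ t, ∫ y, F y t ∂ν ∂ν
      = ∫ t in Set.Ioc a b, (∫ y in Set.Ioc t b, (starRingEnd ℂ) (v y)) * f t := by
    refine setIntegral_congr_ae measurableSet_Ioc ?_
    filter_upwards with t ht
    have : ∀ y, F y t = Set.indicator (Set.Ici t) (fun y => (starRingEnd ℂ) (v y) * f t) y := by
      intro y
      simp only [hF, Set.indicator, Set.mem_Ici]
    simp_rw [this]
    rw [setIntegral_indicator measurableSet_Ici]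
    have hset : Set.Ioc a b ∩ Set.Ici t = Set.Icc t b := by
      ext z; simp only [Set.mem_inter_iff, Set.mem_Ioc, Set.mem_Ici, Set.mem_Icc]
      constructor
      · rintro ⟨⟨_, h2⟩, h3⟩; exact ⟨h3, h2⟩
      · rintro ⟨h1, h2⟩; exact ⟨⟨lt_of_lt_of_le ht.1 h1, h2⟩, h1⟩
    rw [hset, integral_Icc_eq_integral_Ioc, integral_mul_const]
  rw [← hL, hswap, hR]

lemma integrableOn_conj_mul' (u f : ℝ → ℂ) (hu : Continuous u) (hf : Measurable f)
    (a b : ℝ) (hfi : IntegrableOn f (Set.Ioc a b)) :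
    IntegrableOn (fun t => (starRingEnd ℂ) (u t) * f t) (Set.Ioc a b) := by
  obtain ⟨Cu, hCu⟩ : ∃ C, ∀ y ∈ Set.Icc a b, ‖(starRingEnd ℂ) (u y)‖ ≤ C :=
    (isCompact_Icc.exists_bound_of_continuousOn (Continuous.continuousOn (by continuity)))
  refine Integrable.bdd_mul (c := Cu) hfi
    ((Complex.continuous_conj.comp hu).aestronglyMeasurable.restrict) ?_
  refine (ae_restrict_iff' measurableSet_Ioc).2 ?_
  filter_upwards with t ht
  exact hCu t (Set.Ioc_subset_Icc_self ht)

lemma ibp_identity' (u v f : ℝ → ℂ) (hu' : ∀ x, HasDerivAt u (v x) x) (hv : Continuous v)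
    (hf : Measurable f) (hint : ∀ a b : ℝ, v b = v a + ∫ x in a..b, f x)
    (a b : ℝ) (hab : a ≤ b) (hfi : IntegrableOn f (Set.Ioc a b)) :
    (starRingEnd ℂ) (u b) * v b - (starRingEnd ℂ) (u a) * v a
      = ∫ y in Set.Ioc a b, ((starRingEnd ℂ) (v y) * v y + (starRingEnd ℂ) (u y) * f y) := by
  have hu_cont : Continuous u := by
    rw [continuous_iff_continuousAt]; exact fun x => (hu' x).continuousAt
  have hprim : ∀ y, a ≤ y → ∫ t in Set.Ioc a y, f t = v y - v a := by
    intro y hy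
    rw [← intervalIntegral.integral_of_le hy]
    rw [hint a y]; ring
  have hftc : ∀ t, t ≤ b → ∫ y in Set.Ioc t b, v y = u b - u t := by
    intro t ht
    rw [← intervalIntegral.integral_of_le ht]
    exact intervalIntegral.integral_eq_sub_of_hasDerivAt (fun y _ => hu' y)
      (hv.intervalIntegrable t b)
  have key := fubini_ibp' v f hv hf a b hfi
  have keyL : ∫ y in Set.Ioc a b, (starRingEnd ℂ) (v y) * (∫ t in Set.Ioc a y, f t)
      = ∫ y in Set.Ioc a b, (starRingEnd ℂ) (v y) * (v y - v a) := by
    refine setIntegral_congr_ae measurableSet_Ioc ?_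
    filter_upwards with y hy
    rw [hprim y hy.1.le]
  have keyR : ∫ t in Set.Ioc a b, (∫ y in Set.Ioc t b, (starRingEnd ℂ) (v y)) * f t
      = ∫ t in Set.Ioc a b, ((starRingEnd ℂ) (u b) - (starRingEnd ℂ) (u t)) * f t := by
    refine setIntegral_congr_ae measurableSet_Ioc ?_
    filter_upwards with t ht
    rw [integral_conj, hftc t ht.2, map_sub]
  rw [keyL, keyR] at key
  have Iuf : IntegrableOn (fun t => (starRingEnd ℂ) (u t) * f t) (Set.Ioc a b) :=
    integrableOn_conj_mul' u f hu_cont hf a b hfi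
  have Iubf : IntegrableOn (fun t => (starRingEnd ℂ) (u b) * f t) (Set.Ioc a b) :=
    hfi.const_mul _
  have Ivv : IntegrableOn (fun y => (starRingEnd ℂ) (v y) * v y) (Set.Ioc a b) :=
    (Continuous.mul (Complex.continuous_conj.comp hv) hv).integrableOn_Ioc
  have Ivva : IntegrableOn (fun y => (starRingEnd ℂ) (v y) * v a) (Set.Ioc a b) :=
    ((Complex.continuous_conj.comp hv).mul continuous_const).integrableOn_Ioc
  have Ivvs : IntegrableOn (fun y => (starRingEnd ℂ) (v y) * (v y - v a)) (Set.Ioc a b) :=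
    ((Complex.continuous_conj.comp hv).mul (hv.sub continuous_const)).integrableOn_Ioc
  have split1 : ∫ y in Set.Ioc a b, ((starRingEnd ℂ) (v y) * v y + (starRingEnd ℂ) (u y) * f y)
      = (∫ y in Set.Ioc a b, (starRingEnd ℂ) (v y) * v y)
        + ∫ y in Set.Ioc a b, (starRingEnd ℂ) (u y) * f y := integral_add Ivv Iuf
  have split2 : ∫ y in Set.Ioc a b, (starRingEnd ℂ) (v y) * v y
      = (∫ y in Set.Ioc a b, (starRingEnd ℂ) (v y) * (v y - v a))
        + ∫ y in Set.Ioc a b, (starRingEnd ℂ) (v y) * v a := by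
    rw [← integral_add Ivvs Ivva]
    refine setIntegral_congr_ae measurableSet_Ioc ?_
    filter_upwards with y _
    ring
  have eva : ∫ y in Set.Ioc a b, (starRingEnd ℂ) (v y) * v a
      = ((starRingEnd ℂ) (u b) - (starRingEnd ℂ) (u a)) * v a := by
    rw [integral_mul_const, integral_conj, hftc a hab, map_sub]
  have evb : ∫ t in Set.Ioc a b, ((starRingEnd ℂ) (u b) - (starRingEnd ℂ) (u t)) * f t
      = (starRingEnd ℂ) (u b) * (v b - v a)
        - ∫ t in Set.Ioc a b, (starRingEnd ℂ) (u t) * f t := by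
    have h : ∫ t in Set.Ioc a b, ((starRingEnd ℂ) (u b) - (starRingEnd ℂ) (u t)) * f t
        = (∫ t in Set.Ioc a b, (starRingEnd ℂ) (u b) * f t)
          - ∫ t in Set.Ioc a b, (starRingEnd ℂ) (u t) * f t := by
      rw [← integral_sub Iubf Iuf]
      refine setIntegral_congr_ae measurableSet_Ioc ?_
      filter_upwards with t _
      ring
    rw [h, integral_const_mul, hprim b hab]
  rw [split1, split2, eva, key, evb]
  ring

lemma integral_exp_Ioi' (τ m : ℝ) (hτ : 0 < τ) :
    ∫ t in Set.Ioi m, Real.exp (-τ * t) = Real.exp (-τ * m) / τ := by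
  have hderiv : ∀ t ∈ Set.Ici m, HasDerivAt (fun s => -(Real.exp (-τ * s) / τ))
      (Real.exp (-τ * t)) t := by
    intro t _
    have h1 : HasDerivAt (fun s : ℝ => -τ * s) (-τ) t := by
      simpa using (hasDerivAt_id t).const_mul (-τ)
    have h2 := (Real.hasDerivAt_exp (-τ * t)).comp t h1
    have h3 := (h2.div_const τ).neg
    have h4 : HasDerivAt (fun s => -(Real.exp (-τ * s) / τ)) (-(Real.exp (-τ * t) * -τ / τ)) t := h3
    convert h4 using 1
    field_simp
  have htend : Tendsto (fun s => -(Real.exp (-τ * s) / τ)) atTop (𝓝 0) := by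
    have h0 : Tendsto (fun s : ℝ => Real.exp (-τ * s)) atTop (𝓝 0) :=
      Real.tendsto_exp_atBot.comp (tendsto_id.const_mul_atTop_of_neg (neg_lt_zero.2 hτ))
    have := (h0.div_const τ).neg
    simpa using this
  have := integral_Ioi_of_hasDerivAt_of_tendsto' hderiv (exp_neg_integrableOn_Ioi m hτ) htend
  rw [this]
  ring

lemma integrableOn_Ioi_of_expbound' (h : ℝ → ℝ) (hc : Continuous h) {A τ : ℝ} (x₀ : ℝ)
    (hτ : 0 < τ) (hb : ∀ y ≥ x₀, |h y| ≤ A * Real.exp (-τ * y)) (x : ℝ) :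
    IntegrableOn h (Set.Ioi x) := by
  have h1 : IntegrableOn h (Set.Ioc x (max x x₀)) := hc.integrableOn_Ioc
  have h2 : IntegrableOn h (Set.Ioi (max x x₀)) := by
    refine Integrable.mono' (g := fun y => A * Real.exp (-τ * y))
      ((exp_neg_integrableOn_Ioi _ hτ).const_mul A) hc.aestronglyMeasurable.restrict ?_
    refine (ae_restrict_iff' measurableSet_Ioi).2 ?_
    filter_upwards with y hy
    exact hb y (le_of_lt (lt_of_le_of_lt (le_max_right x x₀) hy))
  have := h1.union h2
  rwa [Set.Ioc_union_Ioi_eq_Ioi (le_max_left x x₀)] at this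

set_option maxHeartbeats 1000000 in
/-- For `Im k > 0`, the integral formula for `Re(u₁'/(ik u₁))`, and its positivity. -/
theorem re_w_integral_formula (c : ℝ → ℝ) (hmeas : Measurable c)
    (h1 : HypH1 c) (h2 : HypH2 c) (k : ℂ) (hk : 0 < k.im)
    (u₁ : ℝ → ℂ) (hu : IsJostPlus c k u₁) (hne : ∀ x : ℝ, u₁ x ≠ 0) :
    ∀ x : ℝ,
      ((deriv u₁ x / (Complex.I * k * u₁ x)).re =
        k.im / (‖k‖ ^ 2 * ‖u₁ x‖ ^ 2) *
          ∫ y in Set.Ioi x,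
            (‖k‖ ^ 2 * ‖u₁ y‖ ^ 2 / (c y) ^ 2 + ‖deriv u₁ y‖ ^ 2)) ∧
      0 < (deriv u₁ x / (Complex.I * k * u₁ x)).re := by
  obtain ⟨c₀, hc₀, cM, hcM, hae⟩ := h1
  obtain ⟨⟨hC1, hint⟩, hlim⟩ := hu
  have hk0 : k ≠ 0 := fun h => by simp [h] at hk
  have hu'_ : ∀ x, HasDerivAt u₁ (deriv u₁ x) x :=
    fun x => ((hC1.differentiable one_ne_zero) x).hasDerivAt
  have hv_cont : Continuous (deriv u₁) := hC1.continuous_deriv le_rfl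
  have hu_cont : Continuous u₁ := hC1.continuous
  set f : ℝ → ℂ := fun y => -(k ^ 2 / ((c y : ℂ) ^ 2)) * u₁ y with hf_def
  have hf_meas : Measurable f := by
    apply Measurable.mul
    · apply Measurable.neg
      exact (measurable_const.div ((Complex.measurable_ofReal.comp hmeas).pow_const 2))
    · exact hu_cont.measurable
  -- norm of the complex exponential
  have hexp_norm : ∀ y : ℝ, ‖Complex.exp (Complex.I * k * (y : ℂ))‖ = Real.exp (-k.im * y) := by
    intro y
    rw [Complex.norm_exp]
    congr 1
    simp [Complex.mul_re, Complex.mul_im]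
  -- exponential bound on u₁
  obtain ⟨x₀, hx₀⟩ : ∃ x₀ : ℝ, ∀ y ≥ x₀, ‖u₁ y‖ ≤ 2 * Real.exp (-k.im * y) := by
    have h2 : ∀ᶠ y : ℝ in atTop, ‖Complex.exp (-(Complex.I * k * (y : ℂ))) * u₁ y‖ < 2 := by
      have hn := hlim.norm
      simp only [norm_one] at hn
      exact hn.eventually_lt_const (by norm_num : (1:ℝ) < 2)
    obtain ⟨x₀, hx₀'⟩ := eventually_atTop.1 h2
    refine ⟨x₀, fun y hy => ?_⟩
    have hrec : Complex.exp (Complex.I * k * (y : ℂ))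
        * (Complex.exp (-(Complex.I * k * (y : ℂ))) * u₁ y) = u₁ y := by
      rw [← mul_assoc, ← Complex.exp_add]
      simp
    calc ‖u₁ y‖ = ‖Complex.exp (Complex.I * k * (y : ℂ))‖
          * ‖Complex.exp (-(Complex.I * k * (y : ℂ))) * u₁ y‖ := by rw [← norm_mul, hrec]
      _ ≤ Real.exp (-k.im * y) * 2 := by
          rw [hexp_norm y]
          exact mul_le_mul_of_nonneg_left (le_of_lt (hx₀' y hy)) (Real.exp_nonneg _)
      _ = 2 * Real.exp (-k.im * y) := by ring
  -- a.e. bound on f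
  have hf_bound : ∀ᵐ y : ℝ, ‖f y‖ ≤ (‖k‖ ^ 2 / c₀ ^ 2) * ‖u₁ y‖ := by
    filter_upwards [hae] with y hy
    have hcy : 0 < c y := lt_trans hc₀ hy.1
    have heq : ‖f y‖ = (‖k‖ ^ 2 / (c y) ^ 2) * ‖u₁ y‖ := by
      rw [hf_def]
      simp only [norm_mul, norm_neg, norm_div, norm_pow, Complex.norm_real, Real.norm_eq_abs]
      rw [abs_of_pos hcy]
    rw [heq]
    refine mul_le_mul_of_nonneg_right ?_ (norm_nonneg _)
    gcongr
    exact hy.1.le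
  have hfi_Ioc : ∀ a b : ℝ, IntegrableOn f (Set.Ioc a b) := by
    intro a b
    refine Integrable.mono' (g := fun y => (‖k‖ ^ 2 / c₀ ^ 2) * ‖u₁ y‖)
      ((show Continuous (fun y => (‖k‖ ^ 2 / c₀ ^ 2) * ‖u₁ y‖) from continuous_const.mul hu_cont.norm).integrableOn_Ioc) hf_meas.aestronglyMeasurable.restrict ?_
    exact ae_restrict_of_ae hf_bound
  have hfi_Ioi : ∀ x : ℝ, IntegrableOn f (Set.Ioi x) := by
    intro x
    have h1 : IntegrableOn f (Set.Ioc x (max x x₀)) := hfi_Ioc _ _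
    have h2 : IntegrableOn f (Set.Ioi (max x x₀)) := by
      refine Integrable.mono' (g := fun y => (‖k‖ ^ 2 / c₀ ^ 2 * 2) * Real.exp (-k.im * y))
        ((exp_neg_integrableOn_Ioi _ hk).const_mul _)
        hf_meas.aestronglyMeasurable.restrict
        ((ae_restrict_iff' measurableSet_Ioi).2 ?_)
      filter_upwards [hf_bound] with y hy hymem
      calc ‖f y‖ ≤ (‖k‖ ^ 2 / c₀ ^ 2) * ‖u₁ y‖ := hy
        _ ≤ (‖k‖ ^ 2 / c₀ ^ 2) * (2 * Real.exp (-k.im * y)) := by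
            refine mul_le_mul_of_nonneg_left (hx₀ y ?_) (by positivity)
            exact (le_max_right x x₀).trans (le_of_lt hymem)
        _ = (‖k‖ ^ 2 / c₀ ^ 2 * 2) * Real.exp (-k.im * y) := by ring
    have := h1.union h2
    rwa [Set.Ioc_union_Ioi_eq_Ioi (le_max_left x x₀)] at this
  -- the derivative tends to 0 at +∞
  have hexp0 : Tendsto (fun y : ℝ => Real.exp (-k.im * y)) atTop (𝓝 0) :=
    Real.tendsto_exp_atBot.comp (tendsto_id.const_mul_atTop_of_neg (neg_lt_zero.2 hk))
  have h2exp : Tendsto (fun y : ℝ => 2 * Real.exp (-k.im * y)) atTop (𝓝 0) := by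
    simpa using hexp0.const_mul 2
  have hu0 : Tendsto u₁ atTop (𝓝 0) := by
    apply squeeze_zero_norm' _ h2exp
    filter_upwards [eventually_ge_atTop x₀] with y hy
    exact hx₀ y hy
  have hv0 : Tendsto (deriv u₁) atTop (𝓝 0) := by
    set L : ℂ := deriv u₁ x₀ + ∫ t in Set.Ioi x₀, f t with hL_def
    have hvL : Tendsto (deriv u₁) atTop (𝓝 L) := by
      have h := intervalIntegral_tendsto_integral_Ioi x₀ (hfi_Ioi x₀) tendsto_id
      exact (h.const_add (deriv u₁ x₀)).congr fun b => (hint x₀ b).symm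
    have hL0 : L = 0 := by
      have key : ∀ ε : ℝ, 0 < ε → ‖L‖ ≤ 3 * ε := by
        intro ε hε
        obtain ⟨N₁, hN₁⟩ := (Metric.tendsto_atTop.1 hvL) ε hε
        obtain ⟨N₂, hN₂⟩ := (Metric.tendsto_atTop.1 hu0) ε hε
        set B := max N₁ N₂ with hB_def
        have hB1 : ∀ y, B ≤ y → ‖deriv u₁ y - L‖ ≤ ε := by
          intro y hy
          have := hN₁ y ((le_max_left _ _).trans hy)
          rw [dist_eq_norm] at this
          exact this.le
        have hB2 : ∀ y, B ≤ y → ‖u₁ y‖ ≤ ε := by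
          intro y hy
          have h9 := hN₂ y ((le_max_right _ _).trans hy)
          rw [dist_zero_right] at h9
          exact h9.le
        have hftc : ∫ y in B..(B + 1), deriv u₁ y = u₁ (B + 1) - u₁ B :=
          intervalIntegral.integral_eq_sub_of_hasDerivAt (fun y _ => hu'_ y)
            (hv_cont.intervalIntegrable _ _)
        have hsplit : ∫ y in B..(B + 1), (deriv u₁ y - L)
            = (u₁ (B + 1) - u₁ B) - ((B + 1 - B : ℝ) : ℝ) • L := by
          rw [intervalIntegral.integral_sub (hv_cont.intervalIntegrable _ _)
            intervalIntegrable_const, hftc, intervalIntegral.integral_const]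
        have hbound : ‖∫ y in B..(B + 1), (deriv u₁ y - L)‖ ≤ ε * |(B + 1) - B| := by
          apply intervalIntegral.norm_integral_le_of_norm_le_const
          intro y hy
          rw [Set.uIoc_of_le (by linarith : B ≤ B + 1)] at hy
          exact hB1 y hy.1.le
        have habs : |(B + 1) - B| = 1 := by
          rw [add_sub_cancel_left, abs_one]
        have hLrw : L = (u₁ (B + 1) - u₁ B) - ∫ y in B..(B + 1), (deriv u₁ y - L) := by
          rw [hsplit]
          have : ((B + 1 - B : ℝ) : ℝ) • L = L := by
            rw [add_sub_cancel_left, one_smul]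
          rw [this]
          ring
        calc ‖L‖ = ‖(u₁ (B + 1) - u₁ B) - ∫ y in B..(B + 1), (deriv u₁ y - L)‖ := by
              rw [← hLrw]
          _ ≤ ‖u₁ (B + 1) - u₁ B‖ + ‖∫ y in B..(B + 1), (deriv u₁ y - L)‖ := norm_sub_le _ _
          _ ≤ (‖u₁ (B + 1)‖ + ‖u₁ B‖) + ε * |(B + 1) - B| :=
              add_le_add (norm_sub_le _ _) hbound
          _ ≤ (ε + ε) + ε * 1 := by
              rw [habs]
              exact add_le_add (add_le_add (hB2 (B + 1) (by linarith)) (hB2 B le_rfl)) le_rfl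
          _ = 3 * ε := by ring
      have hn : ‖L‖ ≤ 0 := by
        by_contra hcon
        push_neg at hcon
        have := key (‖L‖ / 4) (by linarith)
        linarith
      exact norm_le_zero_iff.1 hn
    exact hL0 ▸ hvL
  -- representation of the derivative as a tail integral, and exponential bound
  have hvInt : ∀ y : ℝ, deriv u₁ y = -∫ t in Set.Ioi y, f t := by
    intro y
    have h := intervalIntegral_tendsto_integral_Ioi y (hfi_Ioi y) tendsto_id
    have h3 : Tendsto (deriv u₁) atTop (𝓝 (deriv u₁ y + ∫ t in Set.Ioi y, f t)) :=
      (h.const_add (deriv u₁ y)).congr fun b => (hint y b).symm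
    have h4 := tendsto_nhds_unique h3 hv0
    exact eq_neg_of_add_eq_zero_left h4
  have hv_bound : ∀ y ≥ x₀, ‖deriv u₁ y‖
      ≤ (‖k‖ ^ 2 / c₀ ^ 2 * 2 / k.im) * Real.exp (-k.im * y) := by
    intro y hy
    rw [hvInt y, norm_neg]
    calc ‖∫ t in Set.Ioi y, f t‖ ≤ ∫ t in Set.Ioi y, ‖f t‖ := norm_integral_le_integral_norm _
      _ ≤ ∫ t in Set.Ioi y, (‖k‖ ^ 2 / c₀ ^ 2 * 2) * Real.exp (-k.im * t) := by
          refine integral_mono_ae (hfi_Ioi y).norm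
            ((exp_neg_integrableOn_Ioi _ hk).const_mul _)
            ((ae_restrict_iff' measurableSet_Ioi).2 ?_)
          filter_upwards [hf_bound] with t ht htmem
          calc ‖f t‖ ≤ (‖k‖ ^ 2 / c₀ ^ 2) * ‖u₁ t‖ := ht
            _ ≤ (‖k‖ ^ 2 / c₀ ^ 2) * (2 * Real.exp (-k.im * t)) := by
                refine mul_le_mul_of_nonneg_left (hx₀ t (hy.trans (le_of_lt htmem)))
                  (by positivity)
            _ = (‖k‖ ^ 2 / c₀ ^ 2 * 2) * Real.exp (-k.im * t) := by ring
      _ = (‖k‖ ^ 2 / c₀ ^ 2 * 2) * (Real.exp (-k.im * y) / k.im) := by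
          rw [integral_const_mul, integral_exp_Ioi' k.im y hk]
      _ = (‖k‖ ^ 2 / c₀ ^ 2 * 2 / k.im) * Real.exp (-k.im * y) := by ring
  -- the real integrand
  set P : ℝ → ℝ := fun y => ‖k‖ ^ 2 * ‖u₁ y‖ ^ 2 / (c y) ^ 2 + ‖deriv u₁ y‖ ^ 2 with hP_def
  have hP_nonneg : ∀ y, 0 ≤ P y := by
    intro y
    apply add_nonneg
    · apply div_nonneg (by positivity) (sq_nonneg _)
    · positivity
  have hP_meas : Measurable P := by
    apply Measurable.add
    · exact (measurable_const.mul (hu_cont.measurable.norm.pow_const 2)).div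
        (hmeas.pow_const 2)
    · exact (hv_cont.measurable.norm.pow_const 2)
  have hexp_sq : ∀ (A : ℝ) (y : ℝ), (A * Real.exp (-k.im * y)) ^ 2
      = A ^ 2 * Real.exp (-(2 * k.im) * y) := by
    intro A y
    have e2 : Real.exp (-k.im * y) * Real.exp (-k.im * y) = Real.exp (-(2 * k.im) * y) := by
      rw [← Real.exp_add]
      congr 1
      ring
    calc (A * Real.exp (-k.im * y)) ^ 2
        = A ^ 2 * (Real.exp (-k.im * y) * Real.exp (-k.im * y)) := by ring
      _ = A ^ 2 * Real.exp (-(2 * k.im) * y) := by rw [e2]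
  have hu2 : ∀ x : ℝ, IntegrableOn (fun y => ‖u₁ y‖ ^ 2) (Set.Ioi x) := by
    intro x
    refine integrableOn_Ioi_of_expbound' _ (show Continuous (fun y => ‖u₁ y‖ ^ 2) from hu_cont.norm.pow 2) x₀ (A := 2 ^ 2)
      (τ := 2 * k.im) (by linarith) ?_ x
    intro y hy
    rw [abs_of_nonneg (by positivity : (0:ℝ) ≤ ‖u₁ y‖ ^ 2)]
    calc ‖u₁ y‖ ^ 2 ≤ (2 * Real.exp (-k.im * y)) ^ 2 :=
        pow_le_pow_left₀ (norm_nonneg _) (hx₀ y hy) 2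
      _ = 2 ^ 2 * Real.exp (-(2 * k.im) * y) := hexp_sq 2 y
  have hv2 : ∀ x : ℝ, IntegrableOn (fun y => ‖deriv u₁ y‖ ^ 2) (Set.Ioi x) := by
    intro x
    refine integrableOn_Ioi_of_expbound' _ (show Continuous (fun y => ‖deriv u₁ y‖ ^ 2) from hv_cont.norm.pow 2) x₀
      (A := (‖k‖ ^ 2 / c₀ ^ 2 * 2 / k.im) ^ 2) (τ := 2 * k.im) (by linarith) ?_ x
    intro y hy
    rw [abs_of_nonneg (by positivity : (0:ℝ) ≤ ‖deriv u₁ y‖ ^ 2)]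
    calc ‖deriv u₁ y‖ ^ 2 ≤ ((‖k‖ ^ 2 / c₀ ^ 2 * 2 / k.im) * Real.exp (-k.im * y)) ^ 2 :=
        pow_le_pow_left₀ (norm_nonneg _) (hv_bound y hy) 2
      _ = _ := hexp_sq _ y
  have hP_int : ∀ x : ℝ, IntegrableOn P (Set.Ioi x) := by
    intro x
    have hg1 : IntegrableOn (fun y => (‖k‖ ^ 2 / c₀ ^ 2) * ‖u₁ y‖ ^ 2) (Set.Ioi x) :=
      (hu2 x).const_mul _
    have hg2 : IntegrableOn
        (fun y => (‖k‖ ^ 2 / c₀ ^ 2) * ‖u₁ y‖ ^ 2 + ‖deriv u₁ y‖ ^ 2) (Set.Ioi x) :=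
      hg1.add (hv2 x)
    refine Integrable.mono'
      (g := fun y => (‖k‖ ^ 2 / c₀ ^ 2) * ‖u₁ y‖ ^ 2 + ‖deriv u₁ y‖ ^ 2)
      hg2 hP_meas.aestronglyMeasurable.restrict
      ((ae_restrict_iff' measurableSet_Ioi).2 ?_)
    filter_upwards [hae] with y hy _
    rw [Real.norm_eq_abs, abs_of_nonneg (hP_nonneg y)]
    have h5 : ‖k‖ ^ 2 * ‖u₁ y‖ ^ 2 / (c y) ^ 2 ≤ ‖k‖ ^ 2 * ‖u₁ y‖ ^ 2 / c₀ ^ 2 := by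
      gcongr
      exact hy.1.le
    calc P y ≤ ‖k‖ ^ 2 * ‖u₁ y‖ ^ 2 / c₀ ^ 2 + ‖deriv u₁ y‖ ^ 2 := add_le_add h5 le_rfl
      _ = (‖k‖ ^ 2 / c₀ ^ 2) * ‖u₁ y‖ ^ 2 + ‖deriv u₁ y‖ ^ 2 := by ring
  -- the main identity
  have hG : ∀ x : ℝ, ((starRingEnd ℂ) k * ((starRingEnd ℂ) (u₁ x) * deriv u₁ x)).im
      = k.im * ∫ y in Set.Ioi x, P y := by
    intro x
    set G : ℝ → ℝ := fun b => ((starRingEnd ℂ) k * ((starRingEnd ℂ) (u₁ b) * deriv u₁ b)).im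
      with hG_def
    have hGb : ∀ b, x ≤ b → G b = G x - k.im * ∫ y in Set.Ioc x b, P y := by
      intro b hxb
      have ibp := ibp_identity' u₁ (deriv u₁) f hu'_ hv_cont hf_meas hint x b hxb (hfi_Ioc x b)
      have Hsum : IntegrableOn (fun y => (starRingEnd ℂ) (deriv u₁ y) * deriv u₁ y
          + (starRingEnd ℂ) (u₁ y) * f y) (Set.Ioc x b) :=
        ((Continuous.mul (Complex.continuous_conj.comp hv_cont) hv_cont).integrableOn_Ioc).add
          (integrableOn_conj_mul' u₁ f hu_cont hf_meas x b (hfi_Ioc x b))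
      have e0 : G b - G x = ((starRingEnd ℂ) k * ((starRingEnd ℂ) (u₁ b) * deriv u₁ b)
          - (starRingEnd ℂ) k * ((starRingEnd ℂ) (u₁ x) * deriv u₁ x)).im :=
        (Complex.sub_im _ _).symm
      have e1 : (starRingEnd ℂ) k * ((starRingEnd ℂ) (u₁ b) * deriv u₁ b)
          - (starRingEnd ℂ) k * ((starRingEnd ℂ) (u₁ x) * deriv u₁ x)
          = (starRingEnd ℂ) k * ∫ y in Set.Ioc x b, ((starRingEnd ℂ) (deriv u₁ y) * deriv u₁ y
              + (starRingEnd ℂ) (u₁ y) * f y) := by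
        rw [← mul_sub, ibp]
      have e3 : ((starRingEnd ℂ) k * ∫ y in Set.Ioc x b,
            ((starRingEnd ℂ) (deriv u₁ y) * deriv u₁ y + (starRingEnd ℂ) (u₁ y) * f y)).im
          = ∫ y in Set.Ioc x b, ((starRingEnd ℂ) k * ((starRingEnd ℂ) (deriv u₁ y) * deriv u₁ y
              + (starRingEnd ℂ) (u₁ y) * f y)).im := by
        rw [← integral_const_mul]
        exact (integral_im (Hsum.const_mul _)).symm
      have e4 : ∫ y in Set.Ioc x b, ((starRingEnd ℂ) k
            * ((starRingEnd ℂ) (deriv u₁ y) * deriv u₁ y + (starRingEnd ℂ) (u₁ y) * f y)).im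
          = ∫ y in Set.Ioc x b, -k.im * P y := by
        refine setIntegral_congr_ae measurableSet_Ioc ?_
        filter_upwards with y _
        exact im_aux' k (u₁ y) (deriv u₁ y) (c y)
      have e5 : ∫ y in Set.Ioc x b, -k.im * P y = -k.im * ∫ y in Set.Ioc x b, P y :=
        integral_const_mul _ _
      have : G b - G x = -k.im * ∫ y in Set.Ioc x b, P y := by
        rw [e0, e1, e3, e4, e5]
      linarith
    have hA : Tendsto G atTop (𝓝 0) := by
      have h2exp2 : Tendsto (fun b : ℝ => (‖k‖ * (2 * (‖k‖ ^ 2 / c₀ ^ 2 * 2 / k.im)))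
          * Real.exp (-(2 * k.im) * b)) atTop (𝓝 0) := by
        have h0 : Tendsto (fun b : ℝ => Real.exp (-(2 * k.im) * b)) atTop (𝓝 0) :=
          Real.tendsto_exp_atBot.comp
            (tendsto_id.const_mul_atTop_of_neg (by linarith : -(2 * k.im) < 0))
        simpa using h0.const_mul (‖k‖ * (2 * (‖k‖ ^ 2 / c₀ ^ 2 * 2 / k.im)))
      apply squeeze_zero_norm' _ h2exp2
      filter_upwards [eventually_ge_atTop x₀] with b hb
      have hnorm : ‖(starRingEnd ℂ) k * ((starRingEnd ℂ) (u₁ b) * deriv u₁ b)‖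
          = ‖k‖ * (‖u₁ b‖ * ‖deriv u₁ b‖) := by
        rw [norm_mul, norm_mul, RCLike.norm_conj, RCLike.norm_conj]
      calc ‖G b‖ ≤ ‖(starRingEnd ℂ) k * ((starRingEnd ℂ) (u₁ b) * deriv u₁ b)‖ := by
            rw [hG_def, Real.norm_eq_abs]
            exact Complex.abs_im_le_norm _
        _ = ‖k‖ * (‖u₁ b‖ * ‖deriv u₁ b‖) := hnorm
        _ ≤ ‖k‖ * ((2 * Real.exp (-k.im * b))
              * ((‖k‖ ^ 2 / c₀ ^ 2 * 2 / k.im) * Real.exp (-k.im * b))) := by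
            refine mul_le_mul_of_nonneg_left ?_ (norm_nonneg _)
            refine mul_le_mul (hx₀ b hb) (hv_bound b hb) (norm_nonneg _) (by positivity)
        _ = (‖k‖ * (2 * (‖k‖ ^ 2 / c₀ ^ 2 * 2 / k.im)))
              * (Real.exp (-k.im * b) * Real.exp (-k.im * b)) := by ring
        _ = (‖k‖ * (2 * (‖k‖ ^ 2 / c₀ ^ 2 * 2 / k.im))) * Real.exp (-(2 * k.im) * b) := by
            rw [← Real.exp_add]
            congr 2
            ring
    have hB : Tendsto (fun b => G x - k.im * ∫ y in Set.Ioc x b, P y) atTop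
        (𝓝 (G x - k.im * ∫ y in Set.Ioi x, P y)) := by
      have h := intervalIntegral_tendsto_integral_Ioi x (hP_int x) tendsto_id
      have h' : Tendsto (fun b => ∫ y in Set.Ioc x b, P y) atTop
          (𝓝 (∫ y in Set.Ioi x, P y)) := by
        refine h.congr' ?_
        filter_upwards [eventually_ge_atTop x] with b hb
        exact intervalIntegral.integral_of_le hb
      exact tendsto_const_nhds.sub (h'.const_mul _)
    have hGeq : (fun b => G x - k.im * ∫ y in Set.Ioc x b, P y) =ᶠ[atTop] G := by
      filter_upwards [eventually_ge_atTop x] with b hb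
      exact (hGb b hb).symm
    have hfin := tendsto_nhds_unique (Tendsto.congr' hGeq hB) hA
    have : G x = k.im * ∫ y in Set.Ioi x, P y := by linarith
    exact this
  -- positivity of the integral
  have hPpos : ∀ x : ℝ, 0 < ∫ y in Set.Ioi x, P y := by
    intro x
    rw [setIntegral_pos_iff_support_of_nonneg_ae
      (Filter.Eventually.of_forall fun y => hP_nonneg y) (hP_int x)]
    have hnull : volume {y : ℝ | ¬(c₀ < c y ∧ c y ≤ cM)} = 0 := ae_iff.1 hae
    have hsub : Set.Ioi x \ Function.support P ⊆ {y : ℝ | ¬(c₀ < c y ∧ c y ≤ cM)} := by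
      rintro y ⟨hy1, hy2⟩ hcy
      apply hy2
      rw [Function.mem_support]
      have h6 : 0 < ‖k‖ ^ 2 * ‖u₁ y‖ ^ 2 / (c y) ^ 2 := by
        apply div_pos
        · exact mul_pos (pow_pos (norm_pos_iff.2 hk0) 2) (pow_pos (norm_pos_iff.2 (hne y)) 2)
        · exact pow_pos (lt_trans hc₀ hcy.1) 2
      have h7 : 0 < P y := lt_of_lt_of_le h6 (le_add_of_nonneg_right (by positivity))
      exact ne_of_gt h7
    have h7 : volume (Set.Ioi x \ Function.support P) = 0 := measure_mono_null hsub hnull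
    have h8 : volume (Set.Ioi x)
        ≤ volume (Function.support P ∩ Set.Ioi x) + volume (Set.Ioi x \ Function.support P) := by
      refine le_trans (measure_mono ?_) (measure_union_le _ _)
      intro y hy
      by_cases h : y ∈ Function.support P
      · exact Or.inl ⟨h, hy⟩
      · exact Or.inr ⟨hy, h⟩
    rw [h7, add_zero, Real.volume_Ioi] at h8
    have h9 := top_le_iff.1 h8
    rw [h9]
    exact ENNReal.zero_lt_top
  intro x
  have hD : 0 < ‖k‖ ^ 2 * ‖u₁ x‖ ^ 2 := by
    exact mul_pos (pow_pos (norm_pos_iff.2 hk0) 2) (pow_pos (norm_pos_iff.2 (hne x)) 2)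
  constructor
  · rw [re_div_aux' k (u₁ x) (deriv u₁ x), hG x]
    ring
  · rw [re_div_aux' k (u₁ x) (deriv u₁ x), hG x]
    exact div_pos (mul_pos hk (hPpos x)) hD
end
end

section
/- Let c satisfy [H1] and [H2], let κ > 0, and let u₁ : ℝ → ℝ be the (real-valued) Jost solution from +∞ at k = iκ, i.e., u₁ is continuously differentiable with locally absolutely continuous derivative, u₁''(x) = (κ²/c(x)²) u₁(x) for a.e. x, and e^{κx} u₁(x) → 1 as x → +∞. Then for every x ∈ ℝ, u₁(x) ≠ 0 and 2/(2 + c_M² γ₀) ≤ −u₁'(x)/(κ u₁(x)) ≤ 1 + γ₀/2, where γ₀ = ess sup_{x∈ℝ} |q(x)| and q = 1 − 1/c². -/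
open MeasureTheory Filter Topology

noncomputable section

/-- Real form of the equation at `k = iκ`: `u'' = (κ²/c²) u` a.e., with `u` of class `C¹`
with locally absolutely continuous derivative. -/
def SolvesHelmholtzR (c : ℝ → ℝ) (κ : ℝ) (u : ℝ → ℝ) : Prop :=
  ContDiff ℝ 1 u ∧
  ∀ a b : ℝ, deriv u b = deriv u a + ∫ x in a..b, (κ ^ 2 / (c x) ^ 2) * u x

/-- The real-valued Jost solution from `+∞` at `k = iκ`: `e^{κx} u(x) → 1` as `x → +∞`. -/
def IsJostPlusR (c : ℝ → ℝ) (κ : ℝ) (u : ℝ → ℝ) : Prop :=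
  SolvesHelmholtzR c κ u ∧
  Tendsto (fun x : ℝ => Real.exp (κ * x) * u x) atTop (𝓝 1)

/-- `γ₀ = ess sup |q|`. -/
def gamma0 (c : ℝ → ℝ) : ℝ := essSup (fun x => |qfun c x|) volume

lemma no_upcross (φ ψ : ℝ → ℝ) (hφ : Continuous φ) (x₀ : ℝ)
    (hid : ∀ a b : ℝ, φ b = φ a + ∫ x in a..b, ψ x)
    (hneg : φ x₀ < 0)
    (hint : ∀ a b : ℝ, x₀ ≤ a → a ≤ b → (∀ t ∈ Set.Icc a b, φ t ≤ 0) →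
      (∫ x in a..b, ψ x) ≤ 0) :
    ∀ x, x₀ ≤ x → φ x ≤ φ x₀ := by
  intro x₁ hx₁
  have key : ∀ t ∈ Set.Icc x₀ x₁, φ t ≤ 0 := by
    by_contra hcon
    push_neg at hcon
    obtain ⟨t₀, ht₀, ht₀pos⟩ := hcon
    set S : Set ℝ := Set.Icc x₀ x₁ ∩ {x | 0 ≤ φ x} with hS
    have hSne : S.Nonempty := ⟨t₀, ht₀, le_of_lt ht₀pos⟩
    have hScl : IsClosed S := isClosed_Icc.inter (isClosed_le continuous_const hφ)
    have hbdd : BddBelow S := ⟨x₀, fun y hy => hy.1.1⟩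
    set s := sInf S with hs
    have hsS : s ∈ S := hScl.csInf_mem hSne hbdd
    have hx₀s : x₀ < s := by
      rcases lt_or_eq_of_le hsS.1.1 with h | h
      · exact h
      · exfalso; rw [← h] at hsS; exact absurd hsS.2 (not_le.mpr hneg)
    have hlt : ∀ t, x₀ ≤ t → t < s → φ t < 0 := by
      intro t h1 h2
      by_contra hge
      push_neg at hge
      have htS : t ∈ S := ⟨⟨h1, le_trans h2.le hsS.1.2⟩, hge⟩
      exact absurd (csInf_le hbdd htS) (not_le.mpr h2)
    have hφs_le : φ s ≤ 0 := by
      have htend : Tendsto φ (𝓝[<] s) (𝓝 (φ s)) :=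
        (hφ.tendsto s).mono_left nhdsWithin_le_nhds
      refine le_of_tendsto htend ?_
      filter_upwards [(eventually_gt_nhds hx₀s).filter_mono nhdsWithin_le_nhds,
        self_mem_nhdsWithin] with t h1 h2
      exact (hlt t h1.le h2).le
    have hφs0 : φ s = 0 := le_antisymm hφs_le hsS.2
    have hI : (∫ x in x₀..s, ψ x) ≤ 0 := by
      apply hint x₀ s le_rfl hsS.1.1
      intro t ht
      rcases lt_or_eq_of_le ht.2 with h | h
      · exact (hlt t ht.1 h).le
      · rw [h, hφs0]
    have hids := hid x₀ s
    linarith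
  have := hint x₀ x₁ le_rfl hx₁ key
  have := hid x₀ x₁
  linarith

set_option maxHeartbeats 2000000 in
/-- Bounds on `w(x, iκ) = -u₁'(x)/(κ u₁(x))` for `κ > 0`. -/
theorem w_ik_bounds (c : ℝ → ℝ) (hmeas : Measurable c)
    (c₀ cM : ℝ) (h1 : HypH1c c c₀ cM) (h2 : HypH2 c)
    (κ : ℝ) (hκ : 0 < κ) (u₁ : ℝ → ℝ) (hu : IsJostPlusR c κ u₁) :
    ∀ x : ℝ, u₁ x ≠ 0 ∧
      2 / (2 + cM ^ 2 * gamma0 c) ≤ -(deriv u₁ x) / (κ * u₁ x) ∧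
      -(deriv u₁ x) / (κ * u₁ x) ≤ 1 + gamma0 c / 2 := by
  obtain ⟨hc₀, hcM, hae⟩ := h1
  obtain ⟨⟨hC1, hInt⟩, hlim⟩ := hu
  have hu_cont : Continuous u₁ := hC1.continuous
  have hu'_cont : Continuous (deriv u₁) := hC1.continuous_deriv le_rfl
  have hu_diff : ∀ x : ℝ, HasDerivAt u₁ (deriv u₁ x) x := fun x =>
    ((hC1.differentiable one_ne_zero) x).hasDerivAt
  -- exp decay helper
  have hexp0 : ∀ r : ℝ, 0 < r → Tendsto (fun x : ℝ => Real.exp (-(r * x))) atTop (𝓝 0) := by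
    intro r hr
    have h1 : Tendsto (fun x : ℝ => r * x) atTop atTop :=
      Tendsto.const_mul_atTop hr tendsto_id
    exact Real.tendsto_exp_atBot.comp ((tendsto_neg_atTop_atBot).comp h1)
  -- u → 0 at +∞
  have hu0 : Tendsto u₁ atTop (𝓝 0) := by
    have h2 := (hexp0 κ hκ).mul hlim
    rw [zero_mul] at h2
    refine h2.congr fun x => ?_
    rw [← mul_assoc, ← Real.exp_add]
    simp
  -- eventually positive
  have hupos_ev : ∀ᶠ x in atTop, 0 < u₁ x := by
    filter_upwards [hlim.eventually (eventually_gt_nhds (by norm_num : (0:ℝ) < 1))] with x hx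
    nlinarith [Real.exp_pos (κ * x)]
  -- gamma0 facts
  set γ := gamma0 c with hγdef
  have hqγ : ∀ᵐ x : ℝ, |qfun c x| ≤ γ := by
    apply ae_le_essSup
    refine ⟨1 + 1 / c₀ ^ 2, eventually_map.mpr ?_⟩
    filter_upwards [hae] with x hx
    have hcx : 0 < c x := lt_trans hc₀ hx.1
    have h2 : (0:ℝ) < (c x) ^ 2 := by positivity
    have h3 : 1 / (c x) ^ 2 ≤ 1 / c₀ ^ 2 := by
      apply one_div_le_one_div_of_le (by positivity)
      nlinarith [hx.1]
    have h4 : (0:ℝ) ≤ 1 / (c x)^2 := by positivity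
    rw [qfun, abs_le]
    constructor <;> nlinarith
  have hγ0 : 0 ≤ γ := by
    have hne : (ae (volume : Measure ℝ)).NeBot := by
      refine ae_neBot.mpr ?_
      intro h
      have := Real.volume_Icc (a := 0) (b := 1)
      rw [h] at this
      simp at this
    obtain ⟨x, hx⟩ := hqγ.exists
    exact le_trans (abs_nonneg _) hx
  set M : ℝ := 1 + γ / 2 with hMdef
  set m : ℝ := 2 / (2 + cM ^ 2 * γ) with hmdef
  have hden : (0:ℝ) < 2 + cM ^ 2 * γ := by nlinarith
  have hm_pos : 0 < m := by positivity
  have hm_le_one : m ≤ 1 := by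
    rw [hmdef, div_le_one hden]; nlinarith
  have hM_ge_one : 1 ≤ M := by rw [hMdef]; linarith
  -- algebraic lemma for the lower barrier
  have halg : m ^ 2 ≤ 1 / cM ^ 2 ∨ m ^ 2 ≤ 1 - γ := by
    by_contra hcon
    push_neg at hcon
    obtain ⟨h1', h2'⟩ := hcon
    rw [hmdef, div_pow] at h1' h2'
    have e1 : (0:ℝ) < cM ^ 2 := by positivity
    have e2 : (0:ℝ) < (2 + cM ^ 2 * γ) ^ 2 := by positivity
    rw [div_lt_div_iff₀ e1 e2] at h1'
    rw [lt_div_iff₀ e2] at h2'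
    -- h1' : (2 + cM^2*γ)^2 < 2^2 * cM^2 ; h2' : (1-γ)*(2+cM^2*γ)^2 < 2^2
    rcases eq_or_lt_of_le hγ0 with hγeq | hγpos
    · rw [← hγeq] at h2'; nlinarith
    · nlinarith [mul_pos (mul_pos e1 hγpos) (mul_pos e1 hγpos), mul_pos e1 hγpos,
        mul_lt_mul_of_pos_left h1' (mul_pos e1 hγpos)]
  -- a.e. pointwise bounds on 1/c²
  have haeM : ∀ᵐ x : ℝ, 1 / (c x) ^ 2 ≤ M ^ 2 := by
    filter_upwards [hqγ, hae] with x hq hx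
    have hcx : 0 < c x := lt_trans hc₀ hx.1
    have h2 : (0:ℝ) < (c x) ^ 2 := by positivity
    rw [qfun, abs_le] at hq
    rw [hMdef]
    nlinarith [hq.1]
  have haem : ∀ᵐ x : ℝ, m ^ 2 ≤ 1 / (c x) ^ 2 := by
    filter_upwards [hqγ, hae] with x hq hx
    have hcx : 0 < c x := lt_trans hc₀ hx.1
    have h2 : (0:ℝ) < (c x) ^ 2 := by positivity
    rcases le_or_gt (c x) 1 with hle | hgt
    · have : (c x) ^ 2 ≤ 1 := by nlinarith
      have h5 : (1:ℝ) ≤ 1 / (c x) ^ 2 := by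
        rw [le_div_iff₀ h2]; linarith
      nlinarith
    · rw [qfun, abs_le] at hq
      rcases halg with h | h
      · have : 1 / cM ^ 2 ≤ 1 / (c x) ^ 2 := by
          apply one_div_le_one_div_of_le h2
          nlinarith [hx.2]
        linarith
      · -- 1/c² = 1 - q ≥ 1 - γ
        nlinarith [hq.2]
  -- interval integrability of f
  set f : ℝ → ℝ := fun x => κ ^ 2 / (c x) ^ 2 * u₁ x with hfdef
  have hfint : ∀ a b : ℝ, IntervalIntegrable f volume a b := by
    intro a b
    rw [intervalIntegrable_iff]
    apply Integrable.bdd_mul (c := κ ^ 2 / c₀ ^ 2)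
      (hu_cont.integrableOn_uIoc)
      (((measurable_const.div ((hmeas.pow_const 2))).aestronglyMeasurable).restrict)
    apply ae_restrict_of_ae
    filter_upwards [hae] with x hx
    have hcx : 0 < c x := lt_trans hc₀ hx.1
    simp only [Pi.div_apply]
    rw [Real.norm_eq_abs, abs_of_nonneg (by positivity)]
    apply div_le_div_of_nonneg_left (by positivity) (by positivity)
    nlinarith [hx.1]
  have hu'int : ∀ a b : ℝ, IntervalIntegrable (deriv u₁) volume a b := fun a b =>
    hu'_cont.intervalIntegrable a b
  have hFTC : ∀ a b : ℝ, (∫ x in a..b, deriv u₁ x) = u₁ b - u₁ a := fun a b =>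
    intervalIntegral.integral_deriv_eq_sub (fun x _ => (hC1.differentiable one_ne_zero) x)
      (hu'int a b)
  -- positivity of u₁
  have hpos : ∀ x : ℝ, 0 < u₁ x := by
    by_contra hcon
    push_neg at hcon
    obtain ⟨x₀, hx₀⟩ := hcon
    obtain ⟨A, hA⟩ := eventually_atTop.mp hupos_ev
    -- zero set
    set S : Set ℝ := {x : ℝ | u₁ x = 0} with hSdef
    have hSne : S.Nonempty := by
      rcases eq_or_lt_of_le hx₀ with h | h
      · exact ⟨x₀, h⟩
      · have hb : x₀ ≤ max A x₀ + 1 := by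
          have := le_max_right A x₀; linarith
        have hub : 0 < u₁ (max A x₀ + 1) := by
          apply hA; have := le_max_left A x₀; linarith
        have h0mem : (0:ℝ) ∈ Set.Icc (u₁ x₀) (u₁ (max A x₀ + 1)) := ⟨le_of_lt h, le_of_lt hub⟩
        obtain ⟨z, _, hz2⟩ := intermediate_value_Icc hb hu_cont.continuousOn h0mem
        exact ⟨z, hz2⟩
    have hSbdd : BddAbove S := by
      refine ⟨A, fun y hy => ?_⟩
      by_contra hyA
      push_neg at hyA
      exact absurd hy (ne_of_gt (hA y hyA.le))
    set z := sSup S with hzdef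
    have hScl : IsClosed S := by rw [hSdef]; exact isClosed_eq hu_cont continuous_const
    have hzS : u₁ z = 0 := hScl.csSup_mem hSne hSbdd
    have hz_after : ∀ x : ℝ, z < x → 0 < u₁ x := by
      intro x hx
      rcases lt_trichotomy (u₁ x) 0 with h | h | h
      · exfalso
        have hb : x ≤ max A x + 1 := by have := le_max_right A x; linarith
        have hub : 0 < u₁ (max A x + 1) := by
          apply hA; have := le_max_left A x; linarith
        have h0mem : (0:ℝ) ∈ Set.Icc (u₁ x) (u₁ (max A x + 1)) := ⟨le_of_lt h, le_of_lt hub⟩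
        obtain ⟨z', hz'1, hz'2⟩ := intermediate_value_Icc hb hu_cont.continuousOn h0mem
        have : z' ≤ z := le_csSup hSbdd hz'2
        linarith [hz'1.1]
      · exact absurd (le_csSup hSbdd h) (not_le.mpr hx)
      · exact h
    have hz_nonneg : ∀ x : ℝ, z ≤ x → 0 ≤ u₁ x := by
      intro x hx
      rcases eq_or_lt_of_le hx with h | h
      · rw [← h, hzS]
      · exact le_of_lt (hz_after x h)
    -- u' monotone on [z, ∞)
    have hmono : ∀ a b : ℝ, z ≤ a → a ≤ b → deriv u₁ a ≤ deriv u₁ b := by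
      intro a b hza hab
      rw [hInt a b]
      have h0 : 0 ≤ ∫ x in a..b, κ ^ 2 / (c x) ^ 2 * u₁ x := by
        apply intervalIntegral.integral_nonneg hab
        intro t ht
        have h1 : 0 ≤ u₁ t := hz_nonneg t (le_trans hza ht.1)
        have h2 : (0:ℝ) ≤ κ ^ 2 / (c t) ^ 2 := by positivity
        exact mul_nonneg h2 h1
      linarith
    -- MVT
    set y := max A z + 1 with hydef
    have hzy : z < y := by have := le_max_right A z; simp only [hydef]; linarith
    have huy : 0 < u₁ y := by
      apply hA; have := le_max_left A z; simp only [hydef]; linarith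
    obtain ⟨ξ, hξmem, hξ⟩ := exists_hasDerivAt_eq_slope u₁ (deriv u₁) hzy
      hu_cont.continuousOn (fun x _ => hu_diff x)
    have hd : 0 < deriv u₁ ξ := by
      rw [hξ, hzS]
      apply div_pos (by linarith) (by linarith)
    -- eventually u < u y
    have hev : ∀ᶠ x in atTop, u₁ x < u₁ y :=
      hu0.eventually (eventually_lt_nhds huy)
    obtain ⟨B, hB⟩ := eventually_atTop.mp hev
    set x := max B y with hxdef
    have hxy : y ≤ x := le_max_right B y
    have hlow : ∀ t ∈ Set.Icc y x, deriv u₁ ξ ≤ deriv u₁ t := by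
      intro t ht
      exact hmono ξ t (le_of_lt hξmem.1) (le_trans (le_of_lt hξmem.2) ht.1)
    have hI : (deriv u₁ ξ) * (x - y) ≤ ∫ t in y..x, deriv u₁ t := by
      have := intervalIntegral.integral_mono_on hxy
        (intervalIntegrable_const (c := deriv u₁ ξ)) (hu'int y x) hlow
      rwa [intervalIntegral.integral_const, smul_eq_mul, mul_comm] at this
    rw [hFTC y x] at hI
    have hux : u₁ x < u₁ y := hB x (le_max_left B y)
    nlinarith [mul_nonneg (le_of_lt hd) (sub_nonneg.mpr hxy)]
  -- the generic barrier machinery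
  have hid : ∀ (lam : ℝ) (a b : ℝ),
      (fun x => deriv u₁ x + κ * lam * u₁ x) b
        = (fun x => deriv u₁ x + κ * lam * u₁ x) a
          + ∫ x in a..b, (f x + κ * lam * deriv u₁ x) := by
    intro lam a b
    simp only
    rw [intervalIntegral.integral_add (hfint a b) ((hu'int a b).const_mul (κ * lam)),
      intervalIntegral.integral_const_mul, hFTC a b, hInt a b]
    ring
  -- Upper bound: ∀ x, 0 ≤ deriv u₁ x + κ M u₁ x
  have hMx : ∀ x : ℝ, 0 ≤ deriv u₁ x + κ * M * u₁ x := by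
    intro x₀
    by_contra hcon
    push_neg at hcon
    have hcont : Continuous (fun x => deriv u₁ x + κ * M * u₁ x) :=
      hu'_cont.add (continuous_const.mul hu_cont)
    have key := no_upcross (fun x => deriv u₁ x + κ * M * u₁ x)
      (fun x => f x + κ * M * deriv u₁ x) hcont x₀ (hid M) hcon ?_
    · -- deriv u₁ x ≤ φ(x₀) for x ≥ x₀
      set η : ℝ := -(deriv u₁ x₀ + κ * M * u₁ x₀) with hηdef
      have hη : 0 < η := by simp only [hηdef]; linarith
      have hder : ∀ x : ℝ, x₀ ≤ x → deriv u₁ x ≤ -η := by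
        intro x hx
        have h1 := key x hx
        have h2 : 0 ≤ κ * M * u₁ x :=
          mul_nonneg (mul_nonneg hκ.le (by linarith)) (hpos x).le
        simp only [hηdef]
        linarith
      set x := x₀ + (u₁ x₀ + 1) / η with hxdef
      have hx₀x : x₀ ≤ x := by
        have : 0 ≤ (u₁ x₀ + 1) / η := div_nonneg (by linarith [hpos x₀]) hη.le
        simp only [hxdef]; linarith
      have hI : (∫ t in x₀..x, deriv u₁ t) ≤ (-η) * (x - x₀) := by
        have := intervalIntegral.integral_mono_on hx₀x (hu'int x₀ x)
          (intervalIntegrable_const (c := -η))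
          (fun t ht => hder t ht.1)
        rwa [intervalIntegral.integral_const, smul_eq_mul, mul_comm] at this
      rw [hFTC x₀ x] at hI
      have hxx : x - x₀ = (u₁ x₀ + 1) / η := by simp only [hxdef]; ring
      rw [hxx] at hI
      have : (-η) * ((u₁ x₀ + 1) / η) = -(u₁ x₀ + 1) := by
        field_simp
      rw [this] at hI
      have := hpos x
      linarith
    · -- the sign condition on the integral
      intro a b ha hab hφ
      rw [intervalIntegral.integral_of_le hab]
      apply integral_nonpos_of_ae
      filter_upwards [ae_restrict_mem measurableSet_Ioc, ae_restrict_of_ae haeM]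
        with t ht hM2
      have hφt : deriv u₁ t + κ * M * u₁ t ≤ 0 := hφ t ⟨le_of_lt ht.1, ht.2⟩
      have hut : 0 < u₁ t := hpos t
      have hMpos : 0 < κ * M := mul_pos hκ (by linarith)
      have h1 : κ * M * deriv u₁ t ≤ κ * M * (-(κ * M * u₁ t)) := by
        apply mul_le_mul_of_nonneg_left _ hMpos.le
        linarith
      have h2 : κ ^ 2 / (c t) ^ 2 * u₁ t ≤ κ ^ 2 * M ^ 2 * u₁ t := by
        rw [div_eq_mul_one_div]
        apply mul_le_mul_of_nonneg_right _ hut.le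
        apply mul_le_mul_of_nonneg_left hM2 (by positivity)
      simp only [hfdef, Pi.zero_apply]
      have h4 : κ ^ 2 * M ^ 2 * u₁ t + κ * M * -(κ * M * u₁ t) = 0 := by ring
      linarith [add_le_add h2 h1]
  -- Lower bound: ∀ x, deriv u₁ x + κ m u₁ x ≤ 0
  have hmx : ∀ x : ℝ, deriv u₁ x + κ * m * u₁ x ≤ 0 := by
    intro x₀
    by_contra hcon
    push_neg at hcon
    have hcont : Continuous (fun x => -(deriv u₁ x + κ * m * u₁ x)) :=
      (hu'_cont.add (continuous_const.mul hu_cont)).neg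
    have hid' : ∀ a b : ℝ, (fun x => -(deriv u₁ x + κ * m * u₁ x)) b
        = (fun x => -(deriv u₁ x + κ * m * u₁ x)) a
          + ∫ x in a..b, -(f x + κ * m * deriv u₁ x) := by
      intro a b
      have h := hid m a b
      simp only at h ⊢
      rw [intervalIntegral.integral_neg]
      linarith
    have key := no_upcross (fun x => -(deriv u₁ x + κ * m * u₁ x))
      (fun x => -(f x + κ * m * deriv u₁ x)) hcont x₀ hid' (by linarith) ?_
    · -- φm x ≥ η for x ≥ x₀; exponential lower bound for u, contradict u → 0
      set η : ℝ := deriv u₁ x₀ + κ * m * u₁ x₀ with hηdef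
      have hη : 0 < η := hcon
      have hφge : ∀ x : ℝ, x₀ ≤ x → η ≤ deriv u₁ x + κ * m * u₁ x := by
        intro x hx
        have := key x hx
        linarith
      have hkm : 0 < κ * m := mul_pos hκ hm_pos
      set G : ℝ → ℝ := fun x => (u₁ x - η / (κ * m)) * Real.exp (κ * m * x) with hGdef
      have hGderiv : ∀ x : ℝ, HasDerivAt G
          ((deriv u₁ x + κ * m * u₁ x - η) * Real.exp (κ * m * x)) x := by
        intro x
        have he : HasDerivAt (fun x : ℝ => Real.exp (κ * m * x))
            (Real.exp (κ * m * x) * (κ * m)) x := by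
          simpa using ((hasDerivAt_id x).const_mul (κ * m)).exp
        have := ((hu_diff x).sub_const (η / (κ * m))).mul he
        refine this.congr_deriv ?_
        have e : η / (κ * m) * (κ * m) = η := div_mul_cancel₀ η hkm.ne'
        linear_combination (-Real.exp (κ * m * x)) * e
      have hGmono : MonotoneOn G (Set.Ici x₀) := by
        apply monotoneOn_of_deriv_nonneg (convex_Ici x₀)
          (Continuous.continuousOn (by fun_prop))
        · intro x _
          exact (hGderiv x).differentiableAt.differentiableWithinAt
        · intro x hx
          rw [interior_Ici] at hx
          rw [(hGderiv x).deriv]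
          apply mul_nonneg _ (Real.exp_pos _).le
          have := hφge x (le_of_lt hx)
          linarith
      -- u₁ x ≥ η/(κm) + G x₀ * exp(-(κ m x)) for x ≥ x₀
      have hlow : ∀ x : ℝ, x₀ ≤ x →
          η / (κ * m) + G x₀ * Real.exp (-(κ * m * x)) ≤ u₁ x := by
        intro x hx
        have h1 : G x₀ ≤ G x := hGmono Set.self_mem_Ici hx hx
        have h2 : G x₀ * Real.exp (-(κ * m * x)) ≤ G x * Real.exp (-(κ * m * x)) :=
          mul_le_mul_of_nonneg_right h1 (Real.exp_pos _).le
        have h3 : G x * Real.exp (-(κ * m * x)) = u₁ x - η / (κ * m) := by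
          simp only [hGdef]
          rw [mul_assoc, ← Real.exp_add]
          simp
        linarith [h2, h3.symm.le]
      have htendR : Tendsto (fun x : ℝ => η / (κ * m) + G x₀ * Real.exp (-(κ * m * x)))
          atTop (𝓝 (η / (κ * m) + G x₀ * 0)) :=
        tendsto_const_nhds.add (tendsto_const_nhds.mul (hexp0 (κ * m) hkm))
      rw [mul_zero, add_zero] at htendR
      have : η / (κ * m) ≤ 0 := by
        apply le_of_tendsto_of_tendsto htendR hu0
        filter_upwards [eventually_ge_atTop x₀] with x hx
        exact hlow x hx
      have : 0 < η / (κ * m) := by positivity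
      linarith
    · -- integral sign condition
      intro a b ha hab hφ
      rw [intervalIntegral.integral_of_le hab]
      apply integral_nonpos_of_ae
      filter_upwards [ae_restrict_mem measurableSet_Ioc, ae_restrict_of_ae haem]
        with t ht hm2
      have hφt : -(deriv u₁ t + κ * m * u₁ t) ≤ 0 := hφ t ⟨le_of_lt ht.1, ht.2⟩
      have hut : 0 < u₁ t := hpos t
      have hmpos : 0 < κ * m := mul_pos hκ hm_pos
      have h1 : κ * m * (-(κ * m * u₁ t)) ≤ κ * m * deriv u₁ t := by
        apply mul_le_mul_of_nonneg_left _ hmpos.le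
        linarith
      have h2 : κ ^ 2 * m ^ 2 * u₁ t ≤ κ ^ 2 / (c t) ^ 2 * u₁ t := by
        rw [div_eq_mul_one_div]
        apply mul_le_mul_of_nonneg_right _ hut.le
        apply mul_le_mul_of_nonneg_left hm2 (by positivity)
      simp only [hfdef, Pi.zero_apply]
      have h4 : κ ^ 2 * m ^ 2 * u₁ t + κ * m * -(κ * m * u₁ t) = 0 := by ring
      linarith [add_le_add h2 h1]
  -- conclusion
  intro x
  have hux := hpos x
  have hκu : 0 < κ * u₁ x := mul_pos hκ hux
  refine ⟨ne_of_gt hux, ?_, ?_⟩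
  · rw [le_div_iff₀ hκu]
    have := hmx x
    have hmm : m = 2 / (2 + cM ^ 2 * γ) := hmdef
    nlinarith
  · rw [div_le_iff₀ hκu]
    have := hMx x
    have hMM : M = 1 + γ / 2 := hMdef
    nlinarith
end
end

section
/- Let c₁ and c₂ be two measurable real functions each satisfying [H1] and [H2], with constants c_{M,1}, c_{M,2} as in [H1], and set q_j = 1 − 1/c_j², γ_{0,j} = ess sup |q_j| for j = 1, 2. For κ > 0 and j = 1,2, let u_{1,j} be the real-valued Jost solution from +∞ at k = iκ for c_j and set w_j(x, iκ) = −u_{1,j}'(x)/(κ u_{1,j}(x)); for κ = 0 set w_j(x, i·0) = 1. Then for all κ ≥ 0, ∫_ℝ |w₁(x, iκ) − w₂(x, iκ)| dx ≤ (1/α) ∫_ℝ |q₁(x) − q₂(x)| dx, where α = 2/(2 + c_{M,1}² γ_{0,1}) + 2/(2 + c_{M,2}² γ_{0,2}). -/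
open MeasureTheory Filter Topology

noncomputable section

/-- `w(x, iκ)` built from a family of real Jost solutions, with the convention
`w(x, i·0) = 1`. -/
def wIK (U : ℝ → ℝ → ℝ) (κ x : ℝ) : ℝ :=
  if κ = 0 then 1 else -(deriv (U κ) x) / (κ * U κ x)


namespace WIKAux

open Set intervalIntegral

/-- integrability of `exp (σ(x - t))` on `(-∞, t]`. -/
lemma exp_mul_integrableOn_Iic {σ : ℝ} (hσ : 0 < σ) (t : ℝ) :
    IntegrableOn (fun x : ℝ => Real.exp (σ * (x - t))) (Iic t) := by
  rw [← Measure.map_neg_eq_self (volume : Measure ℝ)]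
  have m : MeasurableEmbedding fun x : ℝ => -x :=
    (Homeomorph.neg ℝ).measurableEmbedding
  rw [m.integrableOn_map_iff]
  simp_rw [Function.comp_def, neg_preimage, neg_Iic]
  have h0 : IntegrableOn (fun x : ℝ => Real.exp (-σ * x) * Real.exp (-σ * t)) (Ioi (-t)) :=
    (exp_neg_integrableOn_Ioi (-t) hσ).mul_const _
  have h1 : IntegrableOn (fun x : ℝ => Real.exp (-σ * x) * Real.exp (-σ * t)) (Ici (-t)) :=
    Iff.mpr integrableOn_Ici_iff_integrableOn_Ioi h0
  refine h1.congr_fun (fun x _ => ?_) measurableSet_Ici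
  dsimp only
  rw [← Real.exp_add]
  congr 1
  ring

lemma exp_mul_integral_Iic {σ : ℝ} (hσ : 0 < σ) (t : ℝ) :
    ∫ x in Iic t, Real.exp (σ * (x - t)) = 1 / σ := by
  have h1 : (∫ x in Iic t, Real.exp (σ * (x - t)))
      = ∫ y in Ioi (-t), Real.exp (σ * (-y - t)) := by
    rw [← integral_comp_neg_Iic t (fun y => Real.exp (σ * (-y - t)))]
    congr 1; ext x; congr 1; ring
  have h2 : (∫ y in Ioi (-t), Real.exp (σ * (-y - t)))
      = σ⁻¹ • ∫ z in Ioi (σ * (-t)), Real.exp (-z) * Real.exp (-(σ * t)) := by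
    rw [← integral_comp_mul_left_Ioi (fun z => Real.exp (-z) * Real.exp (-(σ * t))) (-t) hσ]
    congr 1; ext y; rw [← Real.exp_add]; congr 1; ring
  rw [h1, h2, MeasureTheory.integral_mul_const, integral_exp_neg_Ioi]
  rw [← Real.exp_add, smul_eq_mul]
  have : -(σ * -t) + -(σ * t) = 0 := by ring
  rw [this, Real.exp_zero]
  simp [one_div]

/-- Integration by parts of a `C¹` function against a function `Φ` given as an indefinite
integral of a locally integrable function `g`. -/
lemma ibp (Φ g f : ℝ → ℝ) (hΦc : Continuous Φ) (hgm : Measurable g)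
    (hg : ∀ a b : ℝ, IntervalIntegrable g volume a b)
    (hint : ∀ a b : ℝ, Φ b = Φ a + ∫ t in a..b, g t)
    (hf : ContDiff ℝ 1 f) {a b : ℝ} (hab : a ≤ b) :
    f b * Φ b - f a * Φ a = ∫ x in a..b, (deriv f x * Φ x + f x * g x) := by
  have hfc : Continuous f := hf.continuous
  have hf' : Continuous (deriv f) := hf.continuous_deriv le_rfl
  have hfd : Differentiable ℝ f := hf.differentiable one_ne_zero
  have FTCf : ∀ x y : ℝ, ∫ t in x..y, deriv f t = f y - f x := fun x y =>
    integral_deriv_eq_sub (fun t _ => hfd t) (hf'.intervalIntegrable _ _)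
  -- bound for deriv f on [a, b]
  obtain ⟨C, hC⟩ : ∃ C, ∀ x ∈ Icc a b, ‖deriv f x‖ ≤ C :=
    (isCompact_Icc.exists_bound_of_continuousOn hf'.continuousOn)
  have hC0 : 0 ≤ C := le_trans (norm_nonneg _) (hC a ⟨le_rfl, hab⟩)
  -- the triangle
  set T : Set (ℝ × ℝ) := {p | a < p.1 ∧ p.1 ≤ p.2 ∧ p.2 ≤ b} with hT
  have hTm : MeasurableSet T := by
    refine MeasurableSet.inter ?_ (MeasurableSet.inter ?_ ?_)
    · exact measurableSet_lt measurable_const measurable_fst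
    · exact measurableSet_le measurable_fst measurable_snd
    · exact measurableSet_le measurable_snd measurable_const
  set F : ℝ → ℝ → ℝ := fun x t => T.indicator (fun p => g p.1 * deriv f p.2) (x, t) with hF
  have hFm : AEStronglyMeasurable (Function.uncurry F) (volume.prod volume) := by
    have : Function.uncurry F = T.indicator (fun p => g p.1 * deriv f p.2) := by
      ext p; cases p; rfl
    rw [this]
    exact (((hgm.comp measurable_fst).mul
      (hf'.measurable.comp measurable_snd)).indicator hTm).aestronglyMeasurable
  -- integrability of F via a product majorant
  have hgint : IntegrableOn g (Ioc a b) := (hg a b).1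
  have hmaj : Integrable (fun p : ℝ × ℝ =>
      (Ioc a b).indicator (fun x => |g x|) p.1 * (Ioc a b).indicator (fun _ => C) p.2)
      (volume.prod volume) := by
    refine Integrable.mul_prod ?_ ?_
    · exact (integrable_indicator_iff measurableSet_Ioc).mpr hgint.abs
    · exact (integrable_indicator_iff measurableSet_Ioc).mpr
        (integrableOn_const measure_Ioc_lt_top.ne)
  have hFI : Integrable (Function.uncurry F) (volume.prod volume) := by
    refine hmaj.mono' hFm (Filter.Eventually.of_forall fun p => ?_)
    by_cases hp : p ∈ T
    · have h1 : p.1 ∈ Ioc a b := ⟨hp.1, le_trans hp.2.1 hp.2.2⟩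
      have h2 : p.2 ∈ Ioc a b := ⟨lt_of_lt_of_le hp.1 hp.2.1, hp.2.2⟩
      have : Function.uncurry F p = g p.1 * deriv f p.2 := by
        simp only [Function.uncurry, hF, indicator_of_mem hp]
      rw [this, indicator_of_mem h1, indicator_of_mem h2]
      calc ‖g p.1 * deriv f p.2‖ = |g p.1| * ‖deriv f p.2‖ := by
            rw [norm_mul]; rfl
        _ ≤ |g p.1| * C := by
            exact mul_le_mul_of_nonneg_left (hC _ ⟨le_of_lt h2.1, h2.2⟩) (abs_nonneg _)
    · have : Function.uncurry F p = 0 := by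
        simp only [Function.uncurry, hF, indicator_of_notMem hp]
      rw [this]
      simp only [norm_zero]
      exact mul_nonneg (indicator_nonneg (fun x _ => abs_nonneg _) _)
        (indicator_nonneg (fun x _ => hC0) _)
  -- inner integral in t
  have hinner₁ : ∀ x : ℝ, (∫ t, F x t) =
      (Ioc a b).indicator (fun x => g x * (f b - f x)) x := by
    intro x
    by_cases hx : x ∈ Ioc a b
    · have : (fun t => F x t) = (Icc x b).indicator (fun t => g x * deriv f t) := by
        ext t
        simp only [hF]
        by_cases ht : t ∈ Icc x b
        · rw [indicator_of_mem ht,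
            indicator_of_mem (show (x, t) ∈ T from ⟨hx.1, ht.1, ht.2⟩)]
        · rw [indicator_of_notMem ht,
            indicator_of_notMem (show (x, t) ∉ T from fun hmem => ht ⟨hmem.2.1, hmem.2.2⟩)]
      rw [this, MeasureTheory.integral_indicator measurableSet_Icc, indicator_of_mem hx,
        integral_Icc_eq_integral_Ioc, ← intervalIntegral.integral_of_le hx.2,
        intervalIntegral.integral_const_mul, FTCf]
    · have : (fun t => F x t) = fun _ => (0 : ℝ) := by
        ext t
        simp only [hF]
        exact indicator_of_notMem
          (show (x, t) ∉ T from fun hmem => hx ⟨hmem.1, le_trans hmem.2.1 hmem.2.2⟩) _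
      rw [this, indicator_of_notMem hx]
      simp
  -- inner integral in x
  have hinner₂ : ∀ t : ℝ, (∫ x, F x t) =
      (Ioc a b).indicator (fun t => deriv f t * (Φ t - Φ a)) t := by
    intro t
    by_cases ht : t ∈ Ioc a b
    · have : (fun x => F x t) = (Ioc a t).indicator (fun x => g x * deriv f t) := by
        ext x
        simp only [hF]
        by_cases hx : x ∈ Ioc a t
        · rw [indicator_of_mem hx,
            indicator_of_mem (show (x, t) ∈ T from ⟨hx.1, hx.2, ht.2⟩)]
        · rw [indicator_of_notMem hx,
            indicator_of_notMem (show (x, t) ∉ T from fun hmem => hx ⟨hmem.1, hmem.2.1⟩)]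
      rw [this, MeasureTheory.integral_indicator measurableSet_Ioc, indicator_of_mem ht,
        ← intervalIntegral.integral_of_le ht.1.le,
        intervalIntegral.integral_mul_const]
      have := hint a t
      rw [mul_comm]
      congr 1
      linarith
    · have : (fun x => F x t) = fun _ => (0 : ℝ) := by
        ext x
        simp only [hF]
        exact indicator_of_notMem
          (show (x, t) ∉ T from fun hmem => ht ⟨lt_of_lt_of_le hmem.1 hmem.2.1, hmem.2.2⟩) _
      rw [this, indicator_of_notMem ht]
      simp
  -- Fubini
  have hswap : (∫ x, ∫ t, F x t) = ∫ t, ∫ x, F x t :=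
    integral_integral_swap hFI
  have hL : (∫ x, ∫ t, F x t) = ∫ x in a..b, g x * (f b - f x) := by
    rw [intervalIntegral.integral_of_le hab, ← MeasureTheory.integral_indicator measurableSet_Ioc]
    exact integral_congr_ae (Filter.Eventually.of_forall hinner₁)
  have hR : (∫ t, ∫ x, F x t) = ∫ t in a..b, deriv f t * (Φ t - Φ a) := by
    rw [intervalIntegral.integral_of_le hab, ← MeasureTheory.integral_indicator measurableSet_Ioc]
    exact integral_congr_ae (Filter.Eventually.of_forall hinner₂)
  have key : (∫ x in a..b, g x * (f b - f x)) = ∫ t in a..b, deriv f t * (Φ t - Φ a) := by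
    rw [← hL, ← hR, hswap]
  -- unfold both sides
  have hfg : IntervalIntegrable (fun x => f x * g x) volume a b :=
    (hg a b).continuousOn_mul hfc.continuousOn
  have hgfb : IntervalIntegrable (fun x => g x * f b) volume a b :=
    (hg a b).mul_const _
  have hL2 : (∫ x in a..b, g x * (f b - f x))
      = f b * (Φ b - Φ a) - ∫ x in a..b, f x * g x := by
    have : (fun x => g x * (f b - f x)) = fun x => g x * f b - f x * g x := by
      ext x; ring
    rw [this, intervalIntegral.integral_sub hgfb hfg, intervalIntegral.integral_mul_const]
    have := hint a b
    have hgint' : (∫ x in a..b, g x) = Φ b - Φ a := by linarith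
    rw [hgint']
    ring
  have hfΦ : IntervalIntegrable (fun x => deriv f x * Φ x) volume a b :=
    (hf'.mul hΦc).intervalIntegrable _ _
  have hfΦa : IntervalIntegrable (fun x => deriv f x * Φ a) volume a b :=
    ((hf'.intervalIntegrable _ _).mul_const _)
  have hR2 : (∫ t in a..b, deriv f t * (Φ t - Φ a))
      = (∫ t in a..b, deriv f t * Φ t) - Φ a * (f b - f a) := by
    have : (fun t => deriv f t * (Φ t - Φ a)) = fun t => deriv f t * Φ t - deriv f t * Φ a := by
      ext t; ring
    rw [this, intervalIntegral.integral_sub hfΦ hfΦa, intervalIntegral.integral_mul_const,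
      FTCf]
    ring
  have hsum : (∫ x in a..b, (deriv f x * Φ x + f x * g x))
      = (∫ x in a..b, deriv f x * Φ x) + ∫ x in a..b, f x * g x :=
    intervalIntegral.integral_add hfΦ hfg
  rw [hsum]
  have h1 : f b * (Φ b - Φ a) - (∫ x in a..b, f x * g x)
      = (∫ t in a..b, deriv f t * Φ t) - Φ a * (f b - f a) := by
    rw [← hL2, ← hR2]; exact key
  linarith

lemma exp_decay_tendsto {r : ℝ} (hr : 0 < r) :
    Tendsto (fun x : ℝ => Real.exp (-(r * x))) atTop (𝓝 0) :=
  Real.tendsto_exp_atBot.comp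
    (tendsto_neg_atTop_atBot.comp (Tendsto.const_mul_atTop hr tendsto_id))

lemma jost_facts (c : ℝ → ℝ) (hm : Measurable c) (c₀ cM : ℝ)
    (hc₀ : 0 < c₀) (hae : ∀ᵐ x : ℝ, c₀ < c x ∧ c x ≤ cM)
    (κ : ℝ) (hκ : 0 < κ) (u : ℝ → ℝ) (hC1 : ContDiff ℝ 1 u)
    (heq : ∀ a b : ℝ, deriv u b = deriv u a + ∫ x in a..b, (κ ^ 2 / (c x) ^ 2) * u x)
    (hlim : Tendsto (fun x : ℝ => Real.exp (κ * x) * u x) atTop (𝓝 1))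
    (β : ℝ) (hβ0 : 0 < β) (hβ1 : β < 1) (hβ : ∀ᵐ x : ℝ, β ^ 2 ≤ 1 / (c x) ^ 2) :
    (∀ x, 0 < u x) ∧ (∀ x, deriv u x + κ * β * u x ≤ 0) ∧
      (∀ x t : ℝ, x ≤ t → Real.exp (κ * β * t) * u t ≤ Real.exp (κ * β * x) * u x) ∧
      Tendsto u atTop (𝓝 0) ∧ (∀ x, deriv u x ≤ 0) ∧ Monotone (deriv u) := by
  set g : ℝ → ℝ := fun x => κ ^ 2 / (c x) ^ 2 * u x with hgdef
  have huc : Continuous u := hC1.continuous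
  have hu' : Continuous (deriv u) := hC1.continuous_deriv le_rfl
  have hud : Differentiable ℝ u := hC1.differentiable one_ne_zero
  have hgm : Measurable g := (measurable_const.div (hm.pow_const 2)).mul huc.measurable
  -- interval integrability of g
  have hgi : ∀ a b : ℝ, IntervalIntegrable g volume a b := by
    intro a b
    rw [intervalIntegrable_iff]
    obtain ⟨Cu, hCu⟩ := isCompact_uIcc.exists_bound_of_continuousOn
      (huc.continuousOn : ContinuousOn u (uIcc a b))
    refine Integrable.mono' (g := fun _ => κ ^ 2 / c₀ ^ 2 * Cu)
      (integrableOn_const (C := κ ^ 2 / c₀ ^ 2 * Cu) measure_Ioc_lt_top.ne)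
      hgm.aestronglyMeasurable.restrict ?_
    have h1 : ∀ᵐ x ∂(volume.restrict (uIoc a b)), c₀ < c x ∧ c x ≤ cM := ae_restrict_of_ae hae
    have h2 : ∀ᵐ x ∂(volume.restrict (uIoc a b)), x ∈ uIoc a b :=
      ae_restrict_mem measurableSet_uIoc
    filter_upwards [h1, h2] with x hx hxm
    have hcx : c₀ ^ 2 ≤ (c x) ^ 2 := by nlinarith [hx.1]
    have hdiv : κ ^ 2 / (c x) ^ 2 ≤ κ ^ 2 / c₀ ^ 2 :=
      div_le_div_of_nonneg_left (by positivity) (by positivity) hcx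
    have hub : |u x| ≤ Cu := by simpa using hCu x (uIoc_subset_uIcc hxm)
    have hge : ‖g x‖ = κ ^ 2 / (c x) ^ 2 * |u x| := by
      rw [hgdef]
      simp [abs_mul, abs_of_nonneg (show (0:ℝ) ≤ κ ^ 2 / (c x) ^ 2 by positivity)]
    rw [hge]
    exact mul_le_mul hdiv hub (abs_nonneg _) (by positivity)
  have FTCu : ∀ x y : ℝ, ∫ t in x..y, deriv u t = u y - u x := fun x y =>
    integral_deriv_eq_sub (fun t _ => hud t) (hu'.intervalIntegrable _ _)
  -- u tends to 0 at +∞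
  have hu0 : Tendsto u atTop (𝓝 0) := by
    have h2 := (exp_decay_tendsto hκ).mul hlim
    rw [zero_mul] at h2
    refine h2.congr fun x => ?_
    rw [← mul_assoc, ← Real.exp_add]
    simp
  -- eventually positive
  have hev : ∃ R : ℝ, ∀ x, R ≤ x → 0 < u x := by
    have h05 : ∀ᶠ x in atTop, (1/2 : ℝ) < Real.exp (κ * x) * u x :=
      hlim.eventually_const_lt (by norm_num)
    obtain ⟨R, hR⟩ := eventually_atTop.mp h05
    exact ⟨R, fun x hx => by nlinarith [Real.exp_pos (κ * x), hR x hx]⟩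
  obtain ⟨R, hR⟩ := hev
  -- u is positive everywhere
  have hupos : ∀ x, 0 < u x := by
    by_contra hcon
    push_neg at hcon
    obtain ⟨x₀, hx₀⟩ := hcon
    set S : Set ℝ := {x | u x ≤ 0} with hSdef
    have hSne : S.Nonempty := ⟨x₀, hx₀⟩
    have hSb : BddAbove S := by
      refine ⟨R, fun y hy => ?_⟩
      by_contra hyR
      push_neg at hyR
      exact absurd (hR y hyR.le) (not_lt.mpr hy)
    have hScl : IsClosed S := isClosed_le huc continuous_const
    have hs : sSup S ∈ S := hScl.csSup_mem hSne hSb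
    set s := sSup S with hsdef
    have hspos : ∀ x, s < x → 0 < u x := fun x hx =>
      lt_of_not_ge fun h => (not_le.mpr hx) (le_csSup hSb h)
    have hmono : ∀ p q : ℝ, s < p → p ≤ q → deriv u p ≤ deriv u q := by
      intro p q hp hpq
      have hnn : 0 ≤ ∫ x in p..q, g x := by
        refine intervalIntegral.integral_nonneg hpq fun x hx => ?_
        have hux : 0 ≤ u x := (hspos x (lt_of_lt_of_le hp hx.1)).le
        have : (0:ℝ) ≤ κ ^ 2 / (c x) ^ 2 := by positivity
        exact mul_nonneg this hux
      linarith [heq p q]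
    have hder0 : ∀ p, s < p → deriv u p ≤ 0 := by
      intro p hp
      by_contra hpos'
      push_neg at hpos'
      have hlin : ∀ q, p ≤ q → u p + deriv u p * (q - p) ≤ u q := by
        intro q hq
        have h1 : ∫ _t in p..q, deriv u p ≤ ∫ t in p..q, deriv u t := by
          refine intervalIntegral.integral_mono_on hq intervalIntegrable_const
            (hu'.intervalIntegrable _ _) fun x hx => hmono p x hp hx.1
        rw [intervalIntegral.integral_const, FTCu p q, smul_eq_mul] at h1
        linarith
      have htop : Tendsto u atTop atTop := by
        refine tendsto_atTop_mono' atTop (eventually_atTop.mpr ⟨p, fun q hq => hlin q hq⟩) ?_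
        have l1 : Tendsto (fun q : ℝ => q - p) atTop atTop :=
          tendsto_atTop_add_const_right _ _ tendsto_id
        have l2 : Tendsto (fun q : ℝ => deriv u p * (q - p)) atTop atTop :=
          Tendsto.const_mul_atTop hpos' l1
        exact tendsto_atTop_add_const_left _ _ l2
      exact (hu0.not_tendsto (disjoint_nhds_atTop 0)) htop
    have hanti : ∀ p q : ℝ, s < p → p ≤ q → u q ≤ u p := by
      intro p q hp hpq
      have h1 : ∫ t in p..q, deriv u t ≤ ∫ _t in p..q, (0:ℝ) := by
        refine intervalIntegral.integral_mono_on hpq (hu'.intervalIntegrable _ _)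
          intervalIntegrable_const fun x hx => hder0 x (lt_of_lt_of_le hp hx.1)
      rw [FTCu p q] at h1
      simp at h1
      linarith
    set q₀ := max R (s + 1) with hq₀def
    have hq₀ : 0 < u q₀ := hR q₀ (le_max_left _ _)
    have hsq : s < q₀ := lt_of_lt_of_le (lt_add_one s) (le_max_right _ _)
    have hcont : Tendsto u (𝓝[>] s) (𝓝 (u s)) := (huc.tendsto s).mono_left nhdsWithin_le_nhds
    have hev2 : ∀ᶠ p in 𝓝[>] s, u q₀ ≤ u p := by
      filter_upwards [Ioo_mem_nhdsGT_of_mem (Set.left_mem_Ico.mpr hsq)] with p hp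
      exact hanti p q₀ hp.1 hp.2.le
    have hle : u q₀ ≤ u s := ge_of_tendsto hcont hev2
    have : u s ≤ 0 := hs
    linarith
  -- global monotonicity of deriv u
  have hMono : Monotone (deriv u) := by
    intro p q hpq
    have hnn : 0 ≤ ∫ x in p..q, g x := by
      refine intervalIntegral.integral_nonneg hpq fun x _ => ?_
      exact mul_nonneg (by positivity) (hupos x).le
    linarith [heq p q]
  have hder0 : ∀ p : ℝ, deriv u p ≤ 0 := by
    intro p
    by_contra hpos'
    push_neg at hpos'
    have hlin : ∀ q, p ≤ q → u p + deriv u p * (q - p) ≤ u q := by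
      intro q hq
      have h1 : ∫ _t in p..q, deriv u p ≤ ∫ t in p..q, deriv u t := by
        refine intervalIntegral.integral_mono_on hq intervalIntegrable_const
          (hu'.intervalIntegrable _ _) fun x hx => hMono hx.1
      rw [intervalIntegral.integral_const, FTCu p q, smul_eq_mul] at h1
      linarith
    have htop : Tendsto u atTop atTop := by
      refine tendsto_atTop_mono' atTop (eventually_atTop.mpr ⟨p, fun q hq => hlin q hq⟩) ?_
      have l1 : Tendsto (fun q : ℝ => q - p) atTop atTop :=
        tendsto_atTop_add_const_right _ _ tendsto_id
      have l2 : Tendsto (fun q : ℝ => deriv u p * (q - p)) atTop atTop :=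
        Tendsto.const_mul_atTop hpos' l1
      exact tendsto_atTop_add_const_left _ _ l2
    exact (hu0.not_tendsto (disjoint_nhds_atTop 0)) htop
  -- the function f = exp(κβ·)
  set f : ℝ → ℝ := fun x => Real.exp (κ * β * x) with hfdef
  have hfd : ∀ x, HasDerivAt f (κ * β * f x) x := by
    intro x
    have h1 : HasDerivAt (fun y : ℝ => κ * β * y) (κ * β) x := by
      simpa using (hasDerivAt_id x).const_mul (κ * β)
    simpa [hfdef, mul_comm] using h1.exp
  have hfC : ContDiff ℝ 1 f :=
    (Real.contDiff_exp.comp (contDiff_const.mul contDiff_id)).of_le le_top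
  have hfc : Continuous f := hfC.continuous
  have hfpos : ∀ x, 0 < f x := fun x => Real.exp_pos _
  set Ψ : ℝ → ℝ := fun x => f x * (deriv u x + κ * β * u x) with hΨdef
  have hΨc : Continuous Ψ := hfc.mul (hu'.add (continuous_const.mul huc))
  set φ : ℝ → ℝ := fun x => f x * u x with hφdef
  have hφd : ∀ x, HasDerivAt φ (Ψ x) x := by
    intro x
    have h1 : HasDerivAt (fun y => f y * u y) _ x := (hfd x).fun_mul (hud x).hasDerivAt
    convert h1 using 1
    rw [hΨdef]
    ring
  -- the key integral identity for Ψ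
  have hf'c : Continuous (deriv f) := by
    have : deriv f = fun x => κ * β * f x := funext fun x => (hfd x).deriv
    rw [this]
    exact continuous_const.mul hfc
  set E : ℝ → ℝ := fun x => f x * g x - κ ^ 2 * β ^ 2 * (f x * u x) with hEdef
  have hEii : ∀ a b : ℝ, IntervalIntegrable E volume a b := fun a b =>
    ((hgi a b).continuousOn_mul hfc.continuousOn).sub
      ((continuous_const.mul (hfc.mul huc)).intervalIntegrable _ _)
  have hΨeq : ∀ a t : ℝ, a ≤ t →
      Ψ t = Ψ a + (∫ x in a..t, E x) + 2 * (κ * β) * ∫ x in a..t, Ψ x := by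
    intro a t hat
    have h1 := ibp (deriv u) g f hu' hgm hgi heq hfC hat
    have hd2 : ∀ x : ℝ, HasDerivAt (fun y => f y * u y)
        (κ * β * (f x * u x) + f x * deriv u x) x := by
      intro x
      have h : HasDerivAt (fun y => f y * u y) _ x := (hfd x).fun_mul (hud x).hasDerivAt
      convert h using 1
      ring
    have h2 : ∫ x in a..t, (κ * β * (f x * u x) + f x * deriv u x)
        = f t * u t - f a * u a :=
      intervalIntegral.integral_eq_sub_of_hasDerivAt (fun x _ => hd2 x)
        (((continuous_const.mul (hfc.mul huc)).add (hfc.mul hu')).intervalIntegrable _ _)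
    have h3 : (fun x => E x + 2 * (κ * β) * Ψ x)
        = fun x => (deriv f x * deriv u x + f x * g x)
            + (κ * β) * (κ * β * (f x * u x) + f x * deriv u x) := by
      funext x
      simp only [hEdef, hΨdef, hgdef]
      rw [(hfd x).deriv]
      ring
    have i1 : IntervalIntegrable (fun x => deriv f x * deriv u x + f x * g x) volume a t :=
      ((hf'c.mul hu').intervalIntegrable _ _).add
        ((hgi a t).continuousOn_mul hfc.continuousOn)
    have i2 : IntervalIntegrable
        (fun x => (κ * β) * (κ * β * (f x * u x) + f x * deriv u x)) volume a t :=
      (continuous_const.mul ((continuous_const.mul (hfc.mul huc)).add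
        (hfc.mul hu'))).intervalIntegrable _ _
    have hAB : (∫ x in a..t, E x) + 2 * (κ * β) * (∫ x in a..t, Ψ x)
        = (f t * deriv u t - f a * deriv u a) + (κ * β) * (f t * u t - f a * u a) := by
      have e1 : (∫ x in a..t, E x) + 2 * (κ * β) * (∫ x in a..t, Ψ x)
          = ∫ x in a..t, (E x + 2 * (κ * β) * Ψ x) := by
        rw [intervalIntegral.integral_add (hEii a t)
          ((hΨc.intervalIntegrable a t).const_mul _), intervalIntegral.integral_const_mul]
      rw [e1, h3, intervalIntegral.integral_add i1 i2, ← h1,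
        intervalIntegral.integral_const_mul, h2]
    have hΨsub : Ψ t - Ψ a
        = (f t * deriv u t - f a * deriv u a) + (κ * β) * (f t * u t - f a * u a) := by
      simp only [hΨdef]
      ring
    linarith [hAB, hΨsub]
  -- nonnegativity of ∫ E on ordered intervals
  have hEnn : ∀ a t : ℝ, a ≤ t → 0 ≤ ∫ x in a..t, E x := by
    intro a t hat
    rw [intervalIntegral.integral_of_le hat]
    refine setIntegral_nonneg_ae measurableSet_Ioc ?_
    filter_upwards [hβ] with x hx
    intro _
    have hc2 : (c x) ^ 2 ≠ 0 := by
      intro h0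
      rw [one_div, h0, inv_zero] at hx
      nlinarith
    have hdivmul : κ ^ 2 / (c x) ^ 2 = κ ^ 2 * (1 / (c x) ^ 2) := by
      field_simp
    have hE : E x = f x * u x * (κ ^ 2 * (1 / (c x) ^ 2) - κ ^ 2 * β ^ 2) := by
      simp only [hEdef, hgdef, hdivmul]
      ring
    rw [hE]
    have h1 : κ ^ 2 * β ^ 2 ≤ κ ^ 2 * (1 / (c x) ^ 2) :=
      mul_le_mul_of_nonneg_left hx (by positivity)
    have h2 : 0 ≤ f x * u x := mul_nonneg (hfpos x).le (hupos x).le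
    nlinarith
  -- Ψ is everywhere nonpositive
  have hΨ0 : ∀ x, Ψ x ≤ 0 := by
    by_contra hcon
    push_neg at hcon
    obtain ⟨a, ha⟩ := hcon
    set y : ℝ → ℝ := fun t => ∫ x in a..t, Ψ x with hydef
    have hyt : ∀ t, y t = ∫ x in a..t, Ψ x := fun _ => rfl
    have hyd : ∀ t, HasDerivAt y (Ψ t) t := by
      intro t
      exact intervalIntegral.integral_hasDerivAt_right (hΨc.intervalIntegrable a t)
        (hΨc.stronglyMeasurableAtFilter volume (𝓝 t)) hΨc.continuousAt
    set cc : ℝ := 2 * (κ * β) with hccdef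
    have hcc : 0 < cc := by positivity
    set D : ℝ := Ψ a / cc with hDdef
    have hD : 0 < D := div_pos ha hcc
    set z : ℝ → ℝ := fun t => Real.exp (-(cc * t)) * (y t + D) with hzdef
    have hed : ∀ t : ℝ, HasDerivAt (fun s : ℝ => Real.exp (-(cc * s)))
        (-cc * Real.exp (-(cc * t))) t := by
      intro t
      have h1 : HasDerivAt (fun s : ℝ => -(cc * s)) (-cc) t := by
        simpa using ((hasDerivAt_id t).const_mul cc).fun_neg
      simpa [mul_comm] using h1.exp
    have hzd : ∀ t, HasDerivAt z (Real.exp (-(cc * t)) * (Ψ t - cc * (y t + D))) t := by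
      intro t
      have h1 : HasDerivAt (fun s => Real.exp (-(cc * s)) * (y s + D)) _ t :=
        (hed t).fun_mul ((hyd t).add_const D)
      convert h1 using 1
      ring
    have hzmono : MonotoneOn z (Ici a) := by
      refine monotoneOn_of_deriv_nonneg (convex_Ici a) ?_ ?_ ?_
      · exact (continuous_iff_continuousAt.mpr
          fun t => (hzd t).continuousAt).continuousOn
      · exact fun t _ => (hzd t).differentiableAt.differentiableWithinAt
      · intro t ht
        rw [interior_Ici] at ht
        rw [(hzd t).deriv]
        have hint : Ψ t - cc * (y t + D) = ∫ x in a..t, E x := by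
          have h7 := hΨeq a t (le_of_lt ht)
          have hcD : cc * D = Ψ a := by
            rw [hDdef]
            field_simp
          rw [← hyt t] at h7
          linear_combination h7 - hcD
        rw [hint]
        exact mul_nonneg (Real.exp_pos _).le (hEnn a t (le_of_lt ht))
    have hy0 : ∀ t, a ≤ t → 0 ≤ y t := by
      intro t ht
      have h2 : z a ≤ z t := hzmono self_mem_Ici ht ht
      have hya : y a = 0 := intervalIntegral.integral_same
      have h3 : Real.exp (-(cc * a)) * D ≤ Real.exp (-(cc * t)) * (y t + D) := by
        have hz1 : z a = Real.exp (-(cc * a)) * (y a + D) := rfl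
        have hz2 : z t = Real.exp (-(cc * t)) * (y t + D) := rfl
        rw [hz1, hz2, hya] at h2
        simpa using h2
      have h4 : Real.exp (-(cc * t)) ≤ Real.exp (-(cc * a)) :=
        Real.exp_le_exp.mpr (by nlinarith)
      have h5 : Real.exp (-(cc * t)) * D ≤ Real.exp (-(cc * t)) * (y t + D) :=
        le_trans (mul_le_mul_of_nonneg_right h4 hD.le) h3
      have h6 : D ≤ y t + D :=
        le_of_mul_le_mul_left h5 (Real.exp_pos _)
      linarith
    have hΨge : ∀ t, a ≤ t → Ψ a ≤ Ψ t := by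
      intro t ht
      have h1 := hΨeq a t ht
      rw [← hyt t] at h1
      have h2 := hEnn a t ht
      have h3 := hy0 t ht
      nlinarith [mul_nonneg (mul_nonneg hκ.le hβ0.le) h3]
    have hgrow : ∀ t, a ≤ t → φ a + Ψ a * (t - a) ≤ φ t := by
      intro t ht
      set h : ℝ → ℝ := fun s => φ s - Ψ a * s with hhdef
      have hhd : ∀ s, HasDerivAt h (Ψ s - Ψ a) s := by
        intro s
        have h1 : HasDerivAt (fun s : ℝ => Ψ a * s) (Ψ a) s := by
          simpa using (hasDerivAt_id s).const_mul (Ψ a)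
        exact (hφd s).sub h1
      have hhm : MonotoneOn h (Ici a) := by
        refine monotoneOn_of_deriv_nonneg (convex_Ici a) ?_ ?_ ?_
        · exact (continuous_iff_continuousAt.mpr
            fun s => (hhd s).continuousAt).continuousOn
        · exact fun s _ => (hhd s).differentiableAt.differentiableWithinAt
        · intro s hs
          rw [interior_Ici] at hs
          rw [(hhd s).deriv]
          linarith [hΨge s (le_of_lt hs)]
      have hmm := hhm self_mem_Ici ht ht
      have hh1 : h a = φ a - Ψ a * a := rfl
      have hh2 : h t = φ t - Ψ a * t := rfl
      rw [hh1, hh2] at hmm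
      nlinarith
    have hφtop : Tendsto φ atTop atTop := by
      refine tendsto_atTop_mono' atTop
        (eventually_atTop.mpr ⟨a, fun t ht => hgrow t ht⟩) ?_
      have l1 : Tendsto (fun t : ℝ => t - a) atTop atTop :=
        tendsto_atTop_add_const_right _ _ tendsto_id
      have l2 : Tendsto (fun t : ℝ => Ψ a * (t - a)) atTop atTop :=
        Tendsto.const_mul_atTop ha l1
      exact tendsto_atTop_add_const_left _ _ l2
    have hφ0 : Tendsto φ atTop (𝓝 0) := by
      have h1 := (exp_decay_tendsto (show 0 < κ * (1 - β) by nlinarith)).mul hlim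
      rw [zero_mul] at h1
      refine h1.congr fun x => ?_
      show _ = Real.exp (κ * β * x) * u x
      rw [← mul_assoc, ← Real.exp_add]
      congr 2
      ring
    exact (hφ0.not_tendsto (disjoint_nhds_atTop 0)) hφtop
  -- conclusions
  have hΨle : ∀ x, deriv u x + κ * β * u x ≤ 0 := by
    intro x
    have h1 := hΨ0 x
    simp only [hΨdef] at h1
    nlinarith [hfpos x]
  have hφanti : Antitone φ := by
    refine antitone_of_deriv_nonpos (fun x => (hφd x).differentiableAt) fun x => ?_
    rw [(hφd x).deriv]
    exact hΨ0 x
  exact ⟨hupos, hΨle, fun x t hxt => hφanti hxt, hu0, hder0, hMono⟩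

lemma g_meas_int (c : ℝ → ℝ) (hm : Measurable c) {c₀ cM : ℝ} (hc₀ : 0 < c₀)
    (hae : ∀ᵐ x : ℝ, c₀ < c x ∧ c x ≤ cM) (κ : ℝ) (u : ℝ → ℝ) (huc : Continuous u) :
    Measurable (fun x => κ ^ 2 / (c x) ^ 2 * u x) ∧
      ∀ a b : ℝ, IntervalIntegrable (fun x => κ ^ 2 / (c x) ^ 2 * u x) volume a b := by
  refine ⟨(measurable_const.div (hm.pow_const 2)).mul huc.measurable, fun a b => ?_⟩
  rw [intervalIntegrable_iff]
  obtain ⟨Cu, hCu⟩ := isCompact_uIcc.exists_bound_of_continuousOn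
    (huc.continuousOn : ContinuousOn u (uIcc a b))
  refine Integrable.mono' (g := fun _ => κ ^ 2 / c₀ ^ 2 * Cu)
    (integrableOn_const (C := κ ^ 2 / c₀ ^ 2 * Cu) measure_Ioc_lt_top.ne)
    (((measurable_const.div (hm.pow_const 2)).mul
      huc.measurable).aestronglyMeasurable.restrict) ?_
  have h1 : ∀ᵐ x ∂(volume.restrict (uIoc a b)), c₀ < c x ∧ c x ≤ cM := ae_restrict_of_ae hae
  have h2 : ∀ᵐ x ∂(volume.restrict (uIoc a b)), x ∈ uIoc a b :=
    ae_restrict_mem measurableSet_uIoc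
  filter_upwards [h1, h2] with x hx hxm
  have hcx : c₀ ^ 2 ≤ (c x) ^ 2 := by nlinarith [hx.1]
  have hdiv : κ ^ 2 / (c x) ^ 2 ≤ κ ^ 2 / c₀ ^ 2 :=
    div_le_div_of_nonneg_left (by positivity) (by positivity) hcx
  have hub : |u x| ≤ Cu := by simpa using hCu x (uIoc_subset_uIcc hxm)
  have hge : ‖κ ^ 2 / (c x) ^ 2 * u x‖ = κ ^ 2 / (c x) ^ 2 * |u x| := by
    simp [abs_mul, abs_of_nonneg (show (0:ℝ) ≤ κ ^ 2 / (c x) ^ 2 by positivity)]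
  rw [hge]
  exact mul_le_mul hdiv hub (abs_nonneg _) (by positivity)

lemma main_est (c₁ c₂ : ℝ → ℝ) (hm₁ : Measurable c₁) (hm₂ : Measurable c₂)
    {c₀₁ c₀₂ cM₁ cM₂ : ℝ} (hc₀₁ : 0 < c₀₁) (hc₀₂ : 0 < c₀₂)
    (hae₁ : ∀ᵐ x : ℝ, c₀₁ < c₁ x ∧ c₁ x ≤ cM₁)
    (hae₂ : ∀ᵐ x : ℝ, c₀₂ < c₂ x ∧ c₂ x ≤ cM₂)
    (hq : Integrable (fun x => qfun c₁ x - qfun c₂ x))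
    {κ : ℝ} (hκ : 0 < κ) (u v : ℝ → ℝ)
    (hC1u : ContDiff ℝ 1 u)
    (hequ : ∀ a b : ℝ, deriv u b = deriv u a + ∫ x in a..b, (κ ^ 2 / (c₁ x) ^ 2) * u x)
    (hlimu : Tendsto (fun x : ℝ => Real.exp (κ * x) * u x) atTop (𝓝 1))
    (hC1v : ContDiff ℝ 1 v)
    (heqv : ∀ a b : ℝ, deriv v b = deriv v a + ∫ x in a..b, (κ ^ 2 / (c₂ x) ^ 2) * v x)
    (hlimv : Tendsto (fun x : ℝ => Real.exp (κ * x) * v x) atTop (𝓝 1))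
    {β₁ β₂ : ℝ} (hβ₁0 : 0 < β₁) (hβ₁1 : β₁ < 1) (hβ₁ : ∀ᵐ x : ℝ, β₁ ^ 2 ≤ 1 / (c₁ x) ^ 2)
    (hβ₂0 : 0 < β₂) (hβ₂1 : β₂ < 1) (hβ₂ : ∀ᵐ x : ℝ, β₂ ^ 2 ≤ 1 / (c₂ x) ^ 2) :
    (∫ x : ℝ, |(-(deriv u x)) / (κ * u x) - (-(deriv v x)) / (κ * v x)|) ≤
      (1 / (β₁ + β₂)) * ∫ x : ℝ, |qfun c₁ x - qfun c₂ x| := by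
  obtain ⟨hupos, hΨu, hdecu, hu0, hdu0, hduM⟩ :=
    jost_facts c₁ hm₁ c₀₁ cM₁ hc₀₁ hae₁ κ hκ u hC1u hequ hlimu β₁ hβ₁0 hβ₁1 hβ₁
  obtain ⟨hvpos, hΨv, hdecv, hv0, hdv0, hdvM⟩ :=
    jost_facts c₂ hm₂ c₀₂ cM₂ hc₀₂ hae₂ κ hκ v hC1v heqv hlimv β₂ hβ₂0 hβ₂1 hβ₂
  have huc : Continuous u := hC1u.continuous
  have hvc : Continuous v := hC1v.continuous
  have hu' : Continuous (deriv u) := hC1u.continuous_deriv le_rfl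
  have hv' : Continuous (deriv v) := hC1v.continuous_deriv le_rfl
  obtain ⟨hg₁m, hg₁i⟩ := g_meas_int c₁ hm₁ hc₀₁ hae₁ κ u huc
  obtain ⟨hg₂m, hg₂i⟩ := g_meas_int c₂ hm₂ hc₀₂ hae₂ κ v hvc
  set ρ : ℝ → ℝ := fun t => |qfun c₁ t - qfun c₂ t| with hρdef
  have hρnn : ∀ t, 0 ≤ ρ t := fun t => abs_nonneg _
  have hρi : Integrable ρ := hq.abs
  have hρm : Measurable ρ := by
    have h1 : Measurable (qfun c₁) :=
      measurable_const.sub (measurable_const.div (hm₁.pow_const 2))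
    have h2 : Measurable (qfun c₂) :=
      measurable_const.sub (measurable_const.div (hm₂.pow_const 2))
    exact (h1.sub h2).abs
  set σ : ℝ := κ * (β₁ + β₂) with hσdef
  have hσ : 0 < σ := by positivity
  -- the Wronskian-type function
  set W : ℝ → ℝ := fun x => u x * deriv v x - deriv u x * v x with hWdef
  have hWeq : ∀ x b : ℝ, x ≤ b →
      W b - W x = ∫ t in x..b, κ ^ 2 * (u t * v t) * (qfun c₁ t - qfun c₂ t) := by
    intro x b hxb
    have i1 := ibp (deriv v) (fun x => κ ^ 2 / (c₂ x) ^ 2 * v x) u hv' hg₂m hg₂i heqv hC1u hxb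
    have i2 := ibp (deriv u) (fun x => κ ^ 2 / (c₁ x) ^ 2 * u x) v hu' hg₁m hg₁i hequ hC1v hxb
    have j1 : IntervalIntegrable
        (fun t => deriv u t * deriv v t + u t * (κ ^ 2 / (c₂ t) ^ 2 * v t)) volume x b :=
      ((hu'.mul hv').intervalIntegrable _ _).add
        ((hg₂i x b).continuousOn_mul huc.continuousOn)
    have j2 : IntervalIntegrable
        (fun t => deriv v t * deriv u t + v t * (κ ^ 2 / (c₁ t) ^ 2 * u t)) volume x b :=
      ((hv'.mul hu').intervalIntegrable _ _).add
        ((hg₁i x b).continuousOn_mul hvc.continuousOn)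
    have hsub : W b - W x =
        (∫ t in x..b, (deriv u t * deriv v t + u t * (κ ^ 2 / (c₂ t) ^ 2 * v t)))
          - ∫ t in x..b, (deriv v t * deriv u t + v t * (κ ^ 2 / (c₁ t) ^ 2 * u t)) := by
      rw [← i1, ← i2, hWdef]
      ring
    rw [hsub, ← intervalIntegral.integral_sub j1 j2]
    refine intervalIntegral.integral_congr fun t _ => ?_
    simp only [qfun]
    ring
  -- exponential decay of the product u * v
  have hdecay : ∀ x t : ℝ, x ≤ t →
      u t * v t ≤ (u x * v x) * Real.exp (-(σ * (t - x))) := by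
    intro x t hxt
    have h12 := mul_le_mul (hdecu x t hxt) (hdecv x t hxt)
      (mul_nonneg (Real.exp_pos _).le (hvpos t).le)
      (mul_nonneg (Real.exp_pos _).le (hupos x).le)
    have key : Real.exp (σ * t) * (u t * v t) ≤ Real.exp (σ * x) * (u x * v x) := by
      have e1 : Real.exp (σ * t) * (u t * v t)
          = Real.exp (κ * β₁ * t) * u t * (Real.exp (κ * β₂ * t) * v t) := by
        rw [show σ * t = κ * β₁ * t + κ * β₂ * t by rw [hσdef]; ring, Real.exp_add]
        ring
      have e2 : Real.exp (σ * x) * (u x * v x)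
          = Real.exp (κ * β₁ * x) * u x * (Real.exp (κ * β₂ * x) * v x) := by
        rw [show σ * x = κ * β₁ * x + κ * β₂ * x by rw [hσdef]; ring, Real.exp_add]
        ring
      rw [e1, e2]
      exact h12
    calc u t * v t = Real.exp (-(σ * t)) * (Real.exp (σ * t) * (u t * v t)) := by
          rw [← mul_assoc, ← Real.exp_add]
          simp
      _ ≤ Real.exp (-(σ * t)) * (Real.exp (σ * x) * (u x * v x)) :=
          mul_le_mul_of_nonneg_left key (Real.exp_pos _).le
      _ = (u x * v x) * Real.exp (-(σ * (t - x))) := by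
          rw [← mul_assoc, ← Real.exp_add, show -(σ * t) + σ * x = -(σ * (t - x)) by ring]
          ring
  -- integrability of the decayed kernel on right half-lines
  have hconte : ∀ x : ℝ, Continuous (fun t : ℝ => Real.exp (-(σ * (t - x)))) := by
    intro x
    exact Real.continuous_exp.comp ((continuous_const.mul
      (continuous_id.sub continuous_const)).neg)
  have hJint : ∀ x : ℝ, IntegrableOn (fun t => Real.exp (-(σ * (t - x))) * ρ t) (Ici x) := by
    intro x
    refine Integrable.mono' hρi.integrableOn
      (((hconte x).aestronglyMeasurable.mul hρm.aestronglyMeasurable).restrict) ?_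
    filter_upwards [ae_restrict_mem (measurableSet_Ici : MeasurableSet (Ici x))] with t ht
    have h1 : Real.exp (-(σ * (t - x))) ≤ 1 := by
      rw [Real.exp_le_one_iff]
      have : x ≤ t := ht
      nlinarith
    have h2 : ‖Real.exp (-(σ * (t - x))) * ρ t‖ = Real.exp (-(σ * (t - x))) * ρ t := by
      rw [Real.norm_eq_abs, abs_of_nonneg (mul_nonneg (Real.exp_pos _).le (hρnn t))]
    rw [h2]
    nlinarith [hρnn t, Real.exp_pos (-(σ * (t - x)))]
  have hJnn : ∀ x : ℝ, 0 ≤ ∫ t in Ici x, Real.exp (-(σ * (t - x))) * ρ t := fun x =>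
    setIntegral_nonneg measurableSet_Ici fun t _ =>
      mul_nonneg (Real.exp_pos _).le (hρnn t)
  -- W tends to 0 at +∞
  have hW0 : Tendsto W atTop (𝓝 0) := by
    have hub : ∀ b : ℝ, 0 ≤ b → ‖W b‖ ≤ u b * |deriv v 0| + |deriv u 0| * v b := by
      intro b hb
      have h1 : |deriv u b| ≤ |deriv u 0| := by
        have := hduM hb
        have h2 := hdu0 b
        have h3 := hdu0 0
        rw [abs_of_nonpos h2, abs_of_nonpos h3]
        linarith
      have h1' : |deriv v b| ≤ |deriv v 0| := by
        have := hdvM hb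
        have h2 := hdv0 b
        have h3 := hdv0 0
        rw [abs_of_nonpos h2, abs_of_nonpos h3]
        linarith
      calc ‖W b‖ ≤ |u b * deriv v b| + |deriv u b * v b| := abs_sub _ _
        _ = u b * |deriv v b| + |deriv u b| * v b := by
            rw [abs_mul, abs_mul, abs_of_pos (hupos b), abs_of_pos (hvpos b)]
        _ ≤ u b * |deriv v 0| + |deriv u 0| * v b := by
            have := mul_le_mul_of_nonneg_left h1' (hupos b).le
            have := mul_le_mul_of_nonneg_right h1 (hvpos b).le
            linarith
    have hlim0 : Tendsto (fun b => u b * |deriv v 0| + |deriv u 0| * v b) atTop (𝓝 0) := by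
      have l1 := hu0.mul_const |deriv v 0|
      have l2 := hv0.const_mul |deriv u 0|
      have := l1.add l2
      simpa using this
    exact squeeze_zero_norm' (eventually_atTop.mpr ⟨0, hub⟩) hlim0
  -- pointwise bound on |W|
  have hWbound : ∀ x : ℝ, |W x| ≤
      κ ^ 2 * (u x * v x) * ∫ t in Ici x, Real.exp (-(σ * (t - x))) * ρ t := by
    intro x
    set J : ℝ := ∫ t in Ici x, Real.exp (-(σ * (t - x))) * ρ t with hJdef
    have hkey : ∀ b : ℝ, x ≤ b → |W x| ≤ |W b| + κ ^ 2 * (u x * v x) * J := by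
      intro b hxb
      have h1 := hWeq x b hxb
      have h2 : |W x| ≤ |W b| + |∫ t in x..b, κ ^ 2 * (u t * v t) * (qfun c₁ t - qfun c₂ t)| := by
        have : W x = W b - ∫ t in x..b, κ ^ 2 * (u t * v t) * (qfun c₁ t - qfun c₂ t) := by
          linarith
        rw [this]
        exact abs_sub _ _
      have hqii : IntervalIntegrable (fun t => qfun c₁ t - qfun c₂ t) volume x b :=
        hq.intervalIntegrable
      have hii : IntervalIntegrable
          (fun t => κ ^ 2 * (u t * v t) * (qfun c₁ t - qfun c₂ t)) volume x b :=
        hqii.continuousOn_mul ((continuous_const.mul (huc.mul hvc)).continuousOn)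
      have h3 : |∫ t in x..b, κ ^ 2 * (u t * v t) * (qfun c₁ t - qfun c₂ t)|
          ≤ ∫ t in x..b, |κ ^ 2 * (u t * v t) * (qfun c₁ t - qfun c₂ t)| :=
        intervalIntegral.abs_integral_le_integral_abs hxb
      have h4 : ∫ t in x..b, |κ ^ 2 * (u t * v t) * (qfun c₁ t - qfun c₂ t)|
          ≤ ∫ t in x..b, κ ^ 2 * (u x * v x) * (Real.exp (-(σ * (t - x))) * ρ t) := by
        refine intervalIntegral.integral_mono_on hxb hii.abs ?_ ?_
        · have hρii : IntervalIntegrable ρ volume x b := hρi.intervalIntegrable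
          exact (hρii.continuousOn_mul (hconte x).continuousOn).const_mul _
        · intro t ht
          have h5 : |κ ^ 2 * (u t * v t) * (qfun c₁ t - qfun c₂ t)|
              = κ ^ 2 * (u t * v t) * ρ t := by
            rw [abs_mul, abs_of_nonneg (mul_nonneg (by positivity : (0:ℝ) ≤ κ ^ 2)
              (mul_pos (hupos t) (hvpos t)).le)]
          rw [h5]
          have h6 := hdecay x t ht.1
          nlinarith [hρnn t, mul_le_mul_of_nonneg_right h6 (hρnn t),
            sq_nonneg κ, mul_pos (hupos x) (hvpos x)]
      have h7 : ∫ t in x..b, κ ^ 2 * (u x * v x) * (Real.exp (-(σ * (t - x))) * ρ t)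
          ≤ κ ^ 2 * (u x * v x) * J := by
        rw [intervalIntegral.integral_const_mul]
        refine mul_le_mul_of_nonneg_left ?_
          (mul_nonneg (by positivity : (0:ℝ) ≤ κ ^ 2) (mul_pos (hupos x) (hvpos x)).le)
        rw [intervalIntegral.integral_of_le hxb]
        refine setIntegral_mono_set (hJint x) ?_ ?_
        · refine Filter.Eventually.of_forall fun t => ?_
          simp only [Pi.zero_apply]
          exact mul_nonneg (Real.exp_pos _).le (hρnn t)
        · exact HasSubset.Subset.eventuallyLE (fun t ht => le_of_lt ht.1)
      linarith
    have hlimb : Tendsto (fun b => |W b| + κ ^ 2 * (u x * v x) * J) atTop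
        (𝓝 (κ ^ 2 * (u x * v x) * J)) := by
      have := (hW0.abs).add (tendsto_const_nhds (x := κ ^ 2 * (u x * v x) * J))
      simpa using this
    exact ge_of_tendsto hlimb (eventually_atTop.mpr ⟨x, hkey⟩)
  -- the dominating kernel and its Fubini computation
  set F : ℝ → ℝ → ℝ :=
    fun x t => if x ≤ t then κ * Real.exp (-(σ * (t - x))) * ρ t else 0 with hFdef
  have hFnn : ∀ x t, 0 ≤ F x t := by
    intro x t
    simp only [hFdef]
    split
    · positivity
    · exact le_refl 0
  have hFmu : AEStronglyMeasurable (Function.uncurry F) (volume.prod volume) := by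
    have he : Function.uncurry F = fun p : ℝ × ℝ =>
        {q : ℝ × ℝ | q.1 ≤ q.2}.indicator
          (fun q => κ * Real.exp (-(σ * (q.2 - q.1))) * ρ q.2) p := by
      ext p
      by_cases hp : p.1 ≤ p.2
      · rw [indicator_of_mem (show p ∈ {q : ℝ × ℝ | q.1 ≤ q.2} from hp)]
        simp only [Function.uncurry, hFdef]
        rw [if_pos hp]
      · rw [indicator_of_notMem (show p ∉ {q : ℝ × ℝ | q.1 ≤ q.2} from hp)]
        simp only [Function.uncurry, hFdef]
        rw [if_neg hp]
    rw [he]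
    refine (Measurable.indicator ?_ ?_).aestronglyMeasurable
    · exact (measurable_const.mul (Real.measurable_exp.comp
        ((measurable_const.mul (measurable_snd.sub measurable_fst)).neg))).mul
        (hρm.comp measurable_snd)
    · exact measurableSet_le measurable_fst measurable_snd
  have hsec : ∀ t : ℝ, (fun x => F x t)
      = (Iic t).indicator (fun x => (κ * ρ t) * Real.exp (σ * (x - t))) := by
    intro t
    ext x
    by_cases hx : x ≤ t
    · rw [indicator_of_mem (show x ∈ Iic t from hx)]
      simp only [hFdef]
      rw [if_pos hx, show -(σ * (t - x)) = σ * (x - t) by ring]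
      ring
    · rw [indicator_of_notMem (show x ∉ Iic t from hx)]
      simp only [hFdef]
      rw [if_neg hx]
  have hsecint : ∀ t : ℝ, Integrable (fun x => F x t) := by
    intro t
    rw [hsec t]
    exact (integrable_indicator_iff measurableSet_Iic).mpr
      ((exp_mul_integrableOn_Iic hσ t).const_mul _)
  have hsecval : ∀ t : ℝ, (∫ x, F x t) = (κ / σ) * ρ t := by
    intro t
    rw [hsec t, MeasureTheory.integral_indicator measurableSet_Iic,
      MeasureTheory.integral_const_mul, exp_mul_integral_Iic hσ t]
    field_simp
  have hFint : Integrable (Function.uncurry F) (volume.prod volume) := by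
    refine (integrable_prod_iff' hFmu).mpr ⟨?_, ?_⟩
    · exact Filter.Eventually.of_forall fun t => hsecint t
    · have he2 : (fun t => ∫ x, ‖Function.uncurry F (x, t)‖) = fun t => (κ / σ) * ρ t := by
        funext t
        have he3 : (fun x => ‖Function.uncurry F (x, t)‖) = fun x => F x t := by
          funext x
          show ‖F x t‖ = F x t
          rw [Real.norm_eq_abs, abs_of_nonneg (hFnn x t)]
        rw [he3]
        exact hsecval t
      rw [he2]
      exact hρi.const_mul _
  set G : ℝ → ℝ := fun x => ∫ t, F x t with hGdef
  have hGi : Integrable G := hFint.integral_prod_left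
  have hGval : ∀ x : ℝ, G x = κ * ∫ t in Ici x, Real.exp (-(σ * (t - x))) * ρ t := by
    intro x
    have h1 : (fun t => F x t)
        = (Ici x).indicator (fun t => κ * (Real.exp (-(σ * (t - x))) * ρ t)) := by
      ext t
      by_cases ht : x ≤ t
      · rw [indicator_of_mem (show t ∈ Ici x from ht)]
        simp only [hFdef]
        rw [if_pos ht]
        ring
      · rw [indicator_of_notMem (show t ∉ Ici x from ht)]
        simp only [hFdef]
        rw [if_neg ht]
    show (∫ t, F x t) = _
    rw [h1, MeasureTheory.integral_indicator measurableSet_Ici,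
      MeasureTheory.integral_const_mul]
  set d : ℝ → ℝ := fun x => (-(deriv u x)) / (κ * u x) - (-(deriv v x)) / (κ * v x)
    with hddef
  have hdG : ∀ x, |d x| ≤ G x := by
    intro x
    have hne1 : u x ≠ 0 := (hupos x).ne'
    have hne2 : v x ≠ 0 := (hvpos x).ne'
    have hκne : κ ≠ 0 := hκ.ne'
    have hpos : 0 < κ * (u x * v x) := mul_pos hκ (mul_pos (hupos x) (hvpos x))
    have hrepr : d x = W x / (κ * (u x * v x)) := by
      simp only [hddef, hWdef]
      field_simp
      ring
    rw [hrepr, hGval x, abs_div, abs_of_pos hpos, div_le_iff₀ hpos]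
    calc |W x| ≤ κ ^ 2 * (u x * v x) * ∫ t in Ici x, Real.exp (-(σ * (t - x))) * ρ t :=
          hWbound x
      _ = κ * (∫ t in Ici x, Real.exp (-(σ * (t - x))) * ρ t) * (κ * (u x * v x)) := by
          ring
  have hdc : Continuous d := by
    have h1 : Continuous fun x => (-(deriv u x)) / (κ * u x) :=
      hu'.neg.div (continuous_const.mul huc) fun x => mul_ne_zero hκ.ne' (hupos x).ne'
    have h2 : Continuous fun x => (-(deriv v x)) / (κ * v x) :=
      hv'.neg.div (continuous_const.mul hvc) fun x => mul_ne_zero hκ.ne' (hvpos x).ne'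
    exact h1.sub h2
  have hdint : Integrable d := by
    refine hGi.mono' hdc.aestronglyMeasurable (Filter.Eventually.of_forall fun x => ?_)
    rw [Real.norm_eq_abs]
    exact hdG x
  have habs : Integrable (fun x => |d x|) := hdint.abs
  have hle1 : (∫ x, |d x|) ≤ ∫ x, G x := integral_mono habs hGi fun x => hdG x
  have hswap : (∫ x, G x) = ∫ t, ∫ x, F x t := integral_integral_swap hFint
  have hval : (∫ t, ∫ x, F x t) = (κ / σ) * ∫ t, ρ t := by
    have h1 : (fun t => ∫ x, F x t) = fun t => (κ / σ) * ρ t := funext hsecval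
    rw [h1, MeasureTheory.integral_const_mul]
  have hfinal : κ / σ = 1 / (β₁ + β₂) := by
    rw [hσdef]
    rw [div_eq_div_iff (by positivity) (by positivity)]
    ring
  calc (∫ x, |d x|) ≤ ∫ x, G x := hle1
    _ = (κ / σ) * ∫ t, ρ t := by rw [hswap, hval]
    _ = (1 / (β₁ + β₂)) * ∫ x, |qfun c₁ x - qfun c₂ x| := by rw [hfinal]

/-- the elementary inequality behind the choice of `β₀ = 2/(2 + cM² γ₀)`. -/
lemma key_ineq {M g : ℝ} (hM : 0 < M) (hg : 0 ≤ g) :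
    (2 / (2 + M * g)) ^ 2 ≤ max (1 / M) (1 - g) := by
  have hden : 0 < 2 + M * g := by positivity
  rcases le_or_gt (4 * M) ((2 + M * g) ^ 2) with h | h
  · refine le_max_of_le_left ?_
    rw [div_pow, div_le_div_iff₀ (by positivity) hM]
    nlinarith
  · refine le_max_of_le_right ?_
    rw [div_pow, div_le_iff₀ (by positivity)]
    have ht : 0 ≤ M * g := mul_nonneg hM.le hg
    have h1 : M * (M * g) ≤ M * ((M * g) + 4) - ((M * g) + 2) ^ 2 := by nlinarith [h, sq_nonneg (M * g + 2)]
    have h2 : (M * g) * (M * (M * g)) ≤ (M * g) * (M * ((M * g) + 4) - ((M * g) + 2) ^ 2) :=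
      mul_le_mul_of_nonneg_left h1 ht
    have h3 : M * ((1 - g) * (2 + M * g) ^ 2 - 4)
        = (M * g) * (M * ((M * g) + 4) - ((M * g) + 2) ^ 2) := by ring
    have h4 : 0 ≤ M * ((1 - g) * (2 + M * g) ^ 2 - 4) := by
      nlinarith [h2, h3, mul_nonneg ht (mul_nonneg hM.le ht)]
    have h5 : 0 ≤ (1 - g) * (2 + M * g) ^ 2 - 4 := by
      by_contra h6
      push_neg at h6
      nlinarith
    nlinarith
  
lemma gamma0_facts (c : ℝ → ℝ) {c₀ cM : ℝ} (hc₀ : 0 < c₀)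
    (hae : ∀ᵐ x : ℝ, c₀ < c x ∧ c x ≤ cM) :
    0 ≤ gamma0 c ∧ ∀ᵐ x : ℝ, |qfun c x| ≤ gamma0 c := by
  have hne : (volume : Measure ℝ) ≠ 0 := by
    intro h
    have h2 := Real.volume_Ioo (a := 0) (b := 1)
    rw [h] at h2
    simp at h2
  haveI : (ae (volume : Measure ℝ)).NeBot := ae_neBot.mpr hne
  have hbdd : IsBoundedUnder (· ≤ ·) (ae (volume : Measure ℝ)) fun x => |qfun c x| := by
    refine ⟨1 + 1 / c₀ ^ 2, ?_⟩
    rw [eventually_map]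
    filter_upwards [hae] with x hx
    have hcx : 0 < c x := lt_trans hc₀ hx.1
    have h1 : 1 / (c x) ^ 2 ≤ 1 / c₀ ^ 2 :=
      one_div_le_one_div_of_le (by positivity) (by nlinarith [hx.1])
    have h2 : (0:ℝ) < 1 / (c x) ^ 2 := by positivity
    rw [qfun, abs_le]
    constructor <;> nlinarith
  constructor
  · exact le_limsup_of_frequently_le
      (Frequently.of_forall fun x => abs_nonneg (qfun c x)) hbdd
  · exact ae_le_essSup hbdd

lemma q_integrable (c : ℝ → ℝ) (hm : Measurable c) {c₀ cM : ℝ}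
    (hc₀ : 0 < c₀) (hae : ∀ᵐ x : ℝ, c₀ < c x ∧ c x ≤ cM)
    (h2 : HypH2 c) : Integrable (qfun c) := by
  obtain ⟨C, hC, δ, hδ, haeq⟩ := h2
  have hmq : Measurable (qfun c) :=
    measurable_const.sub (measurable_const.div (hm.pow_const 2))
  have hint0 : Integrable (fun x : ℝ => ((1:ℝ) + ‖x‖ ^ 2) ^ (-(1 + δ) / 2)) := by
    have h1 : ((Module.finrank ℝ ℝ : ℝ)) < 1 + δ := by
      rw [Module.finrank_self]
      norm_num
      linarith
    simpa [neg_div] using integrable_rpow_neg_one_add_norm_sq (E := ℝ) (μ := volume) h1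
  have hint : Integrable
      (fun x : ℝ => (C * ((cM + 1) / c₀ ^ 2)) * ((1:ℝ) + x ^ 2) ^ (-(1 + δ) / 2)) := by
    refine (hint0.const_mul (C * ((cM + 1) / c₀ ^ 2))).congr ?_
    refine Filter.Eventually.of_forall fun x => ?_
    norm_num [Real.norm_eq_abs, sq_abs]
  refine hint.mono' hmq.aestronglyMeasurable ?_
  filter_upwards [hae, haeq] with x hx hqx
  have hcx : 0 < c x := lt_trans hc₀ hx.1
  have e0 : qfun c x = (c x - 1) * (c x + 1) / (c x) ^ 2 := by
    rw [qfun]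
    field_simp
    ring
  have e1 : |qfun c x| = |c x - 1| * ((c x + 1) / (c x) ^ 2) := by
    rw [e0, ← mul_div_assoc, abs_div, abs_mul, abs_of_pos (by positivity : (0:ℝ) < c x + 1),
      abs_of_pos (by positivity : (0:ℝ) < (c x) ^ 2)]
  have e2 : (c x + 1) / (c x) ^ 2 ≤ (cM + 1) / c₀ ^ 2 := by
    refine div_le_div₀ (by nlinarith [hx.2]) (by nlinarith [hx.2]) (by positivity)
      (by nlinarith [hx.1])
  have hrpownn : (0:ℝ) ≤ (1 + x ^ 2) ^ (-(1 + δ) / 2) :=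
    Real.rpow_nonneg (by positivity) _
  rw [Real.norm_eq_abs, e1]
  calc |c x - 1| * ((c x + 1) / (c x) ^ 2)
      ≤ (C * (1 + x ^ 2) ^ (-(1 + δ) / 2)) * ((cM + 1) / c₀ ^ 2) := by
        refine mul_le_mul hqx e2 (by positivity) ?_
        exact mul_nonneg hC.le hrpownn
    _ = C * ((cM + 1) / c₀ ^ 2) * (1 + x ^ 2) ^ (-(1 + δ) / 2) := by ring

end WIKAux

/-- `L¹` comparison of `w₁(·, iκ)` and `w₂(·, iκ)` in terms of `‖q₁ - q₂‖_{L¹}`. -/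
theorem w_ik_L1_comparison (c₁ c₂ : ℝ → ℝ) (hm₁ : Measurable c₁) (hm₂ : Measurable c₂)
    (c₀₁ c₀₂ cM₁ cM₂ : ℝ)
    (h1₁ : HypH1c c₁ c₀₁ cM₁) (h1₂ : HypH1c c₂ c₀₂ cM₂)
    (h2₁ : HypH2 c₁) (h2₂ : HypH2 c₂)
    (U₁ U₂ : ℝ → ℝ → ℝ)
    (hU₁ : ∀ κ : ℝ, 0 < κ → IsJostPlusR c₁ κ (U₁ κ))
    (hU₂ : ∀ κ : ℝ, 0 < κ → IsJostPlusR c₂ κ (U₂ κ)) :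
    ∀ κ : ℝ, 0 ≤ κ →
      (∫ x : ℝ, |wIK U₁ κ x - wIK U₂ κ x|) ≤
        (1 / (2 / (2 + cM₁ ^ 2 * gamma0 c₁) + 2 / (2 + cM₂ ^ 2 * gamma0 c₂))) *
          ∫ x : ℝ, |qfun c₁ x - qfun c₂ x| := by

  intro κ hκ0
  obtain ⟨hc₀₁, hcM₁, hae₁⟩ := h1₁
  obtain ⟨hc₀₂, hcM₂, hae₂⟩ := h1₂
  obtain ⟨hγ₁nn, hγ₁ae⟩ := WIKAux.gamma0_facts c₁ hc₀₁ hae₁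
  obtain ⟨hγ₂nn, hγ₂ae⟩ := WIKAux.gamma0_facts c₂ hc₀₂ hae₂
  set γ₁ := gamma0 c₁ with hγ₁def
  set γ₂ := gamma0 c₂ with hγ₂def
  set β₀₁ : ℝ := 2 / (2 + cM₁ ^ 2 * γ₁) with hβ₀₁def
  set β₀₂ : ℝ := 2 / (2 + cM₂ ^ 2 * γ₂) with hβ₀₂def
  have hden₁ : 0 < 2 + cM₁ ^ 2 * γ₁ := by nlinarith [sq_nonneg cM₁]
  have hden₂ : 0 < 2 + cM₂ ^ 2 * γ₂ := by nlinarith [sq_nonneg cM₂]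
  have hβ₀₁pos : 0 < β₀₁ := by rw [hβ₀₁def]; positivity
  have hβ₀₂pos : 0 < β₀₂ := by rw [hβ₀₂def]; positivity
  have hβ₀₁le : β₀₁ ≤ 1 := by
    rw [hβ₀₁def, div_le_one hden₁]
    nlinarith [sq_nonneg cM₁]
  have hβ₀₂le : β₀₂ ≤ 1 := by
    rw [hβ₀₂def, div_le_one hden₂]
    nlinarith [sq_nonneg cM₂]
  have hρnn : 0 ≤ ∫ x : ℝ, |qfun c₁ x - qfun c₂ x| :=
    integral_nonneg fun x => abs_nonneg _
  rcases eq_or_lt_of_le hκ0 with hκz | hκpos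
  · -- κ = 0
    have hz : ∀ x : ℝ, |wIK U₁ κ x - wIK U₂ κ x| = 0 := by
      intro x
      rw [wIK, wIK, if_pos hκz.symm, if_pos hκz.symm]
      simp
    rw [show (fun x : ℝ => |wIK U₁ κ x - wIK U₂ κ x|) = fun _ => (0:ℝ) from funext hz]
    rw [integral_zero]
    have hαpos : 0 < β₀₁ + β₀₂ := add_pos hβ₀₁pos hβ₀₂pos
    exact mul_nonneg (le_of_lt (div_pos one_pos hαpos)) hρnn
  · -- κ > 0
    obtain ⟨⟨hC1u, hequ⟩, hlimu⟩ := hU₁ κ hκpos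
    obtain ⟨⟨hC1v, heqv⟩, hlimv⟩ := hU₂ κ hκpos
    have hq : Integrable (fun x => qfun c₁ x - qfun c₂ x) :=
      (WIKAux.q_integrable c₁ hm₁ hc₀₁ hae₁ h2₁).sub
        (WIKAux.q_integrable c₂ hm₂ hc₀₂ hae₂ h2₂)
    have hβsq₁ : ∀ᵐ x : ℝ, β₀₁ ^ 2 ≤ 1 / (c₁ x) ^ 2 := by
      filter_upwards [hae₁, hγ₁ae] with x hx hqx
      have hcx : 0 < c₁ x := lt_trans hc₀₁ hx.1
      have h1 : 1 / cM₁ ^ 2 ≤ 1 / (c₁ x) ^ 2 :=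
        one_div_le_one_div_of_le (by positivity) (by nlinarith [hx.2])
      have h2 : 1 - γ₁ ≤ 1 / (c₁ x) ^ 2 := by
        have := (abs_le.mp hqx).2
        rw [qfun] at this
        linarith
      calc β₀₁ ^ 2 ≤ max (1 / cM₁ ^ 2) (1 - γ₁) :=
            WIKAux.key_ineq (by positivity) hγ₁nn
        _ ≤ 1 / (c₁ x) ^ 2 := max_le h1 h2
    have hβsq₂ : ∀ᵐ x : ℝ, β₀₂ ^ 2 ≤ 1 / (c₂ x) ^ 2 := by
      filter_upwards [hae₂, hγ₂ae] with x hx hqx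
      have hcx : 0 < c₂ x := lt_trans hc₀₂ hx.1
      have h1 : 1 / cM₂ ^ 2 ≤ 1 / (c₂ x) ^ 2 :=
        one_div_le_one_div_of_le (by positivity) (by nlinarith [hx.2])
      have h2 : 1 - γ₂ ≤ 1 / (c₂ x) ^ 2 := by
        have := (abs_le.mp hqx).2
        rw [qfun] at this
        linarith
      calc β₀₂ ^ 2 ≤ max (1 / cM₂ ^ 2) (1 - γ₂) :=
            WIKAux.key_ineq (by positivity) hγ₂nn
        _ ≤ 1 / (c₂ x) ^ 2 := max_le h1 h2
    have hwiK : (fun x : ℝ => |wIK U₁ κ x - wIK U₂ κ x|)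
        = fun x => |(-(deriv (U₁ κ) x)) / (κ * U₁ κ x)
            - (-(deriv (U₂ κ) x)) / (κ * U₂ κ x)| := by
      funext x
      rw [wIK, wIK, if_neg hκpos.ne', if_neg hκpos.ne']
    have hstep : ∀ s : ℝ, 0 < s → s < 1 →
        (∫ x : ℝ, |wIK U₁ κ x - wIK U₂ κ x|)
          ≤ (1 / (s * β₀₁ + s * β₀₂)) * ∫ x : ℝ, |qfun c₁ x - qfun c₂ x| := by
      intro s hs0 hs1
      have hss : s ^ 2 ≤ 1 := by nlinarith
      have hb₁ : s * β₀₁ < 1 := by nlinarith [mul_le_mul_of_nonneg_left hβ₀₁le hs0.le]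
      have hb₂ : s * β₀₂ < 1 := by nlinarith [mul_le_mul_of_nonneg_left hβ₀₂le hs0.le]
      have ha₁ : ∀ᵐ x : ℝ, (s * β₀₁) ^ 2 ≤ 1 / (c₁ x) ^ 2 := by
        filter_upwards [hβsq₁] with x hx
        have e1 : (s * β₀₁) ^ 2 = s ^ 2 * β₀₁ ^ 2 := by ring
        have e2 : s ^ 2 * β₀₁ ^ 2 ≤ 1 * β₀₁ ^ 2 :=
          mul_le_mul_of_nonneg_right hss (sq_nonneg _)
        rw [e1]
        rw [one_mul] at e2
        exact le_trans e2 hx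
      have ha₂ : ∀ᵐ x : ℝ, (s * β₀₂) ^ 2 ≤ 1 / (c₂ x) ^ 2 := by
        filter_upwards [hβsq₂] with x hx
        have e1 : (s * β₀₂) ^ 2 = s ^ 2 * β₀₂ ^ 2 := by ring
        have e2 : s ^ 2 * β₀₂ ^ 2 ≤ 1 * β₀₂ ^ 2 :=
          mul_le_mul_of_nonneg_right hss (sq_nonneg _)
        rw [e1]
        rw [one_mul] at e2
        exact le_trans e2 hx
      have h := WIKAux.main_est c₁ c₂ hm₁ hm₂ hc₀₁ hc₀₂ hae₁ hae₂ hq hκpos (U₁ κ) (U₂ κ)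
        hC1u hequ hlimu hC1v heqv hlimv (mul_pos hs0 hβ₀₁pos) hb₁ ha₁
        (mul_pos hs0 hβ₀₂pos) hb₂ ha₂
      rw [hwiK]
      exact h
    -- pass to the limit s → 1⁻
    have hcont : Tendsto (fun s : ℝ => (1 / (s * β₀₁ + s * β₀₂))
        * ∫ x : ℝ, |qfun c₁ x - qfun c₂ x|) (𝓝[<] (1:ℝ))
        (𝓝 ((1 / (β₀₁ + β₀₂)) * ∫ x : ℝ, |qfun c₁ x - qfun c₂ x|)) := by
      have hc2 : ContinuousAt (fun s : ℝ => (1 / (s * β₀₁ + s * β₀₂))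
          * ∫ x : ℝ, |qfun c₁ x - qfun c₂ x|) 1 := by
        refine ContinuousAt.mul ?_ continuousAt_const
        refine ContinuousAt.div continuousAt_const (by fun_prop) ?_
        simp only [one_mul]
        exact (add_pos hβ₀₁pos hβ₀₂pos).ne'
      have := hc2.tendsto.mono_left (nhdsWithin_le_nhds (s := Set.Iio (1:ℝ)))
      simpa using this
    refine ge_of_tendsto hcont ?_
    filter_upwards [Ioo_mem_nhdsLT_of_mem
      (Set.mem_Ioc.mpr ⟨(by norm_num : (0:ℝ) < 1), le_rfl⟩)] with s hs
    exact hstep s hs.1 hs.2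
end
end
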